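/- arXiv:2512.20826 — 7 statements merged into one kernel-verified Lean document; each statement's English description precedes it below -/
import Mathlib

section
/- Let F be a real vector space, let λ₁,…,λ_m be linear functionals on F with observation map Λ(f) = (λ₁(f),…,λ_m(f)), and let K ⊆ F be a convex set containing 0. Let I be a nonempty index set and let γ_i (i ∈ I) be linear functionals on F such that γ(f) := sup_{i∈I} γ_i(f) is finite for every f ∈ F. Assume the intrinsic lower bound e_♭ := sup{ (γ(f′) − γ(f″))/2 : f′, f″ ∈ K, Λ(f′) = Λ(f″) } is finite. Then there exist real coefficients c₀^{(i)} and vectors c^{(i)} ∈ ℝ^m (i ∈ I) such that the sup-affine functional δ : ℝ^m → ℝ defined by δ(y) = sup_{i∈I} ( c₀^{(i)} + Σ_{k=1}^m c_k^{(i)} y_k ) satisfies |γ(f) − δ(Λ(f))| ≤ e_♭ for all f ∈ K; in particular δ is an optimal estimation functional, i.e. sup_{f∈K} |γ(f) − δ(Λ(f))| ≤ sup_{f∈K} |γ(f) − δ′(Λ(f))| for every map δ′ : ℝ^m → ℝ. -/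
open Set

theorem sumlem_thm4 {m : ℕ} (ℓ : (Fin m → ℝ) →ₗ[ℝ] ℝ) (y : Fin m → ℝ) :
    ∑ k, ℓ (Pi.single k 1) * y k = ℓ y := by
  have hy : ∀ k : Fin m, Pi.single k (y k) = y k • (Pi.single k 1 : Fin m → ℝ) := by
    intro k; ext j; by_cases h : j = k <;> simp [Pi.single_apply, h]
  conv_rhs => rw [← Finset.univ_sum_single y]
  rw [map_sum]
  refine Finset.sum_congr rfl fun k _ => ?_
  rw [hy k, map_smul, smul_eq_mul]; ring

theorem aux_ell_thm4 {F : Type*} [AddCommGroup F] [Module ℝ F] {m : ℕ}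
    (Λ : F →ₗ[ℝ] (Fin m → ℝ)) (K : Set F) (hK : Convex ℝ K) (h0K : (0:F) ∈ K)
    (g0 : F →ₗ[ℝ] ℝ) (γ : F → ℝ)
    (hge : ∀ f, g0 f ≤ γ f)
    (hconv : ∀ a b : ℝ, 0 ≤ a → 0 ≤ b → a + b = 1 →
      ∀ f g : F, γ (a • f + b • g) ≤ a * γ f + b * γ g)
    (e : ℝ)
    (key : ∀ f' ∈ K, ∀ f'' ∈ K, Λ f' = Λ f'' → γ f' - γ f'' ≤ 2*e) :
    ∃ ℓ : (Fin m → ℝ) →ₗ[ℝ] ℝ,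
      ∀ f' ∈ K, ∀ f'' ∈ K, ℓ (Λ f'' - Λ f') ≤ γ f'' - g0 f' + 2*e := by
  classical
  -- mixing helper
  have hmixmem : ∀ (t s : ℝ), 0 < t → 0 < s → ∀ f₁ ∈ K, ∀ g₁ ∈ K,
      (t/(t+s)) • f₁ + (s/(t+s)) • g₁ ∈ K := by
    intro t s ht hs f₁ hf₁ g₁ hg₁
    have hT : 0 < t + s := by linarith
    exact hK hf₁ hg₁ (div_nonneg ht.le hT.le) (div_nonneg hs.le hT.le)
      (by field_simp)
  have hmixΛ : ∀ (t s : ℝ), 0 < t → 0 < s → ∀ f₁ f₂ g₁ g₂ : F,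
      (t+s) • (Λ ((t/(t+s)) • f₂ + (s/(t+s)) • g₂) - Λ ((t/(t+s)) • f₁ + (s/(t+s)) • g₁))
        = t • (Λ f₂ - Λ f₁) + s • (Λ g₂ - Λ g₁) := by
    intro t s ht hs f₁ f₂ g₁ g₂
    have hT : t + s ≠ 0 := by positivity
    have h1 : (t+s) * (t/(t+s)) = t := by field_simp
    have h2 : (t+s) * (s/(t+s)) = s := by field_simp
    simp only [map_add, map_smul, smul_sub, smul_add, smul_smul, h1, h2]
    abel
  have hmixcost : ∀ (t s : ℝ), 0 < t → 0 < s → ∀ f₁ f₂ g₁ g₂ : F,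
      (t+s) * (γ ((t/(t+s)) • f₂ + (s/(t+s)) • g₂)
          - g0 ((t/(t+s)) • f₁ + (s/(t+s)) • g₁) + 2*e)
        ≤ t * (γ f₂ - g0 f₁ + 2*e) + s * (γ g₂ - g0 g₁ + 2*e) := by
    intro t s ht hs f₁ f₂ g₁ g₂
    have hT : 0 < t + s := by linarith
    have h1 : (t+s) * (t/(t+s)) = t := by field_simp
    have h2 : (t+s) * (s/(t+s)) = s := by field_simp
    have hγ2 : γ ((t/(t+s)) • f₂ + (s/(t+s)) • g₂)
        ≤ (t/(t+s)) * γ f₂ + (s/(t+s)) * γ g₂ :=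
      hconv _ _ (div_nonneg ht.le hT.le) (div_nonneg hs.le hT.le) (by field_simp) _ _
    have hg1 : g0 ((t/(t+s)) • f₁ + (s/(t+s)) • g₁)
        = (t/(t+s)) * g0 f₁ + (s/(t+s)) * g0 g₁ := by
      simp [map_add, map_smul]
    rw [hg1]
    have h3 : (t+s) * (t/(t+s) * γ f₂ + s/(t+s) * γ g₂) = t * γ f₂ + s * γ g₂ := by
      field_simp
    have h4 : (t+s) * (t/(t+s) * g0 f₁ + s/(t+s) * g0 g₁) = t * g0 f₁ + s * g0 g₁ := by
      field_simp
    have h5 := mul_le_mul_of_nonneg_left hγ2 hT.le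
    nlinarith [h5, h3, h4]
  -- the cone/span
  set D : Set (Fin m → ℝ) := {y | ∃ f' ∈ K, ∃ f'' ∈ K, y = Λ f'' - Λ f'} with hD
  set V : Submodule ℝ (Fin m → ℝ) := Submodule.span ℝ D with hV
  have conerep : ∀ v ∈ V, ∃ t : ℝ, 0 < t ∧ ∃ f' ∈ K, ∃ f'' ∈ K,
      v = t • (Λ f'' - Λ f') := by
    intro v hv
    induction hv using Submodule.span_induction with
    | mem x hx =>
      obtain ⟨f', hf', f'', hf'', rfl⟩ := hx
      exact ⟨1, one_pos, f', hf', f'', hf'', (one_smul _ _).symm⟩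
    | zero =>
      exact ⟨1, one_pos, 0, h0K, 0, h0K, by simp⟩
    | add x y hx hy ihx ihy =>
      obtain ⟨t, ht, f', hf', f'', hf'', rfl⟩ := ihx
      obtain ⟨s, hs, g', hg', g'', hg'', rfl⟩ := ihy
      refine ⟨t + s, by linarith, _, hmixmem t s ht hs f' hf' g' hg',
        _, hmixmem t s ht hs f'' hf'' g'' hg'', ?_⟩
      rw [hmixΛ t s ht hs f' f'' g' g'']
    | smul a x hx ihx =>
      obtain ⟨t, ht, f', hf', f'', hf'', rfl⟩ := ihx
      rcases lt_trichotomy a 0 with hneg | hzero | hpos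
      · refine ⟨(-a) * t, by nlinarith, f'', hf'', f', hf', ?_⟩
        rw [smul_smul]
        module
      · subst hzero
        exact ⟨1, one_pos, 0, h0K, 0, h0K, by simp⟩
      · exact ⟨a * t, by nlinarith, f', hf', f'', hf'', by rw [smul_smul]⟩
  -- projection
  obtain ⟨W, hW⟩ := Submodule.exists_isCompl V
  set π : (Fin m → ℝ) →ₗ[ℝ] (Fin m → ℝ) :=
    V.subtype.comp (Submodule.projectionOnto V W hW) with hπ
  have hπV : ∀ v, π v ∈ V := fun v => (Submodule.projectionOnto V W hW v).2
  have hπid : ∀ v ∈ V, π v = v := by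
    intro v hv
    have := Submodule.linearProjOfIsCompl_apply_left hW ⟨v, hv⟩
    simp only [hπ, LinearMap.comp_apply, Submodule.subtype_apply]
    rw [this]
  have hDV : ∀ f' ∈ K, ∀ f'' ∈ K, (Λ f'' - Λ f') ∈ V := by
    intro f' hf' f'' hf''
    exact Submodule.subset_span ⟨f', hf', f'', hf'', rfl⟩
  -- the sublinear functional
  set S : (Fin m → ℝ) → Set ℝ := fun v =>
    {r | ∃ t, 0 < t ∧ ∃ f' ∈ K, ∃ f'' ∈ K,
      π v = t • (Λ f'' - Λ f') ∧ r = t * (γ f'' - g0 f' + 2*e)} with hS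
  have hne : ∀ v, (S v).Nonempty := by
    intro v
    obtain ⟨t, ht, f', hf', f'', hf'', hrep⟩ := conerep (π v) (hπV v)
    exact ⟨t * (γ f'' - g0 f' + 2*e), t, ht, f', hf', f'', hf'', hrep, rfl⟩
  -- lower bound
  have hbdd : ∀ v, BddBelow (S v) := by
    intro v
    have hneg : -(π v) ∈ V := neg_mem (hπV v)
    obtain ⟨s, hs, g', hg', g'', hg'', hgrep⟩ := conerep (-(π v)) hneg
    refine ⟨-(s * (γ g'' - g0 g' + 2*e)), ?_⟩
    rintro r ⟨t, ht, f', hf', f'', hf'', hrep, rfl⟩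
    -- combine: t•(Λf''-Λf') + s•(Λg''-Λg') = 0
    have hzero : t • (Λ f'' - Λ f') + s • (Λ g'' - Λ g') = 0 := by
      rw [← hrep, ← hgrep]; abel
    set w₁ := (t/(t+s)) • f'' + (s/(t+s)) • g'' with hw₁
    set w₂ := (t/(t+s)) • f' + (s/(t+s)) • g' with hw₂
    have hw₁K : w₁ ∈ K := hmixmem t s ht hs f'' hf'' g'' hg''
    have hw₂K : w₂ ∈ K := hmixmem t s ht hs f' hf' g' hg'
    have hT : (0:ℝ) < t + s := by linarith
    have heq : Λ w₂ = Λ w₁ := by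
      have h := hmixΛ t s ht hs f' f'' g' g''
      rw [hzero] at h
      have h0 : Λ w₁ - Λ w₂ = 0 := by
        apply smul_right_injective (Fin m → ℝ) (ne_of_gt hT)
        show (t+s) • (Λ w₁ - Λ w₂) = (t+s) • (0 : Fin m → ℝ)
        rw [smul_zero]; exact h
      exact (sub_eq_zero.mp h0).symm
    have hkey := key w₂ hw₂K w₁ hw₁K heq
    -- γ w₁ ≥ γ w₂ - 2e ≥ g0 w₂ - 2e
    have hγw₁ : γ w₁ ≤ (t/(t+s)) * γ f'' + (s/(t+s)) * γ g'' :=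
      hconv _ _ (div_nonneg ht.le hT.le) (div_nonneg hs.le hT.le) (by field_simp) _ _
    have hg0w₂ : g0 w₂ = (t/(t+s)) * g0 f' + (s/(t+s)) * g0 g' := by
      simp [hw₂, map_add, map_smul]
    have hgw : g0 w₂ ≤ γ w₂ := hge w₂
    -- chain
    have h3 : (t+s) * (t/(t+s) * γ f'' + s/(t+s) * γ g'') = t * γ f'' + s * γ g'' := by
      field_simp
    have h4 : (t+s) * (t/(t+s) * g0 f' + s/(t+s) * g0 g') = t * g0 f' + s * g0 g' := by
      field_simp
    have hA : (t+s) * γ w₁ ≤ t * γ f'' + s * γ g'' := by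
      rw [← h3]; exact mul_le_mul_of_nonneg_left hγw₁ hT.le
    have hB : (t+s) * g0 w₂ = t * g0 f' + s * g0 g' := by rw [hg0w₂, h4]
    have h5 : (t+s) * γ w₂ - (t+s) * γ w₁ ≤ 2*e*(t+s) := by nlinarith [hkey]
    have h6 : (t+s) * g0 w₂ ≤ (t+s) * γ w₂ := mul_le_mul_of_nonneg_left hgw hT.le
    nlinarith [hA, hB, h5, h6]
  set N : (Fin m → ℝ) → ℝ := fun v => sInf (S v) with hN
  have hmemle : ∀ v, ∀ r ∈ S v, N v ≤ r := fun v r hr => csInf_le (hbdd v) hr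
  have hNmem : ∀ f' ∈ K, ∀ f'' ∈ K, N (Λ f'' - Λ f') ≤ γ f'' - g0 f' + 2*e := by
    intro f' hf' f'' hf''
    have : γ f'' - g0 f' + 2*e = 1 * (γ f'' - g0 f' + 2*e) := by ring
    rw [this]
    exact hmemle _ _ ⟨1, one_pos, f', hf', f'', hf'',
      by rw [hπid _ (hDV f' hf' f'' hf''), one_smul], rfl⟩
  -- N is sublinear
  have N_hom_le : ∀ c : ℝ, 0 < c → ∀ v, N (c • v) ≤ c * N v := by
    intro c hc v
    have hS' : ∀ r ∈ S v, N (c • v) ≤ c * r := by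
      rintro r ⟨t, ht, f', hf', f'', hf'', hrep, rfl⟩
      have : c * (t * (γ f'' - g0 f' + 2*e)) = (c*t) * (γ f'' - g0 f' + 2*e) := by ring
      rw [this]
      refine hmemle _ _ ⟨c*t, by positivity, f', hf', f'', hf'', ?_, rfl⟩
      rw [map_smul, hrep, smul_smul]
    -- then N (c•v) / c ≤ N v
    have : N (c • v) / c ≤ N v := by
      apply le_csInf (hne v)
      intro r hr
      rw [div_le_iff₀ hc]
      calc N (c • v) ≤ c * r := hS' r hr
        _ = r * c := by ring
    calc N (c • v) = (N (c • v) / c) * c := by field_simp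
      _ ≤ N v * c := by apply mul_le_mul_of_nonneg_right this hc.le
      _ = c * N v := by ring
  have N_hom : ∀ c : ℝ, 0 < c → ∀ v, N (c • v) = c * N v := by
    intro c hc v
    refine le_antisymm (N_hom_le c hc v) ?_
    have := N_hom_le c⁻¹ (by positivity) (c • v)
    rw [inv_smul_smul₀ (ne_of_gt hc)] at this
    calc c * N v ≤ c * (c⁻¹ * N (c • v)) := by
          apply mul_le_mul_of_nonneg_left this hc.le
      _ = N (c • v) := by field_simp
  have N_add : ∀ v w, N (v + w) ≤ N v + N w := by
    intro v w
    have hS' : ∀ r₁ ∈ S v, ∀ r₂ ∈ S w, N (v + w) ≤ r₁ + r₂ := by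
      rintro r₁ ⟨t, ht, f', hf', f'', hf'', hrep, rfl⟩
        r₂ ⟨s, hs, g', hg', g'', hg'', hgrep, rfl⟩
      refine le_trans (hmemle _ ((t+s) * (γ ((t/(t+s)) • f'' + (s/(t+s)) • g'')
        - g0 ((t/(t+s)) • f' + (s/(t+s)) • g') + 2*e)) ⟨t+s, by linarith,
        _, hmixmem t s ht hs f' hf' g' hg', _, hmixmem t s ht hs f'' hf'' g'' hg'',
        ?_, rfl⟩) (hmixcost t s ht hs f' f'' g' g'')
      rw [map_add, hrep, hgrep, hmixΛ t s ht hs f' f'' g' g'']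
    have h1 : ∀ r₁ ∈ S v, N (v + w) - r₁ ≤ N w := by
      intro r₁ hr₁
      apply le_csInf (hne w)
      intro r₂ hr₂
      linarith [hS' r₁ hr₁ r₂ hr₂]
    have h2 : N (v + w) - N w ≤ N v := by
      apply le_csInf (hne v)
      intro r₁ hr₁
      linarith [h1 r₁ hr₁]
    linarith
  -- N 0 ≥ 0
  have hN0 : 0 ≤ N 0 := by
    apply le_csInf (hne 0)
    rintro r ⟨t, ht, f', hf', f'', hf'', hrep, rfl⟩
    rw [map_zero] at hrep
    have h0 : Λ f'' - Λ f' = 0 := by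
      apply smul_right_injective (Fin m → ℝ) (ne_of_gt ht)
      show t • (Λ f'' - Λ f') = t • (0 : Fin m → ℝ)
      rw [smul_zero]; exact hrep.symm
    have heq : Λ f' = Λ f'' := (sub_eq_zero.mp h0).symm
    have := key f' hf' f'' hf'' heq
    have := hge f'
    nlinarith
  -- Hahn-Banach
  obtain ⟨g, hg0', hgle⟩ := exists_extension_of_le_sublinear
    ⟨(⊥ : Submodule ℝ (Fin m → ℝ)), 0⟩ N N_hom N_add
    (by rintro ⟨x, hx⟩
        simp only [Submodule.mem_bot] at hx
        subst hx
        simpa using hN0)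
  refine ⟨g, fun f' hf' f'' hf'' => ?_⟩
  exact le_trans (hgle _) (hNmem f' hf' f'' hf'')


/-- **Optimal estimation of a sup-linear functional (Theorem 4/Thm4Max).**
If `K` is convex containing `0`, the `γ i` are linear functionals whose pointwise
supremum `γ` is finite everywhere, and the intrinsic lower bound `eflat` is finite,
then there is a sup-affine functional `δ` of the observations whose worst-case error
over `K` is at most `eflat`; in particular `δ` is an optimal estimation functional. -/
theorem stmt_0 {F : Type*} [AddCommGroup F] [Module ℝ F] {m : ℕ}
    (lam : Fin m → F →ₗ[ℝ] ℝ)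
    (K : Set F) (hK : Convex ℝ K) (h0K : (0 : F) ∈ K)
    {I : Type*} [Nonempty I] (γi : I → F →ₗ[ℝ] ℝ)
    (γ : F → ℝ) (hγ : ∀ f, IsLUB (Set.range fun i => γi i f) (γ f))
    (eflat : ℝ)
    (heflat : IsLUB {x : ℝ | ∃ f' ∈ K, ∃ f'' ∈ K,
        (∀ k, lam k f' = lam k f'') ∧ x = (γ f' - γ f'') / 2} eflat) :
    ∃ (c0 : I → ℝ) (c : I → Fin m → ℝ) (δ : (Fin m → ℝ) → ℝ),
      (∀ y : Fin m → ℝ,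
          BddAbove (Set.range fun i => c0 i + ∑ k, c i k * y k) →
          IsLUB (Set.range fun i => c0 i + ∑ k, c i k * y k) (δ y)) ∧
      (∀ f ∈ K, BddAbove (Set.range fun i => c0 i + ∑ k, c i k * lam k f)) ∧
      (∀ f ∈ K, |γ f - δ (fun k => lam k f)| ≤ eflat) ∧
      (∀ δ' : (Fin m → ℝ) → ℝ,
        (⨆ f ∈ K, ENNReal.ofReal |γ f - δ (fun k => lam k f)|) ≤
          ⨆ f ∈ K, ENNReal.ofReal |γ f - δ' (fun k => lam k f)|) := by
  classical
  set Λ : F →ₗ[ℝ] (Fin m → ℝ) := LinearMap.pi lam with hΛdef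
  have hΛ : ∀ f : F, Λ f = fun k => lam k f := fun f => rfl
  have hge : ∀ (i : I) (f : F), γi i f ≤ γ f := fun i f => (hγ f).1 ⟨i, rfl⟩
  have hγ0 : γ 0 = 0 := by
    have hub : γ 0 ≤ 0 := (hγ 0).2 (by rintro x ⟨i, rfl⟩; simp)
    have hlb : (0:ℝ) ≤ γ 0 := by
      obtain ⟨i⟩ := ‹Nonempty I›
      have := hge i 0
      simpa using this
    linarith
  have hconv : ∀ a b : ℝ, 0 ≤ a → 0 ≤ b → a + b = 1 →
      ∀ f g : F, γ (a • f + b • g) ≤ a * γ f + b * γ g := by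
    intro a b ha hb _ f g
    apply (hγ _).2
    rintro x ⟨i, rfl⟩
    simp only [map_add, map_smul, smul_eq_mul]
    have h1 := mul_le_mul_of_nonneg_left (hge i f) ha
    have h2 := mul_le_mul_of_nonneg_left (hge i g) hb
    linarith
  have key : ∀ f' ∈ K, ∀ f'' ∈ K, Λ f' = Λ f'' → γ f' - γ f'' ≤ 2*eflat := by
    intro f' hf' f'' hf'' h
    have hx : (γ f' - γ f'')/2 ∈ {x : ℝ | ∃ f' ∈ K, ∃ f'' ∈ K,
        (∀ k, lam k f' = lam k f'') ∧ x = (γ f' - γ f'') / 2} :=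
      ⟨f', hf', f'', hf'', fun k => congrFun h k, rfl⟩
    have := heflat.1 hx
    linarith
  have he0 : (0:ℝ) ≤ eflat := heflat.1 ⟨0, h0K, 0, h0K, fun _ => rfl, by ring⟩
  have hell : ∀ i : I, ∃ ℓ : (Fin m → ℝ) →ₗ[ℝ] ℝ,
      ∀ f' ∈ K, ∀ f'' ∈ K, ℓ (Λ f'' - Λ f') ≤ γ f'' - γi i f' + 2*eflat :=
    fun i => aux_ell_thm4 Λ K hK h0K (γi i) γ (hge i) hconv eflat key
  choose ℓ hℓ using hell
  have hbddA : ∀ i : I, BddAbove {r | ∃ f ∈ K, r = γi i f - ℓ i (Λ f)} := by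
    intro i
    refine ⟨2*eflat, ?_⟩
    rintro r ⟨f, hf, rfl⟩
    have h := hℓ i f hf 0 h0K
    rw [map_zero, zero_sub, map_neg, hγ0] at h
    linarith
  have hneA : ∀ i : I, ({r | ∃ f ∈ K, r = γi i f - ℓ i (Λ f)}).Nonempty :=
    fun i => ⟨γi i 0 - ℓ i (Λ 0), 0, h0K, rfl⟩
  set c0 : I → ℝ := fun i => sSup {r | ∃ f ∈ K, r = γi i f - ℓ i (Λ f)} - eflat with hc0
  have hc0ub : ∀ i, ∀ f ∈ K, γi i f - ℓ i (Λ f) ≤ c0 i + eflat := by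
    intro i f hf
    have := le_csSup (hbddA i) (show γi i f - ℓ i (Λ f) ∈ _ from ⟨f, hf, rfl⟩)
    simp only [hc0]; linarith
  have hc0le : ∀ i, ∀ f ∈ K, c0 i + eflat ≤ γ f - ℓ i (Λ f) + 2*eflat := by
    intro i f hf
    have h : sSup {r | ∃ f' ∈ K, r = γi i f' - ℓ i (Λ f')}
        ≤ γ f - ℓ i (Λ f) + 2*eflat := by
      apply csSup_le (hneA i)
      rintro r ⟨f', hf', rfl⟩
      have h := hℓ i f' hf' f hf
      rw [map_sub] at h
      linarith
    simp only [hc0]; linarith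
  set c : I → Fin m → ℝ := fun i k => ℓ i (Pi.single k 1) with hc
  have hsum : ∀ (i : I) (y : Fin m → ℝ), (∑ k, c i k * y k) = ℓ i y :=
    fun i y => sumlem_thm4 (ℓ i) y
  have hlow : ∀ i, ∀ f ∈ K, γi i f - eflat ≤ c0 i + ℓ i (Λ f) := by
    intro i f hf; have := hc0ub i f hf; linarith
  have hhigh : ∀ i, ∀ f ∈ K, c0 i + ℓ i (Λ f) ≤ γ f + eflat := by
    intro i f hf; have := hc0le i f hf; linarith
  set δ : (Fin m → ℝ) → ℝ :=
    fun y => sSup (Set.range fun i => c0 i + ∑ k, c i k * y k) with hδ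
  have hbdd2 : ∀ f ∈ K, BddAbove (Set.range fun i => c0 i + ∑ k, c i k * lam k f) := by
    intro f hf
    refine ⟨γ f + eflat, ?_⟩
    rintro x ⟨i, rfl⟩
    show c0 i + ∑ k, c i k * lam k f ≤ γ f + eflat
    have hs : (∑ k, c i k * lam k f) = ℓ i (Λ f) := hsum i (Λ f)
    rw [hs]
    exact hhigh i f hf
  have hcon3 : ∀ f ∈ K, |γ f - δ (fun k => lam k f)| ≤ eflat := by
    intro f hf
    have hyv : (fun k => lam k f) = Λ f := rfl
    have hδle : δ (fun k => lam k f) ≤ γ f + eflat := by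
      apply csSup_le (Set.range_nonempty _)
      rintro x ⟨i, rfl⟩
      show c0 i + ∑ k, c i k * lam k f ≤ γ f + eflat
      have hs : (∑ k, c i k * lam k f) = ℓ i (Λ f) := hsum i (Λ f)
      rw [hs]
      exact hhigh i f hf
    have hδge : γ f - eflat ≤ δ (fun k => lam k f) := by
      have hγle : γ f ≤ δ (fun k => lam k f) + eflat := by
        apply (hγ f).2
        rintro x ⟨i, rfl⟩
        have hmem : c0 i + ∑ k, c i k * lam k f ≤ δ (fun k => lam k f) :=
          le_csSup (hbdd2 f hf) ⟨i, rfl⟩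
        have hs : (∑ k, c i k * lam k f) = ℓ i (Λ f) := hsum i (Λ f)
        rw [hs] at hmem
        have := hlow i f hf
        linarith
      linarith
    rw [abs_le]
    constructor <;> linarith
  refine ⟨c0, c, δ, ?_, hbdd2, hcon3, ?_⟩
  · intro y h
    exact isLUB_csSup (Set.range_nonempty _) h
  · intro δ'
    set B := ⨆ f ∈ K, ENNReal.ofReal |γ f - δ' (fun k => lam k f)| with hB
    have hLHS : (⨆ f ∈ K, ENNReal.ofReal |γ f - δ (fun k => lam k f)|)
        ≤ ENNReal.ofReal eflat :=
      iSup₂_le fun f hf => ENNReal.ofReal_le_ofReal (hcon3 f hf)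
    refine le_trans hLHS ?_
    have hub : ∀ x ∈ {x : ℝ | ∃ f' ∈ K, ∃ f'' ∈ K,
        (∀ k, lam k f' = lam k f'') ∧ x = (γ f' - γ f'') / 2}, ENNReal.ofReal x ≤ B := by
      rintro x ⟨f', hf', f'', hf'', hlam, rfl⟩
      set v := δ' (fun k => lam k f') with hv
      have heqv : δ' (fun k => lam k f'') = v := by
        rw [hv, show (fun k => lam k f'') = fun k => lam k f' from
          funext fun k => (hlam k).symm]
      have h1 : ENNReal.ofReal |γ f' - v| ≤ B := le_iSup₂_of_le f' hf' le_rfl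
      have h2 : ENNReal.ofReal |γ f'' - v| ≤ B := by
        rw [← heqv]; exact le_iSup₂_of_le f'' hf'' le_rfl
      have ha1 : γ f' - v ≤ |γ f' - v| := le_abs_self _
      have ha2 : v - γ f'' ≤ |γ f'' - v| := by rw [abs_sub_comm]; exact le_abs_self _
      rcases le_total |γ f' - v| |γ f'' - v| with h | h
      · refine le_trans (ENNReal.ofReal_le_ofReal ?_) h2
        linarith
      · refine le_trans (ENNReal.ofReal_le_ofReal ?_) h1
        linarith
    by_cases hBtop : B = ⊤
    · rw [hBtop]; exact le_top
    · have hubr : B.toReal ∈ upperBounds {x : ℝ | ∃ f' ∈ K, ∃ f'' ∈ K,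
          (∀ k, lam k f' = lam k f'') ∧ x = (γ f' - γ f'') / 2} := by
        intro x hx
        have hox := hub x hx
        by_cases hx0 : x ≤ 0
        · exact hx0.trans ENNReal.toReal_nonneg
        · exact (ENNReal.ofReal_le_iff_le_toReal hBtop).mp hox
      have hle := heflat.2 hubr
      calc ENNReal.ofReal eflat ≤ ENNReal.ofReal B.toReal :=
            ENNReal.ofReal_le_ofReal hle
        _ = B := ENNReal.ofReal_toReal hBtop
end

section
/- Let F be a real vector space, let λ₁,…,λ_m be linear functionals on F with observation map Λ(f) = (λ₁(f),…,λ_m(f)), and let K ⊆ F be a convex set containing 0. Let γ_i (i in some index set) be linear functionals on F, and suppose the functional γ : F → ℝ admits the two representations γ(f) = sup_{a∈A} inf_{i∈I_a} γ_i(f) = inf_{b∈B} sup_{j∈J_b} γ_j(f) for all f ∈ F, where A, B are nonempty index sets and each I_a, J_b is a nonempty set of indices, all suprema and infima being finite. Assume e_♭ := sup{ (γ(f′) − γ(f″))/2 : f′, f″ ∈ K, Λ(f′) = Λ(f″) } is finite. Then there exist real coefficients c₀^{(a,b)} and vectors c^{(a,b)} ∈ ℝ^m (a ∈ A, b ∈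 B) such that the functional δ : ℝ^m → ℝ defined by δ(y) = sup_{a∈A} inf_{b∈B} ( c₀^{(a,b)} + Σ_{k=1}^m c_k^{(a,b)} y_k ) satisfies |γ(f) − δ(Λ(f))| ≤ e_♭ for all f ∈ K; in particular δ is an optimal estimation functional, i.e. sup_{f∈K} |γ(f) − δ(Λ(f))| ≤ sup_{f∈K} |γ(f) − δ′(Λ(f))| for every map δ′ : ℝ^m → ℝ. -/
open Set Pointwise

lemma thmext_sep_euclid {n : ℕ} (C : Set (EuclideanSpace ℝ (Fin n))) (hC : Convex ℝ C)
    (hne : C.Nonempty) (h0 : (0 : EuclideanSpace ℝ (Fin n)) ∉ C) :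
    ∃ φ : EuclideanSpace ℝ (Fin n) →L[ℝ] ℝ, φ ≠ 0 ∧ ∀ x ∈ C, 0 ≤ φ x := by
  rcases Nat.eq_zero_or_pos n with hn | hn
  · subst hn
    obtain ⟨x, hx⟩ := hne
    exact absurd (Subsingleton.elim x 0 ▸ hx) h0
  have hv : (EuclideanSpace.single (⟨0, hn⟩ : Fin n) (1:ℝ)) ≠ 0 := by
    intro h
    have := congrArg (fun v : EuclideanSpace ℝ (Fin n) => v ⟨0, hn⟩) h
    simp [EuclideanSpace.single_apply] at this
  have hD : Nontrivial (EuclideanSpace ℝ (Fin n) →L[ℝ] ℝ) := by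
    refine ⟨innerSL ℝ (EuclideanSpace.single (⟨0, hn⟩ : Fin n) (1:ℝ)), 0, fun h => hv ?_⟩
    have h2 := congrFun (congrArg DFunLike.coe h) (EuclideanSpace.single (⟨0, hn⟩ : Fin n) (1:ℝ))
    simp only [innerSL_apply_apply, ContinuousLinearMap.zero_apply] at h2
    exact inner_self_eq_zero.1 h2
  have hsphere : (Metric.sphere (0 : EuclideanSpace ℝ (Fin n) →L[ℝ] ℝ) 1).Nonempty := by
    rw [NormedSpace.sphere_nonempty]
    norm_num
  have hcomp : IsCompact (Metric.sphere (0 : EuclideanSpace ℝ (Fin n) →L[ℝ] ℝ) 1) := isCompact_sphere 0 1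
  set Z : C → Set (EuclideanSpace ℝ (Fin n) →L[ℝ] ℝ) := fun c => {φ | 0 ≤ φ c} with hZ
  have hZclosed : ∀ c : C, IsClosed (Z c) := by
    intro c
    have : Continuous fun φ : EuclideanSpace ℝ (Fin n) →L[ℝ] ℝ => φ (c : EuclideanSpace ℝ (Fin n)) := by
      exact (ContinuousLinearMap.apply ℝ ℝ (c : EuclideanSpace ℝ (Fin n))).continuous
    exact isClosed_le continuous_const this
  by_cases hint : (Metric.sphere (0 : EuclideanSpace ℝ (Fin n) →L[ℝ] ℝ) 1 ∩ ⋂ c : C, Z c).Nonempty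
  · obtain ⟨φ, hφs, hφZ⟩ := hint
    refine ⟨φ, ?_, ?_⟩
    · intro h
      rw [h] at hφs
      simp at hφs
    · intro x hx
      have := mem_iInter.1 hφZ ⟨x, hx⟩
      exact this
  · exfalso
    rw [Set.not_nonempty_iff_eq_empty] at hint
    obtain ⟨t, ht⟩ := hcomp.elim_finite_subfamily_closed Z hZclosed hint
    rcases t.eq_empty_or_nonempty with rfl | ⟨c0, hc0⟩
    · simp at ht
      obtain ⟨φ, hφ⟩ := hsphere
      exact (Set.eq_empty_iff_forall_notMem.1 ht φ) hφ
    · set s0 : Set (EuclideanSpace ℝ (Fin n)) := (fun c : C => (c : EuclideanSpace ℝ (Fin n))) '' ↑t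
      have hs0fin : s0.Finite := (t.finite_toSet).image _
      have hs0sub : s0 ⊆ C := by rintro x ⟨c, _, rfl⟩; exact c.2
      have hXsub : convexHull ℝ s0 ⊆ C := convexHull_min hs0sub hC
      have hXcl : IsClosed (convexHull ℝ s0) := (hs0fin.isCompact_convexHull ℝ).isClosed
      have h0X : (0 : EuclideanSpace ℝ (Fin n)) ∉ convexHull ℝ s0 := fun h => h0 (hXsub h)
      obtain ⟨f, u, hfu, hfb⟩ :=
        geometric_hahn_banach_point_closed (convex_convexHull ℝ s0) hXcl h0X
      rw [map_zero] at hfu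
      have hfne : f ≠ 0 := by
        intro h
        have hc0X : (c0 : EuclideanSpace ℝ (Fin n)) ∈ convexHull ℝ s0 :=
          subset_convexHull ℝ s0 ⟨c0, hc0, rfl⟩
        have := hfb _ hc0X
        rw [h] at this
        simp at this
        linarith
      have hnf : ‖f‖ ≠ 0 := by simpa using hfne
      refine (Set.eq_empty_iff_forall_notMem.1 ht (‖f‖⁻¹ • f)) ⟨?_, ?_⟩
      · rw [mem_sphere_zero_iff_norm]
        exact norm_smul_inv_norm hfne
      · rw [Set.mem_iInter₂]
        intro c hc
        have hcX : (c : EuclideanSpace ℝ (Fin n)) ∈ convexHull ℝ s0 :=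
          subset_convexHull ℝ s0 ⟨c, hc, rfl⟩
        have hfc := hfb _ hcX
        have h0c : (0:ℝ) ≤ f c := le_of_lt (lt_trans hfu hfc)
        simp only [hZ, ContinuousLinearMap.smul_apply, Set.mem_setOf_eq, smul_eq_mul]
        exact mul_nonneg (inv_nonneg.2 (norm_nonneg _)) h0c

lemma thmext_sep_pi {n : ℕ} (C : Set (Fin n → ℝ)) (hC : Convex ℝ C)
    (hne : C.Nonempty) (h0 : (0 : Fin n → ℝ) ∉ C) :
    ∃ v : Fin n → ℝ, v ≠ 0 ∧ ∀ x ∈ C, 0 ≤ ∑ i, v i * x i := by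
  have sep_euclid := fun C' hC' hne' h0' => thmext_sep_euclid (n := n) C' hC' hne' h0'
  set e := EuclideanSpace.equiv (Fin n) ℝ
  set C' : Set (EuclideanSpace ℝ (Fin n)) := e.symm '' C with hC'
  have hC'c : Convex ℝ C' := hC.linear_image (e.symm : (Fin n → ℝ) ≃L[ℝ] _).toLinearEquiv.toLinearMap
  have hC'ne : C'.Nonempty := hne.image _
  have h0' : (0 : EuclideanSpace ℝ (Fin n)) ∉ C' := by
    rintro ⟨z, hz, hz0⟩
    have : z = 0 := by
      have := congrArg e hz0
      simpa using this
    exact h0 (this ▸ hz)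
  obtain ⟨φ, hφ0, hφ⟩ := sep_euclid C' hC'c hC'ne h0'
  refine ⟨fun i => φ (e.symm ((Pi.single i (1:ℝ) : Fin n → ℝ))), ?_, ?_⟩
  · intro hv
    apply hφ0
    ext x
    have hx : (x : EuclideanSpace ℝ (Fin n)) = e.symm (e x) := (e.symm_apply_apply x).symm
    have hdecomp : (e x : Fin n → ℝ) = ∑ i, (e x i) • (Pi.single i (1:ℝ) : Fin n → ℝ) := by
      rw [pi_eq_sum_univ (e x : Fin n → ℝ)]
      congr 1
      ext i j
      simp [Pi.single_apply, eq_comm]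
    rw [hx, hdecomp]
    rw [map_sum, map_sum]
    simp only [map_smul, ContinuousLinearMap.zero_apply]
    have hvi : ∀ i, φ (e.symm ((Pi.single i (1:ℝ) : Fin n → ℝ))) = 0 := by
      intro i
      have := congrFun hv i
      simpa using this
    exact Finset.sum_eq_zero fun i _ => by rw [smul_eq_mul, hvi i, mul_zero]
  · intro x hx
    have hmem : e.symm x ∈ C' := ⟨x, hx, rfl⟩
    have := hφ _ hmem
    have hdecomp : (x : Fin n → ℝ) = ∑ i, (x i) • (Pi.single i (1:ℝ) : Fin n → ℝ) := by
      rw [pi_eq_sum_univ x]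
      congr 1
      ext i j
      simp [Pi.single_apply, eq_comm]
    calc (0:ℝ) ≤ φ (e.symm x) := this
    _ = ∑ i, x i * φ (e.symm ((Pi.single i (1:ℝ) : Fin n → ℝ))) := by
        conv_lhs => rw [hdecomp]
        rw [map_sum, map_sum]
        simp [smul_eq_mul]
    _ = ∑ i, (fun i => φ (e.symm ((Pi.single i (1:ℝ) : Fin n → ℝ)))) i * x i := by
        apply Finset.sum_congr rfl
        intro i _
        ring

lemma thmext_snoc_comb {n : ℕ} (a b : ℝ) (y1 y2 : Fin n → ℝ) (t1 t2 : ℝ) :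
    a • (Fin.snoc y1 t1 : Fin (n+1) → ℝ) + b • (Fin.snoc y2 t2 : Fin (n+1) → ℝ)
      = Fin.snoc (a • y1 + b • y2) (a * t1 + b * t2) := by
  funext i
  refine Fin.lastCases ?_ ?_ i
  · simp [Fin.snoc_last]
  · intro k
    simp [Fin.snoc_castSucc]

lemma thmext_sandwich {F : Type*} [AddCommGroup F] [Module ℝ F]
    (K : Set F) (hK : Convex ℝ K) (h0K : (0 : F) ∈ K)
    (g h : F → ℝ) (e : ℝ)
    (hg : ∀ f1 ∈ K, ∀ f2 ∈ K, ∀ θ : ℝ, 0 ≤ θ → θ ≤ 1 →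
      θ * g f1 + (1-θ) * g f2 ≤ g (θ • f1 + (1-θ) • f2))
    (hh : ∀ f1 ∈ K, ∀ f2 ∈ K, ∀ θ : ℝ, 0 ≤ θ → θ ≤ 1 →
      h (θ • f1 + (1-θ) • f2) ≤ θ * h f1 + (1-θ) * h f2) :
    ∀ (m : ℕ) (lam : Fin m → F →ₗ[ℝ] ℝ),
    (∀ f' ∈ K, ∀ f'' ∈ K, (∀ k, lam k f' = lam k f'') → g f' - h f'' ≤ 2 * e) →
    ∃ (c0 : ℝ) (μ : Fin m → ℝ), ∀ f ∈ K,
      g f - e ≤ c0 + ∑ k, μ k * lam k f ∧ c0 + ∑ k, μ k * lam k f ≤ h f + e := by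
  intro m
  induction m with
  | zero =>
    intro lam hyp
    set S : Set ℝ := {x | ∃ f ∈ K, x = g f - e} with hS
    have hSne : S.Nonempty := ⟨g 0 - e, 0, h0K, rfl⟩
    have hSbdd : BddAbove S := by
      refine ⟨h 0 + e, ?_⟩
      rintro x ⟨f, hf, rfl⟩
      have := hyp f hf 0 h0K (fun k => k.elim0)
      linarith
    refine ⟨sSup S, fun _ => 0, fun f hf => ?_⟩
    rw [Finset.univ_eq_empty, Finset.sum_empty]
    constructor
    · have : g f - e ∈ S := ⟨f, hf, rfl⟩
      have := le_csSup hSbdd this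
      linarith
    · have : sSup S ≤ h f + e := by
        apply csSup_le hSne
        rintro x ⟨f', hf', rfl⟩
        have := hyp f' hf' f hf (fun k => k.elim0)
        linarith
      linarith
  | succ m IH =>
    intro lam hyp
    -- the convex sets in ℝ^{m+2}
    set A : Set (Fin (m+2) → ℝ) :=
      {z | ∃ f ∈ K, ∃ t : ℝ, h f + e ≤ t ∧ z = Fin.snoc (fun k => lam k f) t} with hA
    set B : Set (Fin (m+2) → ℝ) :=
      {z | ∃ f ∈ K, ∃ s : ℝ, s < g f - e ∧ z = Fin.snoc (fun k => lam k f) s} with hB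
    have lamcomb : ∀ (a b : ℝ) (f1 f2 : F),
        (fun k => lam k (a • f1 + b • f2)) = a • (fun k => lam k f1) + b • (fun k => lam k f2) := by
      intro a b f1 f2
      funext k
      simp [map_add, map_smul]
    have hAconv : Convex ℝ A := by
      rintro z1 ⟨f1, hf1, t1, ht1, rfl⟩ z2 ⟨f2, hf2, t2, ht2, rfl⟩ a b ha hb hab
      refine ⟨a • f1 + b • f2, hK hf1 hf2 ha hb hab, a * t1 + b * t2, ?_, ?_⟩
      · have := hh f1 hf1 f2 hf2 a ha (by linarith)
        have hb' : 1 - a = b := by linarith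
        rw [hb'] at this
        have he : a*e + b*e = e := by rw [← add_mul, hab, one_mul]
        linarith [mul_le_mul_of_nonneg_left ht1 ha, mul_le_mul_of_nonneg_left ht2 hb]
      · rw [thmext_snoc_comb, lamcomb]
    have hBconv : Convex ℝ B := by
      rintro z1 ⟨f1, hf1, t1, ht1, rfl⟩ z2 ⟨f2, hf2, t2, ht2, rfl⟩ a b ha hb hab
      rcases eq_or_lt_of_le ha with haz | ha'
      · have hb1 : b = 1 := by linarith
        have haz' : a = 0 := haz.symm
        subst hb1; subst haz'
        have hz : (0:ℝ) • (Fin.snoc (fun k => lam k f1) t1 : Fin (m+2) → ℝ)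
            + (1:ℝ) • (Fin.snoc (fun k => lam k f2) t2 : Fin (m+2) → ℝ)
            = Fin.snoc (fun k => lam k f2) t2 := by
          rw [zero_smul, one_smul, zero_add]
        rw [hz]
        exact ⟨f2, hf2, t2, ht2, rfl⟩
      rcases eq_or_lt_of_le hb with hbz | hb'
      · have ha1 : a = 1 := by linarith
        have hbz' : b = 0 := hbz.symm
        subst ha1; subst hbz'
        have hz : (1:ℝ) • (Fin.snoc (fun k => lam k f1) t1 : Fin (m+2) → ℝ)
            + (0:ℝ) • (Fin.snoc (fun k => lam k f2) t2 : Fin (m+2) → ℝ)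
            = Fin.snoc (fun k => lam k f1) t1 := by
          rw [zero_smul, one_smul, add_zero]
        rw [hz]
        exact ⟨f1, hf1, t1, ht1, rfl⟩
      refine ⟨a • f1 + b • f2, hK hf1 hf2 ha hb hab, a * t1 + b * t2, ?_, ?_⟩
      · have := hg f1 hf1 f2 hf2 a ha (by linarith)
        have hbe : 1 - a = b := by linarith
        rw [hbe] at this
        have he : a*e + b*e = e := by rw [← add_mul, hab, one_mul]
        linarith [mul_lt_mul_of_pos_left ht1 ha', mul_lt_mul_of_pos_left ht2 hb']
      · rw [thmext_snoc_comb, lamcomb]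
    have hCconv : Convex ℝ (A - B) := hAconv.sub hBconv
    have hCne : (A - B).Nonempty := by
      refine ⟨(Fin.snoc (fun k => lam k 0) (h 0 + e) : Fin (m+2) → ℝ)
        - Fin.snoc (fun k => lam k 0) (g 0 - e - 1), ?_⟩
      exact Set.sub_mem_sub ⟨0, h0K, h 0 + e, le_refl _, rfl⟩ ⟨0, h0K, g 0 - e - 1, by linarith, rfl⟩
    have h0C : (0 : Fin (m+2) → ℝ) ∉ A - B := by
      rintro ⟨p, hp, q, hq, hpq⟩
      obtain ⟨f', hf', t, ht, rfl⟩ := hp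
      obtain ⟨f'', hf'', s, hs, rfl⟩ := hq
      have heq : (Fin.snoc (fun k => lam k f') t : Fin (m+2) → ℝ)
          = Fin.snoc (fun k => lam k f'') s := sub_eq_zero.1 hpq
      have hcoord : ∀ k : Fin (m+1), lam k f' = lam k f'' := by
        intro k
        have := congrFun heq (Fin.castSucc k)
        simpa [Fin.snoc_castSucc] using this
      have hts : t = s := by
        have := congrFun heq (Fin.last (m+1))
        simpa [Fin.snoc_last] using this
      have := hyp f'' hf'' f' hf' (fun k => (hcoord k).symm)
      linarith
    obtain ⟨v, hv0, hv⟩ := thmext_sep_pi (A - B) hCconv hCne h0C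
    set ψ : Fin (m+1) → ℝ := fun k => v (Fin.castSucc k) with hψ
    set σ : ℝ := v (Fin.last (m+1)) with hσdef
    set P : F → ℝ := fun f => ∑ k, ψ k * lam k f with hP
    -- the raw inequality
    have hraw : ∀ f' ∈ K, ∀ f'' ∈ K, ∀ t s : ℝ, h f' + e ≤ t → s < g f'' - e →
        0 ≤ P f' - P f'' + σ * (t - s) := by
      intro f' hf' f'' hf'' t s ht hs
      have hmem : (Fin.snoc (fun k => lam k f') t : Fin (m+2) → ℝ)
          - Fin.snoc (fun k => lam k f'') s ∈ A - B :=
        Set.sub_mem_sub ⟨f', hf', t, ht, rfl⟩ ⟨f'', hf'', s, hs, rfl⟩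
      have := hv _ hmem
      rw [Fin.sum_univ_castSucc] at this
      simp only [Pi.sub_apply, Fin.snoc_castSucc, Fin.snoc_last] at this
      calc (0:ℝ) ≤ ∑ k : Fin (m+1), v (Fin.castSucc k) * (lam k f' - lam k f'')
            + v (Fin.last (m+1)) * (t - s) := this
        _ = P f' - P f'' + σ * (t - s) := by
            rw [hP, hσdef, hψ]
            simp only [mul_sub]
            rw [Finset.sum_sub_distrib]
    have hσ0 : 0 ≤ σ := by
      by_contra hneg
      push_neg at hneg
      set τ : ℝ := |h 0 + 2*e + 1 - g 0| + 1 with hτ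
      have hτ0 : 0 ≤ τ := by positivity
      have h1 : h 0 + e ≤ h 0 + e + τ := by linarith
      have h2 : g 0 - e - 1 < g 0 - e := by linarith
      have hraw0 := hraw 0 h0K 0 h0K (h 0 + e + τ) (g 0 - e - 1) h1 h2
      have hpos : 0 < (h 0 + e + τ) - (g 0 - e - 1) := by
        have h3 := neg_abs_le (h 0 + 2*e + 1 - g 0)
        have hd : (h 0 + e + τ) - (g 0 - e - 1) = (h 0 + 2*e + 1 - g 0) + τ := by ring
        rw [hd, hτ]
        linarith
      nlinarith
    have hkey : ∀ f' ∈ K, ∀ f'' ∈ K, P f'' + σ * (g f'' - e) ≤ P f' + σ * (h f' + e) := by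
      intro f' hf' f'' hf''
      by_contra hcon
      push_neg at hcon
      set δ := (P f'' + σ * (g f'' - e)) - (P f' + σ * (h f' + e)) with hδ
      have hδpos : 0 < δ := by rw [hδ]; linarith
      have hε : 0 < δ / (2*(σ+1)) := by positivity
      have := hraw f' hf' f'' hf'' (h f' + e) (g f'' - e - δ/(2*(σ+1))) (le_refl _) (by linarith)
      have h2' : (0:ℝ) < 2*(σ+1) := by linarith
      have hσε : σ * (δ/(2*(σ+1))) ≤ δ/2 := by
        rw [← sub_nonneg]
        have hid : δ/2 - σ * (δ/(2*(σ+1))) = δ / (2*(σ+1)) := by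
          field_simp
          ring
        rw [hid]
        positivity
      nlinarith
    rcases eq_or_lt_of_le hσ0 with hσz | hσpos
    · -- degenerate case : reduce dimension
      have hPconst : ∀ f ∈ K, P f = 0 := by
        intro f hf
        have h1 := hkey f hf 0 h0K
        have h2 := hkey 0 h0K f hf
        have hP0 : P 0 = 0 := by
          rw [hP]
          simp
        rw [← hσz] at h1 h2
        simp only [zero_mul, add_zero] at h1 h2
        rw [hP0] at h1 h2
        linarith
      have hψne : ∃ k0, ψ k0 ≠ 0 := by
        by_contra hall
        push_neg at hall
        apply hv0
        funext i
        refine Fin.lastCases ?_ ?_ i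
        · exact hσz.symm
        · intro k; exact hall k
      obtain ⟨k0, hk0⟩ := hψne
      set lam' : Fin m → F →ₗ[ℝ] ℝ := fun k => lam (k0.succAbove k) with hlam'
      have hyp' : ∀ f' ∈ K, ∀ f'' ∈ K, (∀ k, lam' k f' = lam' k f'') → g f' - h f'' ≤ 2 * e := by
        intro f' hf' f'' hf'' hkk
        apply hyp f' hf' f'' hf''
        have hPsplit : ∀ f, P f = ψ k0 * lam k0 f + ∑ k : Fin m, ψ (k0.succAbove k) * lam' k f := by
          intro f
          rw [hP]
          exact Fin.sum_univ_succAbove (fun j => ψ j * lam j f) k0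
        have hsum : ∑ k : Fin m, ψ (k0.succAbove k) * lam' k f'
            = ∑ k : Fin m, ψ (k0.succAbove k) * lam' k f'' :=
          Finset.sum_congr rfl (fun k _ => by rw [hkk k])
        have h1 : P f' = 0 := hPconst f' hf'
        have h2 : P f'' = 0 := hPconst f'' hf''
        rw [hPsplit] at h1 h2
        have hk0eq : lam k0 f' = lam k0 f'' := by
          apply mul_left_cancel₀ hk0
          rw [hsum] at h1
          linarith
        intro j
        rcases eq_or_ne j k0 with rfl | hj
        · exact hk0eq
        · obtain ⟨k, hk⟩ := Fin.exists_succAbove_eq hj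
          rw [← hk]
          exact hkk k
      obtain ⟨c0, μ', hμ'⟩ := IH lam' hyp'
      refine ⟨c0, (Fin.insertNth k0 (0:ℝ) μ' : Fin (m+1) → ℝ), ?_⟩
      intro f hf
      have hsum : ∑ j : Fin (m+1), ((Fin.insertNth k0 (0:ℝ) μ' : Fin (m+1) → ℝ)) j * lam j f
          = ∑ k : Fin m, μ' k * lam' k f := by
        rw [Fin.sum_univ_succAbove (fun j => ((Fin.insertNth k0 (0:ℝ) μ' : Fin (m+1) → ℝ)) j * lam j f) k0]
        rw [Fin.insertNth_apply_same, zero_mul, zero_add]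
        apply Finset.sum_congr rfl
        intro k _
        rw [Fin.insertNth_apply_succAbove]
      rw [hsum]
      exact hμ' f hf
    · -- main case : σ > 0
      set S : Set ℝ := {x | ∃ f ∈ K, x = P f + σ * (g f - e)} with hS
      have hSne : S.Nonempty := ⟨P 0 + σ * (g 0 - e), 0, h0K, rfl⟩
      have hSbdd : BddAbove S := by
        refine ⟨P 0 + σ * (h 0 + e), ?_⟩
        rintro x ⟨f, hf, rfl⟩
        exact hkey 0 h0K f hf
      refine ⟨sSup S / σ, fun k => -ψ k / σ, ?_⟩
      intro f hf
      have hμsum : ∑ k : Fin (m+1), (-ψ k / σ) * lam k f = -(P f) / σ := by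
        have hstep : ∀ k : Fin (m+1), (-ψ k / σ) * lam k f = -(ψ k * lam k f) / σ :=
          fun k => by ring
        calc ∑ k : Fin (m+1), (-ψ k / σ) * lam k f
            = ∑ k : Fin (m+1), -(ψ k * lam k f) / σ :=
              Finset.sum_congr rfl fun k _ => hstep k
          _ = (∑ k : Fin (m+1), -(ψ k * lam k f)) / σ := by rw [Finset.sum_div]
          _ = (-(∑ k : Fin (m+1), ψ k * lam k f)) / σ := by rw [Finset.sum_neg_distrib]
          _ = -(P f) / σ := by simp only [hP]
      rw [hμsum]
      have hlow : P f + σ * (g f - e) ≤ sSup S := le_csSup hSbdd ⟨f, hf, rfl⟩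
      have hup : sSup S ≤ P f + σ * (h f + e) := by
        apply csSup_le hSne
        rintro x ⟨f'', hf'', rfl⟩
        exact hkey f hf f'' hf''
      constructor
      · rw [← add_div, le_div_iff₀ hσpos]
        linarith
      · rw [← add_div, div_le_iff₀ hσpos]
        linarith


/-- **Optimal estimation of a mixed sup-inf of linear functionals (Theorem ThmExt).**
If `γ` admits both a sup-inf and an inf-sup representation by linear functionals
(all inner suprema/infima being finite, as encoded by `ginf`, `gsup`), `K` is convex
containing `0`, and the intrinsic lower bound `eflat` is finite, then there exist
coefficients such that the sup-inf-affine functional `δ` of the observations has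
worst-case error at most `eflat` over `K`; in particular `δ` is optimal. -/
theorem stmt_3 {F : Type*} [AddCommGroup F] [Module ℝ F] {m : ℕ}
    (lam : Fin m → F →ₗ[ℝ] ℝ)
    (K : Set F) (hK : Convex ℝ K) (h0K : (0 : F) ∈ K)
    {ι A B : Type*} [Nonempty A] [Nonempty B]
    (γi : ι → F →ₗ[ℝ] ℝ)
    (Ia : A → Set ι) (hIa : ∀ a, (Ia a).Nonempty)
    (Jb : B → Set ι) (hJb : ∀ b, (Jb b).Nonempty)
    (ginf : A → F → ℝ) (hginf : ∀ a f, IsGLB ((fun i => γi i f) '' Ia a) (ginf a f))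
    (gsup : B → F → ℝ) (hgsup : ∀ b f, IsLUB ((fun j => γi j f) '' Jb b) (gsup b f))
    (γ : F → ℝ)
    (hγ1 : ∀ f, IsLUB (Set.range fun a => ginf a f) (γ f))
    (hγ2 : ∀ f, IsGLB (Set.range fun b => gsup b f) (γ f))
    (eflat : ℝ)
    (heflat : IsLUB {x : ℝ | ∃ f' ∈ K, ∃ f'' ∈ K,
        (∀ k, lam k f' = lam k f'') ∧ x = (γ f' - γ f'') / 2} eflat) :
    ∃ (c0 : A → B → ℝ) (c : A → B → Fin m → ℝ) (δ : (Fin m → ℝ) → ℝ),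
      (∀ f ∈ K,
        (⨆ a, ⨅ b, ((c0 a b + ∑ k, c a b k * lam k f : ℝ) : EReal)) =
          ((δ (fun k => lam k f) : ℝ) : EReal)) ∧
      (∀ f ∈ K, |γ f - δ (fun k => lam k f)| ≤ eflat) ∧
      (∀ δ' : (Fin m → ℝ) → ℝ,
        (⨆ f ∈ K, ENNReal.ofReal |γ f - δ (fun k => lam k f)|) ≤
          ⨆ f ∈ K, ENNReal.ofReal |γ f - δ' (fun k => lam k f)|) := by
  -- basic facts
  have hle1 : ∀ (a : A) (f : F), ginf a f ≤ γ f := fun a f => (hγ1 f).1 ⟨a, rfl⟩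
  have hle2 : ∀ (b : B) (f : F), γ f ≤ gsup b f := fun b f => (hγ2 f).1 ⟨b, rfl⟩
  have hdiff : ∀ f' ∈ K, ∀ f'' ∈ K, (∀ k, lam k f' = lam k f'') →
      γ f' - γ f'' ≤ 2 * eflat := by
    intro f' hf' f'' hf'' hk
    have : (γ f' - γ f'') / 2 ≤ eflat := heflat.1 ⟨f', hf', f'', hf'', hk, rfl⟩
    linarith
  have hconc : ∀ (a : A), ∀ f1 ∈ K, ∀ f2 ∈ K, ∀ θ : ℝ, 0 ≤ θ → θ ≤ 1 →
      θ * ginf a f1 + (1-θ) * ginf a f2 ≤ ginf a (θ • f1 + (1-θ) • f2) := by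
    intro a f1 _ f2 _ θ hθ0 hθ1
    apply (hginf a (θ • f1 + (1-θ) • f2)).2
    rintro x ⟨i, hi, rfl⟩
    have hx : γi i (θ • f1 + (1-θ) • f2) = θ * γi i f1 + (1-θ) * γi i f2 := by
      simp [map_add, map_smul, smul_eq_mul]
    simp only [] 
    rw [hx]
    have h1 := (hginf a f1).1 ⟨i, hi, rfl⟩
    have h2 := (hginf a f2).1 ⟨i, hi, rfl⟩
    have := mul_le_mul_of_nonneg_left h1 hθ0
    have := mul_le_mul_of_nonneg_left h2 (by linarith : (0:ℝ) ≤ 1 - θ)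
    linarith
  have hconv : ∀ (b : B), ∀ f1 ∈ K, ∀ f2 ∈ K, ∀ θ : ℝ, 0 ≤ θ → θ ≤ 1 →
      gsup b (θ • f1 + (1-θ) • f2) ≤ θ * gsup b f1 + (1-θ) * gsup b f2 := by
    intro b f1 _ f2 _ θ hθ0 hθ1
    apply (hgsup b (θ • f1 + (1-θ) • f2)).2
    rintro x ⟨i, hi, rfl⟩
    have hx : γi i (θ • f1 + (1-θ) • f2) = θ * γi i f1 + (1-θ) * γi i f2 := by
      simp [map_add, map_smul, smul_eq_mul]
    simp only [] 
    rw [hx]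
    have h1 := (hgsup b f1).1 ⟨i, hi, rfl⟩
    have h2 := (hgsup b f2).1 ⟨i, hi, rfl⟩
    have := mul_le_mul_of_nonneg_left h1 hθ0
    have := mul_le_mul_of_nonneg_left h2 (by linarith : (0:ℝ) ≤ 1 - θ)
    linarith
  -- per-pair sandwich
  have hab : ∀ (a : A) (b : B), ∃ (c0 : ℝ) (μ : Fin m → ℝ), ∀ f ∈ K,
      ginf a f - eflat ≤ c0 + ∑ k, μ k * lam k f ∧
      c0 + ∑ k, μ k * lam k f ≤ gsup b f + eflat := by
    intro a b
    apply thmext_sandwich K hK h0K (ginf a) (gsup b) eflat (hconc a) (hconv b) m lam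
    intro f' hf' f'' hf'' hk
    have := hdiff f' hf' f'' hf'' hk
    have := hle1 a f'
    have := hle2 b f''
    linarith
  choose c0 c hc using hab
  set S : (Fin m → ℝ) → EReal :=
    fun y => ⨆ a, ⨅ b, ((c0 a b + ∑ k, c a b k * y k : ℝ) : EReal) with hS
  have key : ∀ f ∈ K,
      (⨆ a, ⨅ b, ((c0 a b + ∑ k, c a b k * lam k f : ℝ) : EReal)) =
        (((S (fun k => lam k f)).toReal : ℝ) : EReal) ∧
      |γ f - (S (fun k => lam k f)).toReal| ≤ eflat := by
    intro f hf
    set y : Fin m → ℝ := fun k => lam k f with hy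
    obtain ⟨a0⟩ := ‹Nonempty A›
    obtain ⟨b0⟩ := ‹Nonempty B›
    have hℓ : ∀ (a : A) (b : B),
        ginf a f - eflat ≤ c0 a b + ∑ k, c a b k * y k ∧
        c0 a b + ∑ k, c a b k * y k ≤ gsup b f + eflat := fun a b => hc a b f hf
    have low : ∀ a : A, (((ginf a f - eflat : ℝ)) : EReal) ≤
        ⨅ b, ((c0 a b + ∑ k, c a b k * y k : ℝ) : EReal) :=
      fun a => le_iInf fun b => EReal.coe_le_coe_iff.2 (hℓ a b).1
    have Slow : (((ginf a0 f - eflat : ℝ)) : EReal) ≤ S y :=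
      (low a0).trans (le_iSup (fun a => ⨅ b, ((c0 a b + ∑ k, c a b k * y k : ℝ) : EReal)) a0)
    have Sup' : ∀ b : B, S y ≤ ((gsup b f + eflat : ℝ) : EReal) := by
      intro b
      refine iSup_le fun a => ?_
      exact (iInf_le _ b).trans (EReal.coe_le_coe_iff.2 (hℓ a b).2)
    have hne_top : S y ≠ ⊤ := ((Sup' b0).trans_lt (EReal.coe_lt_top _)).ne
    have hne_bot : S y ≠ ⊥ := ((EReal.bot_lt_coe _).trans_le Slow).ne'
    have hcoe : (((S y).toReal : ℝ) : EReal) = S y := EReal.coe_toReal hne_top hne_bot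
    refine ⟨hcoe.symm, ?_⟩
    set d := (S y).toReal with hd
    have hbound1 : ∀ a : A, ginf a f - eflat ≤ d := by
      intro a
      have : (((ginf a f - eflat : ℝ)) : EReal) ≤ ((d : ℝ) : EReal) := by
        rw [hcoe]
        exact (low a).trans (le_iSup (fun a => ⨅ b, ((c0 a b + ∑ k, c a b k * y k : ℝ) : EReal)) a)
      exact EReal.coe_le_coe_iff.1 this
    have hbound2 : ∀ b : B, d ≤ gsup b f + eflat := by
      intro b
      have : ((d : ℝ) : EReal) ≤ ((gsup b f + eflat : ℝ) : EReal) := by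
        rw [hcoe]; exact Sup' b
      exact EReal.coe_le_coe_iff.1 this
    have h1 : γ f ≤ d + eflat := by
      apply (hγ1 f).2
      rintro x ⟨a, rfl⟩
      have := hbound1 a
      simp only
      linarith
    have h2 : d - eflat ≤ γ f := by
      apply (hγ2 f).2
      rintro x ⟨b, rfl⟩
      have := hbound2 b
      simp only
      linarith
    rw [abs_le]
    constructor <;> linarith
  refine ⟨c0, c, fun y => (S y).toReal, ?_, ?_, ?_⟩
  · intro f hf
    exact (key f hf).1
  · intro f hf
    exact (key f hf).2
  · intro δ'
    have hLHS : (⨆ f ∈ K, ENNReal.ofReal |γ f - (S (fun k => lam k f)).toReal|) ≤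
        ENNReal.ofReal eflat := by
      refine iSup₂_le fun f hf => ?_
      exact ENNReal.ofReal_le_ofReal (key f hf).2
    refine hLHS.trans ?_
    by_contra hcon
    push_neg at hcon
    set R := ⨆ f ∈ K, ENNReal.ofReal |γ f - δ' (fun k => lam k f)| with hR
    have hRtop : R ≠ ⊤ := hcon.ne_top
    set r := R.toReal with hr
    have hr0 : 0 ≤ r := ENNReal.toReal_nonneg
    have hRr : R = ENNReal.ofReal r := (ENNReal.ofReal_toReal hRtop).symm
    have hrlt : r < eflat := by
      by_contra hge
      push_neg at hge
      exact absurd (ENNReal.ofReal_le_ofReal hge) (by rw [← hRr]; exact not_le.2 hcon)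
    have hnub : ¬ (r ∈ upperBounds {x : ℝ | ∃ f' ∈ K, ∃ f'' ∈ K,
        (∀ k, lam k f' = lam k f'') ∧ x = (γ f' - γ f'') / 2}) := by
      intro hub
      exact absurd (heflat.2 hub) (not_le.2 hrlt)
    rw [mem_upperBounds] at hnub
    push_neg at hnub
    obtain ⟨x, hxmem, hxr⟩ := hnub
    obtain ⟨f', hf', f'', hf'', hk, hxval⟩ := hxmem
    have hsame : (fun k => lam k f') = (fun k => lam k f'') := funext hk
    set d' := δ' (fun k => lam k f') with hd'
    have habs : x ≤ |γ f' - d'| ∨ x ≤ |γ f'' - d'| := by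
      by_contra hboth
      push_neg at hboth
      obtain ⟨hb1, hb2⟩ := hboth
      have e1 : γ f' - d' ≤ |γ f' - d'| := le_abs_self _
      have e2 : d' - γ f'' ≤ |γ f'' - d'| := by
        rw [abs_sub_comm]
        exact le_abs_self _
      rw [hxval] at hb1 hb2
      linarith
    have hterm : ENNReal.ofReal x ≤ R := by
      rcases habs with hcase | hcase
      · calc ENNReal.ofReal x ≤ ENNReal.ofReal |γ f' - d'| := ENNReal.ofReal_le_ofReal hcase
          _ ≤ R := by
            rw [hR]
            exact le_iSup₂_of_le f' hf' (by rw [hd'])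
      · calc ENNReal.ofReal x ≤ ENNReal.ofReal |γ f'' - d'| := ENNReal.ofReal_le_ofReal hcase
          _ ≤ R := by
            rw [hR]
            refine le_iSup₂_of_le f'' hf'' ?_
            rw [hd', hsame]
    rw [hRr] at hterm
    have : x ≤ r := by
      have hx0 : 0 < x := lt_of_le_of_lt hr0 hxr
      exact (ENNReal.ofReal_le_ofReal_iff hr0).1 hterm
    linarith
end

section
/- Let F be a real vector space and K ⊆ F a nonempty convex set. Let I be a finite nonempty index set, let γ_i, ν_i (i ∈ I) be linear functionals on F, let b_i ∈ ℝ (i ∈ I), and set γ(f) := max_{i∈I} γ_i(f) and ν(f) := max_{i∈I} (ν_i(f) + b_i). Then, as values in [0, +∞], sup_{f∈K} |γ(f) − ν(f)| equals the infimum of e ∈ ℝ over all e and all families (σ^{(i⋆)})_{i⋆∈I}, (τ^{(i⋆)})_{i⋆∈I} in the standard simplex S^I subject to the constraints: ⟦γ_{i⋆} − Σ_{i∈I} σ_i^{(i⋆)} ν_i⟧_K ≤ e + Σ_{i∈I} σ_i^{(i⋆)} b_i for all i⋆ ∈ I, and ⟦ν_{i⋆} − Σ_{i∈I} τ_i^{(i⋆)}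 γ_i⟧_K ≤ e − b_{i⋆} for all i⋆ ∈ I. -/
open Finset

private lemma slope_nonpos {a b u : ℝ} (h : ∀ t : ℝ, 0 < t → a * t + b < u) : a ≤ 0 := by
  by_contra hc
  push_neg at hc
  have ht : (0:ℝ) < max 1 ((u - b)/a) := lt_of_lt_of_le one_pos (le_max_left _ _)
  have := h _ ht
  have h2 : a * ((u - b)/a) + b ≤ a * max 1 ((u - b)/a) + b := by
    have := mul_le_mul_of_nonneg_left (le_max_right 1 ((u - b)/a)) hc.le
    linarith
  rw [mul_div_cancel₀ _ (ne_of_gt hc)] at h2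
  linarith

lemma sep_lemma {F : Type*} [AddCommGroup F] [Module ℝ F] {K : Set F}
    (hK : Convex ℝ K) (hKne : K.Nonempty) {I : Type*} [Fintype I] [Nonempty I]
    (g : F →ₗ[ℝ] ℝ) (A : I → F →ₗ[ℝ] ℝ) (c : I → ℝ)
    (h : ∀ f ∈ K, ∃ i, g f ≤ A i f + c i) :
    ∃ σ : I → ℝ, (∀ i, 0 ≤ σ i) ∧ (∑ i, σ i = 1) ∧
      ∀ f ∈ K, g f ≤ ∑ i, σ i * (A i f + c i) := by
  classical
  -- the affine map into ℝ^I
  set Φ : F → (I → ℝ) := fun f i => g f - A i f - c i with hΦ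
  set C : Set (I → ℝ) := Φ '' K with hC
  set P : Set (I → ℝ) := {x | ∀ i, 0 < x i} with hP
  have hPo : IsOpen P := by
    have : P = ⋂ i, (fun x : I → ℝ => x i) ⁻¹' Set.Ioi 0 := by
      ext x; simp [hP]
    rw [this]
    exact isOpen_iInter_of_finite fun i => (continuous_apply i).isOpen_preimage _ isOpen_Ioi
  have hPc : Convex ℝ P := by
    intro x hx y hy a b ha hb hab i
    rcases ha.lt_or_eq with ha' | rfl
    · have : 0 ≤ b * y i := mul_nonneg hb (hy i).le
      have := mul_pos ha' (hx i)
      simpa using add_pos_of_pos_of_nonneg ‹0 < a * x i› ‹0 ≤ b * y i›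
    · simp only [zero_smul, zero_add] at hab ⊢
      simpa [hab] using mul_pos (show (0:ℝ) < b by linarith) (hy i)
  have hCc : Convex ℝ C := by
    rintro _ ⟨f1, hf1, rfl⟩ _ ⟨f2, hf2, rfl⟩ a b ha hb hab
    refine ⟨a • f1 + b • f2, hK hf1 hf2 ha hb hab, ?_⟩
    funext i
    simp only [hΦ, map_add, map_smul, smul_eq_mul, Pi.add_apply, Pi.smul_apply]
    linear_combination (c i) * hab
  have hdisj : Disjoint P C := by
    rw [Set.disjoint_left]
    rintro x hxP ⟨f, hfK, rfl⟩
    obtain ⟨i, hi⟩ := h f hfK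
    have := hxP i
    simp only [hΦ] at this
    linarith
  obtain ⟨φ, u, hφP, hφC⟩ := geometric_hahn_banach_open hPc hPo hCc hdisj
  -- coordinates of φ
  set ψ : I → ℝ := fun i => φ (fun j => if i = j then (1:ℝ) else 0) with hψ
  have hrep : ∀ x : I → ℝ, φ x = ∑ i, x i * ψ i := by
    intro x
    conv_lhs => rw [pi_eq_sum_univ x]
    rw [map_sum]
    exact Finset.sum_congr rfl fun i _ => by rw [map_smul]; simp [smul_eq_mul, hψ]
  -- ψ i ≤ 0
  have hψle : ∀ i, ψ i ≤ 0 := by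
    intro i
    refine slope_nonpos (a := ψ i) (b := ∑ j ∈ univ.erase i, ψ j) (u := u) fun t ht => ?_
    have hx : (fun j => if j = i then t else 1) ∈ P := by
      intro j; by_cases hj : j = i <;> simp [hj, ht]
    have := hφP _ hx
    rw [hrep] at this
    rw [Finset.sum_eq_add_sum_sdiff_singleton_of_mem (Finset.mem_univ i)] at this
    simp only [if_pos rfl] at this
    have hsum : ∑ j ∈ univ \ {i}, (if j = i then t else 1) * ψ j
        = ∑ j ∈ univ.erase i, ψ j := by
      rw [Finset.sdiff_singleton_eq_erase]
      exact Finset.sum_congr rfl fun j hj => by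
        simp [Finset.ne_of_mem_erase hj]
    rw [hsum] at this
    simp only [if_true] at this
    linarith [mul_comm t (ψ i)]
  -- 0 ≤ u
  have hu : 0 ≤ u := by
    by_contra hu
    push_neg at hu
    set S := ∑ i, ψ i with hS
    have hS0 : S ≤ 0 := Finset.sum_nonpos fun i _ => hψle i
    rcases hS0.lt_or_eq with hS' | hS'
    · have hx : (fun _ : I => u / S) ∈ P := by
        intro j; exact div_pos_of_neg_of_neg hu hS'
      have h3 := hφP _ hx
      rw [hrep, ← Finset.mul_sum, ← hS] at h3
      rw [div_mul_cancel₀ _ (ne_of_lt hS')] at h3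
      exact lt_irrefl _ h3
    · have hx : (fun _ : I => (1:ℝ)) ∈ P := fun j => one_pos
      have := hφP _ hx
      rw [hrep] at this
      simp only [one_mul] at this
      rw [← hS] at this
      linarith [hS']
  -- total mass
  set T := ∑ i, (-ψ i) with hT
  have hT0 : 0 ≤ T := Finset.sum_nonneg fun i _ => by linarith [hψle i]
  have hTpos : 0 < T := by
    rcases hT0.lt_or_eq with h' | h'
    · exact h'
    · exfalso
      have hz : ∀ i, ψ i = 0 := by
        intro i
        have := Finset.sum_eq_zero_iff_of_nonneg (fun j _ => by linarith [hψle j] : ∀ j ∈ univ, 0 ≤ -ψ j) |>.mp h'.symm i (Finset.mem_univ i)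
        linarith
      obtain ⟨f0, hf0⟩ := id hKne
      have h1 := hφC _ ⟨f0, hf0, rfl⟩
      rw [hrep] at h1
      simp only [hz, mul_zero, Finset.sum_const_zero] at h1
      have hx : (fun _ : I => (1:ℝ)) ∈ P := fun j => one_pos
      have h2 := hφP _ hx
      rw [hrep] at h2
      simp only [hz, mul_zero, Finset.sum_const_zero] at h2
      linarith
  refine ⟨fun i => (-ψ i) / T, fun i => div_nonneg (by linarith [hψle i]) hT0, ?_, ?_⟩
  · rw [← Finset.sum_div, ← hT, div_self (ne_of_gt hTpos)]
  · intro f hf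
    show g f ≤ ∑ i, -ψ i / T * (A i f + c i)
    have h1 := hφC _ ⟨f, hf, rfl⟩
    rw [hrep] at h1
    simp only [hΦ] at h1
    have key : 0 ≤ ∑ i, (-ψ i) * (A i f + c i - g f) := by
      have heq : ∑ i, (g f - A i f - c i) * ψ i = ∑ i, (-ψ i) * (A i f + c i - g f) := by
        exact Finset.sum_congr rfl fun i _ => by ring
      rw [heq] at h1
      linarith
    have expand : 0 ≤ ∑ i, (-ψ i / T) * (A i f + c i) - (∑ i, -ψ i / T) * g f := by
      have heq2 : ∑ i, (-ψ i / T) * (A i f + c i) - (∑ i, -ψ i / T) * g f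
          = (1/T) * ∑ i, (-ψ i) * (A i f + c i - g f) := by
        rw [Finset.mul_sum, Finset.sum_mul, ← Finset.sum_sub_distrib]
        refine Finset.sum_congr rfl fun i _ => ?_
        field_simp
        ring
      rw [heq2]
      exact mul_nonneg (by positivity) key
    have hsum1 : (∑ i, -ψ i / T) = 1 := by
      rw [← Finset.sum_div, ← hT, div_self (ne_of_gt hTpos)]
    rw [hsum1, one_mul] at expand
    linarith

lemma csup_eq {I : Type*} [Finite I] [Nonempty I] (h : I → ℝ) :
    ∃ i0, (⨆ i, h i) = h i0 ∧ ∀ j, h j ≤ h i0 := by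
  obtain ⟨i0, hi0⟩ := Finite.exists_max h
  exact ⟨i0, le_antisymm (ciSup_le hi0)
    (le_ciSup (Set.Finite.bddAbove (Set.finite_range h)) i0), hi0⟩

/-- **Computation of the worst-case error of a fixed sup-affine functional
(Proposition PropGWCEFixed).** For a convex nonempty `K`, the supremum over `K` of
`|γ(f) − ν(f)|` (as a value in the extended reals), where `γ = max_i γi i` and
`ν = max_i (νi i + b i)`, equals the optimal value of the displayed convex program with
simplex variables `σ, τ` and support-function constraints (infeasible value `⊤`). -/
theorem stmt_4 {F : Type*} [AddCommGroup F] [Module ℝ F]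
    (K : Set F) (hK : Convex ℝ K) (hKne : K.Nonempty)
    {I : Type*} [Fintype I] [Nonempty I]
    (γi νi : I → F →ₗ[ℝ] ℝ) (b : I → ℝ) :
    (⨆ f ∈ K, ((|(⨆ i, γi i f) - ⨆ i, (νi i f + b i)| : ℝ) : EReal)) =
      sInf {x : EReal | ∃ e : ℝ, x = ((e : ℝ) : EReal) ∧
        ∃ σ τ : I → I → ℝ,
          (∀ istar, (∀ i, 0 ≤ σ istar i) ∧ ∑ i, σ istar i = 1) ∧
          (∀ istar, (∀ i, 0 ≤ τ istar i) ∧ ∑ i, τ istar i = 1) ∧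
          (∀ istar, (⨆ f ∈ K, ((γi istar f - ∑ i, σ istar i * νi i f : ℝ) : EReal)) ≤
            ((e + ∑ i, σ istar i * b i : ℝ) : EReal)) ∧
          (∀ istar, (⨆ f ∈ K, ((νi istar f - ∑ i, τ istar i * γi i f : ℝ) : EReal)) ≤
            ((e - b istar : ℝ) : EReal))} := by
  classical
  apply le_antisymm
  · -- weak duality
    refine le_sInf fun x hx => ?_
    obtain ⟨e, rfl, σ, τ, hσ, hτ, hc1, hc2⟩ := hx
    refine iSup₂_le fun f hf => ?_
    rw [EReal.coe_le_coe_iff, abs_le]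
    obtain ⟨i1, hγeq, hγmax⟩ := csup_eq (fun i => γi i f)
    obtain ⟨i2, hνeq, hνmax⟩ := csup_eq (fun i => νi i f + b i)
    have hA : γi i1 f - ∑ i, σ i1 i * νi i f ≤ e + ∑ i, σ i1 i * b i := by
      have h1 := le_trans
        (le_iSup₂ (f := fun f (_ : f ∈ K) =>
          ((γi i1 f - ∑ i, σ i1 i * νi i f : ℝ) : EReal)) f hf) (hc1 i1)
      exact EReal.coe_le_coe_iff.mp h1
    have hB : νi i2 f - ∑ i, τ i2 i * γi i f ≤ e - b i2 := by
      have h1 := le_trans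
        (le_iSup₂ (f := fun f (_ : f ∈ K) =>
          ((νi i2 f - ∑ i, τ i2 i * γi i f : ℝ) : EReal)) f hf) (hc2 i2)
      exact EReal.coe_le_coe_iff.mp h1
    have hνlb : ∑ i, σ i1 i * νi i f + ∑ i, σ i1 i * b i ≤ ⨆ i, (νi i f + b i) := by
      rw [hνeq]
      have : ∑ i, σ i1 i * (νi i f + b i) ≤ ∑ i, σ i1 i * (νi i2 f + b i2) :=
        Finset.sum_le_sum fun i _ =>
          mul_le_mul_of_nonneg_left (hνmax i) ((hσ i1).1 i)
      rw [← Finset.sum_mul, (hσ i1).2, one_mul] at this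
      have hsplit : ∑ i, σ i1 i * (νi i f + b i)
          = ∑ i, σ i1 i * νi i f + ∑ i, σ i1 i * b i := by
        rw [← Finset.sum_add_distrib]
        exact Finset.sum_congr rfl fun i _ => by ring
      linarith
    have hγlb : ∑ i, τ i2 i * γi i f ≤ ⨆ i, γi i f := by
      rw [hγeq]
      have : ∑ i, τ i2 i * γi i f ≤ ∑ i, τ i2 i * γi i1 f :=
        Finset.sum_le_sum fun i _ =>
          mul_le_mul_of_nonneg_left (hγmax i) ((hτ i2).1 i)
      rw [← Finset.sum_mul, (hτ i2).2, one_mul] at this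
      linarith
    constructor
    · -- -e ≤ γ - ν, i.e. ν - γ ≤ e
      rw [hνeq]
      linarith
    · rw [hγeq]
      linarith
  · -- strong duality
    by_cases hStop : (⨆ f ∈ K, ((|(⨆ i, γi i f) - ⨆ i, (νi i f + b i)| : ℝ) : EReal)) = ⊤
    · rw [hStop]; exact le_top
    obtain ⟨f0, hf0⟩ := id hKne
    have hSbot : (⨆ f ∈ K, ((|(⨆ i, γi i f) - ⨆ i, (νi i f + b i)| : ℝ) : EReal)) ≠ ⊥ := by
      intro hc
      have := le_iSup₂ (f := fun f (_ : f ∈ K) =>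
        ((|(⨆ i, γi i f) - ⨆ i, (νi i f + b i)| : ℝ) : EReal)) f0 hf0
      rw [hc] at this
      exact absurd (le_antisymm this bot_le) (EReal.coe_ne_bot _)
    set c : ℝ := (⨆ f ∈ K, ((|(⨆ i, γi i f) - ⨆ i, (νi i f + b i)| : ℝ) : EReal)).toReal
      with hcdef
    have hc : (c : EReal) = ⨆ f ∈ K, ((|(⨆ i, γi i f) - ⨆ i, (νi i f + b i)| : ℝ) : EReal) :=
      EReal.coe_toReal hStop hSbot
    have hbd : ∀ f ∈ K, |(⨆ i, γi i f) - ⨆ i, (νi i f + b i)| ≤ c := by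
      intro f hf
      have := le_iSup₂ (f := fun f (_ : f ∈ K) =>
        ((|(⨆ i, γi i f) - ⨆ i, (νi i f + b i)| : ℝ) : EReal)) f hf
      rw [← hc] at this
      exact EReal.coe_le_coe_iff.mp this
    have hexσ : ∀ istar, ∃ σ : I → ℝ, (∀ i, 0 ≤ σ i) ∧ (∑ i, σ i = 1) ∧
        ∀ f ∈ K, γi istar f ≤ ∑ i, σ i * (νi i f + (b i + c)) := by
      intro istar
      refine sep_lemma hK hKne (γi istar) νi (fun i => b i + c) fun f hf => ?_
      obtain ⟨i2, hνeq, _⟩ := csup_eq (fun i => νi i f + b i)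
      obtain ⟨i1, hγeq, hγmax⟩ := csup_eq (fun i => γi i f)
      have := hbd f hf
      rw [abs_le] at this
      refine ⟨i2, ?_⟩
      show γi istar f ≤ νi i2 f + (b i2 + c)
      have h1 : γi istar f ≤ γi i1 f := hγmax istar
      rw [hγeq, hνeq] at this
      linarith [this.2]
    have hexτ : ∀ istar, ∃ τ : I → ℝ, (∀ i, 0 ≤ τ i) ∧ (∑ i, τ i = 1) ∧
        ∀ f ∈ K, νi istar f ≤ ∑ i, τ i * (γi i f + (c - b istar)) := by
      intro istar
      refine sep_lemma hK hKne (νi istar) γi (fun i => c - b istar) fun f hf => ?_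
      obtain ⟨i2, hνeq, hνmax⟩ := csup_eq (fun i => νi i f + b i)
      obtain ⟨i1, hγeq, _⟩ := csup_eq (fun i => γi i f)
      have := hbd f hf
      rw [abs_le] at this
      refine ⟨i1, ?_⟩
      show νi istar f ≤ γi i1 f + (c - b istar)
      have h1 : νi istar f + b istar ≤ νi i2 f + b i2 := hνmax istar
      rw [hγeq, hνeq] at this
      linarith [this.1]
    choose σ hσ0 hσ1 hσ2 using hexσ
    choose τ hτ0 hτ1 hτ2 using hexτ
    rw [← hc]
    refine sInf_le ⟨c, rfl, σ, τ, fun istar => ⟨hσ0 istar, hσ1 istar⟩,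
      fun istar => ⟨hτ0 istar, hτ1 istar⟩, ?_, ?_⟩
    · intro istar
      refine iSup₂_le fun f hf => ?_
      rw [EReal.coe_le_coe_iff]
      have h1 := hσ2 istar f hf
      have hsplit : ∑ i, σ istar i * (νi i f + (b i + c))
          = ∑ i, σ istar i * νi i f + ∑ i, σ istar i * b i + (∑ i, σ istar i) * c := by
        rw [Finset.sum_mul, ← Finset.sum_add_distrib, ← Finset.sum_add_distrib]
        exact Finset.sum_congr rfl fun i _ => by ring
      rw [hsplit, hσ1 istar, one_mul] at h1
      linarith
    · intro istar
      refine iSup₂_le fun f hf => ?_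
      rw [EReal.coe_le_coe_iff]
      have h1 := hτ2 istar f hf
      have hsplit : ∑ i, τ istar i * (γi i f + (c - b istar))
          = ∑ i, τ istar i * γi i f + (∑ i, τ istar i) * (c - b istar) := by
        rw [Finset.sum_mul, ← Finset.sum_add_distrib]
        exact Finset.sum_congr rfl fun i _ => by ring
      rw [hsplit, hτ1 istar, one_mul] at h1
      linarith
end

section
/- Let F be a real vector space, let λ₁,…,λ_m be linear functionals on F with observation map Λ(f) = (λ₁(f),…,λ_m(f)), and let K ⊆ F be a convex set containing 0. Let I be a finite nonempty index set, γ_i (i ∈ I) linear functionals on F, γ(f) := max_{i∈I} γ_i(f), and assume e_♭ := sup{ (γ(f′) − γ(f″))/2 : f′, f″ ∈ K, Λ(f′) = Λ(f″) } is finite. Consider the convex program: minimize e over e ∈ ℝ, e′, e″ ∈ ℝ^I, vectors c^{(i⋆)} ∈ ℝ^m and σ^{(i⋆)} ∈ S^I (i⋆ ∈ I), subject to e′_{i⋆} + e″_{i⋆} ≤ 2e, ⟦γ_{i⋆} − Σ_{k=1}^m c_k^{(i⋆)} λ_k⟧_K ≤ e′_{i⋆}, and ⟦− Σ_{i∈I}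 σ_i^{(i⋆)} γ_i + Σ_{k=1}^m c_k^{(i⋆)} λ_k⟧_K ≤ e″_{i⋆} for all i⋆ ∈ I. Then the optimal value of this program equals e_♭, and for any optimal solution (ê, ê′, ê″, (ĉ^{(i⋆)}), (σ̂^{(i⋆)})), the sup-affine functional δ(y) := max_{i∈I} ( (ê − ê″_i) + Σ_{k=1}^m ĉ_k^{(i)} y_k ) satisfies sup_{f∈K} |γ(f) − δ(Λ(f))| ≤ e_♭, i.e. δ is an optimal estimation functional. -/
open Set Finset

section AuxOpt

set_option linter.unusedSectionVars false

variable {F : Type*} [AddCommGroup F] [Module ℝ F] {m : ℕ}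
variable {I : Type*} [Fintype I] [Nonempty I]

private lemma gbdd (γi : I → F →ₗ[ℝ] ℝ) (f : F) :
    BddAbove (Set.range fun i => γi i f) :=
  (Set.finite_range _).bddAbove

private lemma gam_convexOn (γi : I → F →ₗ[ℝ] ℝ) :
    ConvexOn ℝ Set.univ (fun f => ⨆ i, γi i f) := by
  refine ⟨convex_univ, fun x _ y _ a b ha hb hab => ?_⟩
  refine ciSup_le fun i => ?_
  have h : γi i (a • x + b • y) = a * γi i x + b * γi i y := by
    simp [map_add, map_smul, smul_eq_mul]
  rw [h]
  have h1 : a * γi i x ≤ a * ⨆ j, γi j x :=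
    mul_le_mul_of_nonneg_left (le_ciSup (gbdd γi x) i) ha
  have h2 : b * γi i y ≤ b * ⨆ j, γi j y :=
    mul_le_mul_of_nonneg_left (le_ciSup (gbdd γi y) i) hb
  simpa [smul_eq_mul] using add_le_add h1 h2

/-- The convex-combination estimate: if `∑ a v • vv v = Λ f' - Λ f''` with
`vv v = Λ (g v)`, `g v ∈ K`, then the diagonal value is controlled. -/
private lemma comb_bound (lam : Fin m → F →ₗ[ℝ] ℝ) (K : Set F)
    (hK : Convex ℝ K) (h0K : (0:F) ∈ K) (γi : I → F →ₗ[ℝ] ℝ)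
    (eflat : ℝ) (he0 : 0 ≤ eflat)
    (hub : ∀ f' ∈ K, ∀ f'' ∈ K, (∀ k, lam k f' = lam k f'') →
      (⨆ i, γi i f') - (⨆ i, γi i f'') ≤ 2 * eflat)
    (istar : I)
    {ι : Type} [Fintype ι] (vv : ι → (Fin m → ℝ)) (g : ι → F) (a : ι → ℝ)
    (hgK : ∀ v, g v ∈ K) (hgΛ : ∀ v k, lam k (g v) = vv v k)
    (f' : F) (hf' : f' ∈ K) (f'' : F) (hf'' : f'' ∈ K)
    (hsum : ∀ k, ∑ v, a v * vv v k = lam k f' - lam k f'') :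
    γi istar f' - (⨆ i, γi i f'') ≤
      2 * eflat + (∑ v, |a v|) *
        (2 * eflat + ∑ v, (|⨆ i, γi i (g v)| + |γi istar (g v)|)) := by
  classical
  set α : ℝ := ∑ v, |a v| with hαdef
  set R : ℝ := ∑ v, (|⨆ i, γi i (g v)| + |γi istar (g v)|) with hRdef
  have hα0 : 0 ≤ α := Finset.sum_nonneg fun _ _ => abs_nonneg _
  have hR0 : 0 ≤ R := Finset.sum_nonneg fun v _ => add_nonneg (abs_nonneg _) (abs_nonneg _)
  have hρR : ∀ v, |⨆ i, γi i (g v)| + |γi istar (g v)| ≤ R :=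
    fun v => Finset.single_le_sum (f := fun v => |⨆ i, γi i (g v)| + |γi istar (g v)|)
      (fun w _ => add_nonneg (abs_nonneg _) (abs_nonneg _)) (Finset.mem_univ v)
  have h1α : (0:ℝ) < 1 + α := by linarith
  set θ : ℝ := 1 / (1 + α) with hθdef
  have hθ0 : 0 ≤ θ := by positivity
  set wt : Option ι → ℝ := fun o => o.elim θ (fun v => |a v| / (1 + α)) with hwtdef
  set P' : Option ι → F := fun o => o.elim f' (fun v => if 0 ≤ a v then 0 else g v)
    with hP'def
  set P'' : Option ι → F := fun o => o.elim f'' (fun v => if 0 ≤ a v then g v else 0)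
    with hP''def
  have hwt0 : ∀ o, 0 ≤ wt o := by
    rintro (_ | v)
    · exact hθ0
    · have : (0:ℝ) ≤ |a v| / (1 + α) := by positivity
      exact this
  have hwt1 : ∑ o : Option ι, wt o = 1 := by
    rw [Fintype.sum_option]
    have h1 : ∑ v : ι, wt (some v) = α / (1 + α) := by
      have hw : ∀ v : ι, wt (some v) = |a v| / (1 + α) := fun v => rfl
      simp only [hw]
      rw [← Finset.sum_div, ← hαdef]
    have h2 : wt none = θ := rfl
    rw [h1, h2, hθdef]
    field_simp
  set G' : F := ∑ o : Option ι, wt o • P' o with hG'def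
  set G'' : F := ∑ o : Option ι, wt o • P'' o with hG''def
  have hG'K : G' ∈ K := by
    refine hK.sum_mem (fun o _ => hwt0 o) hwt1 ?_
    rintro (_ | v) _
    · exact hf'
    · show (if 0 ≤ a v then (0:F) else g v) ∈ K
      split
      · exact h0K
      · exact hgK v
  have hG''K : G'' ∈ K := by
    refine hK.sum_mem (fun o _ => hwt0 o) hwt1 ?_
    rintro (_ | v) _
    · exact hf''
    · show (if 0 ≤ a v then g v else (0:F)) ∈ K
      split
      · exact hgK v
      · exact h0K
  have hlamG : ∀ k, lam k G' = lam k G'' := by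
    intro k
    have hexp : ∀ (P : Option ι → F), lam k (∑ o : Option ι, wt o • P o)
        = ∑ o : Option ι, wt o * lam k (P o) := by
      intro P
      rw [map_sum]
      exact Finset.sum_congr rfl fun o _ => by rw [map_smul, smul_eq_mul]
    rw [hG'def, hG''def, hexp, hexp]
    rw [Fintype.sum_option, Fintype.sum_option]
    have hnone' : wt none * lam k (P' none) = θ * lam k f' := rfl
    have hnone'' : wt none * lam k (P'' none) = θ * lam k f'' := rfl
    rw [hnone', hnone'']
    have hv : ∀ v : ι, wt (some v) * lam k (P' (some v)) - wt (some v) * lam k (P'' (some v))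
        = -(a v / (1 + α)) * vv v k := by
      intro v
      have hw : wt (some v) = |a v| / (1 + α) := rfl
      by_cases h : 0 ≤ a v
      · have h1 : P' (some v) = 0 := by simp [hP'def, h]
        have h2 : P'' (some v) = g v := by simp [hP''def, h]
        rw [hw, h1, h2, map_zero, hgΛ v k, abs_of_nonneg h]
        ring
      · have h' : a v < 0 := lt_of_not_ge h
        have h1 : P' (some v) = g v := by simp [hP'def, h]
        have h2 : P'' (some v) = 0 := by simp [hP''def, h]
        rw [hw, h1, h2, map_zero, hgΛ v k, abs_of_neg h']
        ring
    have hvsum : ∑ v : ι, (wt (some v) * lam k (P' (some v))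
        - wt (some v) * lam k (P'' (some v))) = -(θ * (lam k f' - lam k f'')) := by
      calc ∑ v : ι, (wt (some v) * lam k (P' (some v))
            - wt (some v) * lam k (P'' (some v)))
          = ∑ v : ι, -(a v / (1 + α)) * vv v k := Finset.sum_congr rfl fun v _ => hv v
        _ = -(θ * ∑ v, a v * vv v k) := by
            rw [Finset.mul_sum, ← Finset.sum_neg_distrib]
            refine Finset.sum_congr rfl fun v _ => ?_
            rw [hθdef]
            field_simp
        _ = -(θ * (lam k f' - lam k f'')) := by rw [hsum k]
    rw [Finset.sum_sub_distrib] at hvsum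
    linarith [hvsum]
  have hgamG : (⨆ i, γi i G') - (⨆ i, γi i G'') ≤ 2 * eflat := hub G' hG'K G'' hG''K hlamG
  have histG : γi istar G' ≤ ⨆ i, γi i G' := le_ciSup (gbdd γi G') istar
  have hJen : (⨆ i, γi i G'') ≤ ∑ o : Option ι, wt o * (⨆ i, γi i (P'' o)) :=
    (gam_convexOn γi).map_sum_le (fun o _ => hwt0 o) hwt1 (fun o _ => Set.mem_univ _)
  have hlinG : γi istar G' = ∑ o : Option ι, wt o * γi istar (P' o) := by
    rw [hG'def, map_sum]
    exact Finset.sum_congr rfl fun o _ => by rw [map_smul, smul_eq_mul]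
  have hgam0 : (⨆ i, γi i (0:F)) = 0 := by simp [map_zero]
  have hbranch : ∀ v : ι,
      wt (some v) * (⨆ i, γi i (P'' (some v))) - wt (some v) * γi istar (P' (some v))
      ≤ (|a v| / (1 + α)) * R := by
    intro v
    have hwtv : wt (some v) = |a v| / (1 + α) := rfl
    have hwtv0 : (0:ℝ) ≤ |a v| / (1 + α) := by positivity
    rw [hwtv, ← mul_sub]
    refine mul_le_mul_of_nonneg_left ?_ hwtv0
    have habs1 := abs_nonneg (⨆ i, γi i (g v))
    have habs2 := abs_nonneg (γi istar (g v))
    have hρ := hρR v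
    by_cases h : 0 ≤ a v
    · have h1 : P' (some v) = 0 := by simp [hP'def, h]
      have h2 : P'' (some v) = g v := by simp [hP''def, h]
      rw [h1, h2, map_zero]
      have h3 : (⨆ i, γi i (g v)) ≤ |⨆ i, γi i (g v)| := le_abs_self _
      linarith
    · have h1 : P' (some v) = g v := by simp [hP'def, h]
      have h2 : P'' (some v) = 0 := by simp [hP''def, h]
      rw [h1, h2, hgam0]
      have h3 : -γi istar (g v) ≤ |γi istar (g v)| := neg_le_abs _
      linarith
  -- assemble
  have hS : (∑ o : Option ι, wt o * γi istar (P' o))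
      - (∑ o : Option ι, wt o * (⨆ i, γi i (P'' o))) ≤ 2 * eflat := by
    rw [← hlinG]
    linarith
  rw [Fintype.sum_option, Fintype.sum_option] at hS
  have hwnone : wt none * γi istar (P' none) = θ * γi istar f' := rfl
  have hwnone' : wt none * (⨆ i, γi i (P'' none)) = θ * (⨆ i, γi i f'') := rfl
  rw [hwnone, hwnone'] at hS
  have hsumbr : ∑ v : ι, (wt (some v) * (⨆ i, γi i (P'' (some v)))
      - wt (some v) * γi istar (P' (some v)))
      ≤ (α / (1 + α)) * R := by
    have h1 : ∑ v : ι, (wt (some v) * (⨆ i, γi i (P'' (some v)))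
        - wt (some v) * γi istar (P' (some v)))
        ≤ ∑ v : ι, (|a v| / (1 + α)) * R := Finset.sum_le_sum fun v _ => hbranch v
    have h2 : ∑ v : ι, (|a v| / (1 + α)) * R = (α / (1 + α)) * R := by
      rw [← Finset.sum_mul, ← Finset.sum_div]
    linarith [h2 ▸ h1]
  rw [Finset.sum_sub_distrib] at hsumbr
  have hmain : θ * (γi istar f' - (⨆ i, γi i f'')) ≤ 2 * eflat + (α / (1 + α)) * R := by
    have hθexpand : θ * (γi istar f' - (⨆ i, γi i f''))
        = θ * γi istar f' - θ * (⨆ i, γi i f'') := by ring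
    rw [hθexpand]
    linarith
  have h := mul_le_mul_of_nonneg_left hmain h1α.le
  have e1 : (1 + α) * (θ * (γi istar f' - (⨆ i, γi i f'')))
      = γi istar f' - (⨆ i, γi i f'') := by
    rw [hθdef]
    field_simp
  have e3 : (1 + α) * (2 * eflat + (α / (1 + α)) * R)
      = 2 * eflat + α * 2 * eflat + α * R := by
    field_simp
  rw [e1, e3] at h
  have : α * (2 * eflat + R) = α * 2 * eflat + α * R := by ring
  linarith

set_option maxHeartbeats 1000000 in
private lemma key_bound (lam : Fin m → F →ₗ[ℝ] ℝ) (K : Set F)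
    (hK : Convex ℝ K) (h0K : (0:F) ∈ K) (γi : I → F →ₗ[ℝ] ℝ)
    (eflat : ℝ) (he0 : 0 ≤ eflat)
    (hub : ∀ f' ∈ K, ∀ f'' ∈ K, (∀ k, lam k f' = lam k f'') →
      (⨆ i, γi i f') - (⨆ i, γi i f'') ≤ 2 * eflat)
    (istar : I) :
    ∃ C : ℝ, 0 ≤ C ∧ ∀ f' ∈ K, ∀ f'' ∈ K,
      γi istar f' - (⨆ i, γi i f'') ≤
        2 * eflat + C * ‖(fun k => lam k f' - lam k f'' : Fin m → ℝ)‖ := by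
  classical
  set Λ : F →ₗ[ℝ] (Fin m → ℝ) := LinearMap.pi lam with hΛdef
  obtain ⟨s, hs_sub, hs_span, hs_li⟩ := exists_linearIndependent ℝ (Λ '' K)
  have hs_fin : s.Finite := hs_li.setFinite
  haveI : Fintype s := hs_fin.fintype
  have hchoice : ∀ v : s, ∃ f, f ∈ K ∧ Λ f = v := by
    intro v
    obtain ⟨f, hf, hfv⟩ := hs_sub v.2
    exact ⟨f, hf, hfv⟩
  choose g hgK hgΛ using hchoice
  set W : Submodule ℝ (Fin m → ℝ) :=
    Submodule.span ℝ (Set.range ((↑) : s → (Fin m → ℝ))) with hWdef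
  have hW2 : W = Submodule.span ℝ (Λ '' K) := by
    rw [hWdef, Subtype.range_coe, hs_span]
  set B : Module.Basis s ℝ W := Module.Basis.span hs_li with hBdef
  set coordC : s → W →L[ℝ] ℝ :=
    fun v => LinearMap.toContinuousLinearMap (B.coord v) with hcoorddef
  set C₁ : ℝ := ∑ v : s, ‖coordC v‖ with hC₁def
  set R : ℝ := ∑ v : s, (|⨆ i, γi i (g v)| + |γi istar (g v)|) with hRdef
  have hC₁0 : 0 ≤ C₁ := Finset.sum_nonneg fun v _ => ContinuousLinearMap.opNorm_nonneg _
  have hR0 : 0 ≤ R := Finset.sum_nonneg fun v _ => add_nonneg (abs_nonneg _) (abs_nonneg _)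
  refine ⟨C₁ * (2 * eflat + R), by positivity, ?_⟩
  intro f' hf' f'' hf''
  set z : Fin m → ℝ := fun k => lam k f' - lam k f'' with hzdef
  have hzΛ : z = Λ f' - Λ f'' := by
    funext k
    simp [hzdef, hΛdef]
  have hzW : z ∈ W := by
    rw [hW2, hzΛ]
    exact Submodule.sub_mem _ (Submodule.subset_span ⟨f', hf', rfl⟩)
      (Submodule.subset_span ⟨f'', hf'', rfl⟩)
  set zz : W := ⟨z, hzW⟩ with hzzdef
  set a : s → ℝ := fun v => B.repr zz v with hadef
  set α : ℝ := ∑ v : s, |a v| with hαdef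
  have hαb : α ≤ C₁ * ‖z‖ := by
    have hnormzz : ‖zz‖ = ‖z‖ := rfl
    calc α = ∑ v : s, |a v| := hαdef
      _ ≤ ∑ v : s, ‖coordC v‖ * ‖zz‖ := by
          refine Finset.sum_le_sum fun v _ => ?_
          have h := (coordC v).le_opNorm zz
          have heq : coordC v zz = a v := by
            rw [hcoorddef]
            simp [LinearMap.coe_toContinuousLinearMap', Module.Basis.coord_apply, hadef]
          rw [heq, Real.norm_eq_abs] at h
          exact h
      _ = C₁ * ‖z‖ := by rw [← Finset.sum_mul, hnormzz, hC₁def]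
  -- ∑ a v • v = z
  have hsumav : ∑ v : s, a v • (v : Fin m → ℝ) = z := by
    have h := B.sum_repr zz
    have h2 := congrArg (W.subtype) h
    rw [map_sum] at h2
    simp only [Submodule.coe_subtype, map_smul] at h2
    have h3 : ∀ v : s, ((B v : W) : Fin m → ℝ) = (v : Fin m → ℝ) := by
      intro v
      rw [hBdef]
      exact congrArg Subtype.val (Module.Basis.span_apply hs_li v)
    calc ∑ v : s, a v • (v : Fin m → ℝ)
        = ∑ v : s, (B.repr zz v) • ((B v : W) : Fin m → ℝ) := by
          refine Finset.sum_congr rfl fun v _ => ?_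
          rw [h3 v]
      _ = ((zz : W) : Fin m → ℝ) := h2
      _ = z := rfl
  have hgΛ' : ∀ (v : s) (k : Fin m), lam k (g v) = (v : Fin m → ℝ) k := by
    intro v k
    have := congrFun (hgΛ v) k
    simpa [hΛdef] using this
  have hsum' : ∀ k, ∑ v : s, a v * (v : Fin m → ℝ) k = lam k f' - lam k f'' := by
    intro k
    have := congrFun hsumav k
    simpa using this
  have hcb := comb_bound lam K hK h0K γi eflat he0 hub istar
    (fun v : s => (v : Fin m → ℝ)) g a hgK hgΛ' f' hf' f'' hf'' hsum'
  calc γi istar f' - (⨆ i, γi i f'')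
      ≤ 2 * eflat + α * (2 * eflat + R) := hcb
    _ ≤ 2 * eflat + (C₁ * (2 * eflat + R)) * ‖z‖ := by
        have h2 : (0:ℝ) ≤ 2 * eflat + R := by linarith
        nlinarith [mul_le_mul_of_nonneg_right hαb h2]

private lemma gam_exists_eq (γi : I → F →ₗ[ℝ] ℝ) (f : F) :
    ∃ j, (⨆ i, γi i f) = γi j f := by
  obtain ⟨j, hj⟩ := Finite.exists_max (fun i => γi i f)
  exact ⟨j, le_antisymm (ciSup_le hj) (le_ciSup (gbdd γi f) j)⟩

private lemma clm_pi_expand {n : Type*} [Fintype n] [DecidableEq n]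
    (φ : (n → ℝ) →L[ℝ] ℝ) (w : n → ℝ) :
    φ w = ∑ j, w j * φ (Pi.single j 1) := by
  have hw : w = ∑ j, w j • (Pi.single j (1:ℝ) : n → ℝ) := by
    funext j; simp [Finset.sum_apply, Pi.single_apply]
  conv_lhs => rw [hw]
  rw [map_sum]
  simp [smul_eq_mul]

private lemma exists_good (lam : Fin m → F →ₗ[ℝ] ℝ) (K : Set F)
    (hK : Convex ℝ K) (h0K : (0:F) ∈ K) (γi : I → F →ₗ[ℝ] ℝ)
    (eflat : ℝ) (he0 : 0 ≤ eflat)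
    (hub : ∀ f' ∈ K, ∀ f'' ∈ K, (∀ k, lam k f' = lam k f'') →
      (⨆ i, γi i f') - (⨆ i, γi i f'') ≤ 2 * eflat)
    (ε : ℝ) (hε : 0 < ε) (istar : I) :
    ∃ (c : Fin m → ℝ) (σ : I → ℝ) (e' e'' : ℝ),
      (∀ i, 0 ≤ σ i) ∧ (∑ i, σ i) = 1 ∧ e' + e'' ≤ 2 * (eflat + ε) ∧
      (∀ f ∈ K, γi istar f - ∑ k, c k * lam k f ≤ e') ∧
      (∀ f ∈ K, -(∑ i, σ i * γi i f) + ∑ k, c k * lam k f ≤ e'') := by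
  classical
  obtain ⟨C, hC0, hCb⟩ := key_bound lam K hK h0K γi eflat he0 hub istar
  set β : ℝ := 2 * eflat + 2 * ε with hβdef
  have hβpos : 0 < β := by positivity
  -- the convex set D in (Fin m → ℝ) × ℝ
  set D : Set ((Fin m → ℝ) × ℝ) :=
    {p | ∃ f' ∈ K, ∃ f'' ∈ K, p.1 = (fun k => lam k f' - lam k f'') ∧
      p.2 ≤ γi istar f' - (⨆ i, γi i f'')} with hDdef
  have hDconv : Convex ℝ D := by
    rintro p ⟨f1, hf1, f1', hf1', hp1, hp2⟩ q ⟨f2, hf2, f2', hf2', hq1, hq2⟩ a b ha hb hab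
    refine ⟨a • f1 + b • f2, hK hf1 hf2 ha hb hab,
      a • f1' + b • f2', hK hf1' hf2' ha hb hab, ?_, ?_⟩
    · funext k
      simp only [Prod.fst_add, Prod.smul_fst, Pi.add_apply, Pi.smul_apply, hp1, hq1,
        map_add, map_smul, smul_eq_mul]
      ring
    · have hgsub : (⨆ i, γi i (a • f1' + b • f2')) ≤
          a * (⨆ i, γi i f1') + b * (⨆ i, γi i f2') := by
        refine ciSup_le fun i => ?_
        have h : γi i (a • f1' + b • f2') = a * γi i f1' + b * γi i f2' := by
          simp [map_add, map_smul, smul_eq_mul]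
        rw [h]
        exact add_le_add
          (mul_le_mul_of_nonneg_left (le_ciSup (gbdd γi f1') i) ha)
          (mul_le_mul_of_nonneg_left (le_ciSup (gbdd γi f2') i) hb)
      have hγlin : γi istar (a • f1 + b • f2) = a * γi istar f1 + b * γi istar f2 := by
        simp [map_add, map_smul, smul_eq_mul]
      have h1 : a * p.2 + b * q.2 ≤ a * (γi istar f1 - ⨆ i, γi i f1')
          + b * (γi istar f2 - ⨆ i, γi i f2') :=
        add_le_add (mul_le_mul_of_nonneg_left hp2 ha) (mul_le_mul_of_nonneg_left hq2 hb)
      have h2 : (a • p + b • q).2 = a * p.2 + b * q.2 := rfl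
      rw [h2, hγlin]
      linarith
  -- (0, β) is not in the closure of D
  have hDsub : D ⊆ {p : (Fin m → ℝ) × ℝ | p.2 - C * ‖p.1‖ ≤ 2 * eflat} := by
    rintro p ⟨f', hf', f'', hf'', hp1, hp2⟩
    have := hCb f' hf' f'' hf''
    rw [← hp1] at this
    simp only [Set.mem_setOf_eq]
    linarith
  have hclosed : IsClosed {p : (Fin m → ℝ) × ℝ | p.2 - C * ‖p.1‖ ≤ 2 * eflat} :=
    isClosed_le (by fun_prop) continuous_const
  have hp₀ : ((0 : Fin m → ℝ), β) ∉ closure D := by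
    intro hmem
    have := closure_minimal hDsub hclosed hmem
    simp only [Set.mem_setOf_eq, norm_zero, mul_zero, sub_zero] at this
    linarith
  obtain ⟨L, u, hLD, hLp⟩ :=
    geometric_hahn_banach_closed_point (hDconv.closure) isClosed_closure hp₀
  set τ : ℝ := L ((0 : Fin m → ℝ), (1:ℝ)) with hτdef
  have h00D : (((0 : Fin m → ℝ)), (0:ℝ)) ∈ D := by
    refine ⟨0, h0K, 0, h0K, by funext k; simp, ?_⟩
    simp [map_zero]
  have hu0 : 0 < u := by
    have := hLD _ (subset_closure h00D)
    have hz : L ((0 : Fin m → ℝ), (0:ℝ)) = 0 := by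
      have : ((0 : Fin m → ℝ), (0:ℝ)) = (0 : (Fin m → ℝ) × ℝ) := rfl
      rw [this, map_zero]
    linarith [this, hz ▸ this]
  have hLp₀ : L ((0 : Fin m → ℝ), β) = β * τ := by
    have h : ((0 : Fin m → ℝ), β) = β • (((0 : Fin m → ℝ)), (1:ℝ)) := by
      simp [Prod.smul_def]
    rw [h, map_smul, smul_eq_mul, hτdef]
  have hτpos : 0 < τ := by
    rw [hLp₀] at hLp
    nlinarith
  -- the linear functional c
  set Lk : Fin m → ℝ := fun k => L ((Pi.single k 1 : Fin m → ℝ), (0:ℝ)) with hLkdef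
  set c : Fin m → ℝ := fun k => -(Lk k) / τ with hcdef
  -- expansion of L
  have hLexp : ∀ (z : Fin m → ℝ) (t : ℝ),
      L (z, t) = (∑ k, z k * Lk k) + t * τ := by
    intro z t
    have hsplit : ((z, t) : (Fin m → ℝ) × ℝ) = ((z, 0) : (Fin m → ℝ) × ℝ)
        + (((0:Fin m → ℝ), t) : (Fin m → ℝ) × ℝ) := by
      simp
    have h2 : L ((0:Fin m → ℝ), t) = t * τ := by
      have h : ((0 : Fin m → ℝ), t) = t • (((0 : Fin m → ℝ)), (1:ℝ)) := by
        simp [Prod.smul_def]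
      rw [h, map_smul, smul_eq_mul, hτdef]
    have h1 : L (z, (0:ℝ)) = ∑ k, z k * Lk k := by
      set ψ : (Fin m → ℝ) →L[ℝ] ℝ := L.comp (ContinuousLinearMap.inl ℝ (Fin m → ℝ) ℝ) with hψ
      have hψz : ∀ z', L (z', (0:ℝ)) = ψ z' := fun z' => rfl
      rw [hψz z, clm_pi_expand ψ z]
      exact Finset.sum_congr rfl fun k _ => by rw [← hψz]
    rw [hsplit, map_add, h1, h2]
  have hkey : ∀ f' ∈ K, ∀ f'' ∈ K,
      (γi istar f' - ∑ k, c k * lam k f') +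
      ((∑ k, c k * lam k f'') - (⨆ i, γi i f'')) ≤ β := by
    intro f' hf' f'' hf''
    have hmem : (((fun k => lam k f' - lam k f'') : Fin m → ℝ),
        γi istar f' - (⨆ i, γi i f'')) ∈ D := ⟨f', hf', f'', hf'', rfl, le_rfl⟩
    have hL := (hLD _ (subset_closure hmem)).le.trans (hLp.le.trans_eq hLp₀.symm.symm)
    rw [hLexp] at hL
    have hLkc : ∀ k, Lk k = -(c k) * τ := by
      intro k
      simp only [hcdef]
      field_simp
    have hsum : ∑ k, (lam k f' - lam k f'') * Lk k
        = τ * ((∑ k, c k * lam k f'') - ∑ k, c k * lam k f') := by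
      rw [mul_sub, Finset.mul_sum, Finset.mul_sum, ← Finset.sum_sub_distrib]
      refine Finset.sum_congr rfl fun k _ => ?_
      rw [hLkc k]
      ring
    rw [hsum] at hL
    have hG : (γi istar f' - ∑ k, c k * lam k f'
        + (∑ k, c k * lam k f'' - ⨆ i, γi i f'')) * τ ≤ β * τ := by nlinarith [hL]
    exact le_of_mul_le_mul_right hG hτpos
  -- define e' and e''
  set A : F → ℝ := fun f => γi istar f - ∑ k, c k * lam k f with hAdef
  set B0 : F → ℝ := fun f => (∑ k, c k * lam k f) - ⨆ i, γi i f with hB0def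
  have hA0 : A 0 = 0 := by
    simp [hAdef, map_zero]
  have hB00 : B0 0 = 0 := by
    simp [hB0def, map_zero]
  have hABβ : ∀ f ∈ K, ∀ g ∈ K, A f + B0 g ≤ β := fun f hf g hg => hkey f hf g hg
  have hne : A 0 ∈ A '' K := ⟨0, h0K, rfl⟩
  have hbddA : BddAbove (A '' K) := by
    refine ⟨β, ?_⟩
    rintro x ⟨f, hf, rfl⟩
    have := hABβ f hf 0 h0K
    rw [hB00] at this
    linarith
  set e' : ℝ := sSup (A '' K) with he'def
  have he'ub : ∀ f ∈ K, A f ≤ e' := fun f hf => le_csSup hbddA ⟨f, hf, rfl⟩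
  have he'0 : 0 ≤ e' := hA0 ▸ le_csSup hbddA hne
  set e'' : ℝ := β - e' with he''def
  have hBe'' : ∀ f ∈ K, B0 f ≤ e'' := by
    intro f hf
    have h1 : e' ≤ β - B0 f := by
      refine csSup_le ⟨A 0, hne⟩ ?_
      rintro x ⟨g, hg, rfl⟩
      have := hABβ g hg f hf
      linarith
    simp only [he''def]
    linarith
  -- σ via separation of M from the open positive orthant
  set X : F → ℝ := fun f => ∑ k, c k * lam k f with hXdef
  set M : Set (I → ℝ) := {w | ∃ f ∈ K, w = fun j => X f - γi j f - e''} with hMdef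
  set O : Set (I → ℝ) := Set.univ.pi (fun _ : I => Set.Ioi (0:ℝ)) with hOdef
  have hO_open : IsOpen O := isOpen_set_pi Set.finite_univ (fun _ _ => isOpen_Ioi)
  have hO_conv : Convex ℝ O := convex_pi (fun _ _ => convex_Ioi 0)
  have hXlin : ∀ (a b : ℝ) (f g : F), X (a • f + b • g) = a * X f + b * X g := by
    intro a b f g
    simp only [hXdef, map_add, map_smul, smul_eq_mul, mul_add, Finset.sum_add_distrib,
      Finset.mul_sum]
    congr 1 <;> exact Finset.sum_congr rfl fun k _ => by ring
  have hM_conv : Convex ℝ M := by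
    rintro w ⟨f1, hf1, rfl⟩ v ⟨f2, hf2, rfl⟩ a b ha hb hab
    refine ⟨a • f1 + b • f2, hK hf1 hf2 ha hb hab, ?_⟩
    funext j
    simp only [Pi.add_apply, Pi.smul_apply, smul_eq_mul, hXlin a b f1 f2, map_add, map_smul]
    linear_combination (-e'') * hab
  have hdisj : Disjoint O M := by
    rw [Set.disjoint_left]
    rintro w hwO ⟨f, hf, rfl⟩
    obtain ⟨j, hj⟩ := gam_exists_eq γi f
    have h1 : X f - γi j f - e'' ≤ 0 := by
      have := hBe'' f hf
      simp only [hB0def] at this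
      rw [← hj]
      simp only [hXdef]
      linarith
    have h2 : (0:ℝ) < X f - γi j f - e'' := hwO j (Set.mem_univ j)
    linarith
  obtain ⟨φ, u₂, hφO, hφM⟩ := geometric_hahn_banach_open hO_conv hO_open hM_conv hdisj
  set φj : I → ℝ := fun j => φ (Pi.single j 1) with hφjdef
  have hφexp : ∀ w : I → ℝ, φ w = ∑ j, w j * φj j := fun w => clm_pi_expand φ w
  have hone : (fun _ : I => (1:ℝ)) ∈ O := fun j _ => by norm_num
  have hφj0 : ∀ j, φj j ≤ 0 := by
    intro j
    by_contra hc
    push_neg at hc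
    set s₀ : ℝ := max ((u₂ - φ (fun _ => 1) + 1) / φj j) 1 with hs₀def
    have hs₀pos : (0:ℝ) < s₀ := lt_of_lt_of_le one_pos (le_max_right _ _)
    have hmemO : ((fun _ : I => (1:ℝ)) + s₀ • (Pi.single j 1 : I → ℝ)) ∈ O := by
      intro i _
      simp only [Pi.add_apply, Pi.smul_apply, Pi.single_apply, smul_eq_mul, Set.mem_Ioi]
      by_cases h : i = j <;> simp [h] <;> positivity
    have hval := hφO _ hmemO
    rw [map_add, map_smul, smul_eq_mul] at hval
    have h1 : (u₂ - φ (fun _ => 1) + 1) / φj j * φj j = u₂ - φ (fun _ => 1) + 1 := by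
      field_simp
    have h2 : (u₂ - φ (fun _ => 1) + 1) / φj j * φj j ≤ s₀ * φj j :=
      mul_le_mul_of_nonneg_right (le_max_left _ _) hc.le
    rw [h1] at h2
    simp only [hφjdef] at h2 hval
    linarith
  have hu₂0 : 0 ≤ u₂ := by
    by_contra hc
    push_neg at hc
    have hφ1neg : φ (fun _ => 1) < 0 := lt_trans (hφO _ hone) hc
    set t : ℝ := u₂ / (2 * φ (fun _ => 1)) with htdef
    have htpos : 0 < t := div_pos_of_neg_of_neg hc (by linarith)
    have hmemO : (t • (fun _ : I => (1:ℝ))) ∈ O := by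
      intro i _
      simp only [Pi.smul_apply, smul_eq_mul, mul_one, Set.mem_Ioi]
      exact htpos
    have hval := hφO _ hmemO
    rw [map_smul, smul_eq_mul] at hval
    have hne1 : (φ fun _ => (1:ℝ)) ≠ 0 := ne_of_lt hφ1neg
    have : t * φ (fun _ => 1) = u₂ / 2 := by
      rw [htdef]
      field_simp
    rw [this] at hval
    linarith
  set T : ℝ := ∑ j, φj j with hTdef
  have hT0 : T ≤ 0 := Finset.sum_nonpos fun j _ => hφj0 j
  have hM0 : (fun _ : I => -e'') ∈ M := by
    refine ⟨0, h0K, ?_⟩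
    funext j
    simp [hXdef, map_zero]
  have hTneg : T < 0 := by
    rcases lt_or_eq_of_le hT0 with h | h
    · exact h
    · exfalso
      have hz : ∀ j, φj j = 0 := by
        intro j
        have := (Finset.sum_eq_zero_iff_of_nonpos (fun j _ => hφj0 j)).mp (hTdef.symm.trans h)
        exact this j (Finset.mem_univ j)
      have hφzero : ∀ w : I → ℝ, φ w = 0 := by
        intro w
        rw [hφexp]
        simp [hz]
      have h1 := hφO _ hone
      have h2 := hφM _ hM0
      rw [hφzero] at h1 h2
      linarith
  set σ : I → ℝ := fun j => φj j / T with hσdef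
  have hσ0 : ∀ j, 0 ≤ σ j := by
    intro j
    have : σ j = -(φj j) / -T := by rw [hσdef]; rw [neg_div_neg_eq]
    rw [this]
    exact div_nonneg (by linarith [hφj0 j]) (by linarith)
  have hσ1 : ∑ j, σ j = 1 := by
    simp only [hσdef]
    rw [← Finset.sum_div, ← hTdef, div_self (ne_of_lt hTneg)]
  have hcons : ∀ f ∈ K, -(∑ i, σ i * γi i f) + ∑ k, c k * lam k f ≤ e'' := by
    intro f hf
    have hMf : (fun j => X f - γi j f - e'') ∈ M := ⟨f, hf, rfl⟩
    have h1 : 0 ≤ φ (fun j => X f - γi j f - e'') := le_trans hu₂0 (hφM _ hMf)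
    rw [hφexp] at h1
    have h2 : ∑ j, σ j * (X f - γi j f - e'') ≤ 0 := by
      have : ∑ j, σ j * (X f - γi j f - e'')
          = (∑ j, (X f - γi j f - e'') * φj j) / T := by
        rw [Finset.sum_div]
        refine Finset.sum_congr rfl fun j _ => ?_
        rw [hσdef]
        ring
      rw [this]
      exact div_nonpos_of_nonneg_of_nonpos h1 hT0
    have h3 : ∑ j, σ j * (X f - γi j f - e'')
        = X f - (∑ j, σ j * γi j f) - e'' := by
      have hexp : ∀ j, σ j * (X f - γi j f - e'')
          = σ j * (X f - e'') - σ j * γi j f := fun j => by ring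
      simp only [hexp]
      rw [Finset.sum_sub_distrib, ← Finset.sum_mul, hσ1, one_mul]
      ring
    rw [h3] at h2
    simp only [hXdef] at h2
    linarith
  refine ⟨c, σ, e', e'', hσ0, hσ1, ?_, ?_, hcons⟩
  · simp only [he''def, hβdef]
    linarith
  · intro f hf
    have := he'ub f hf
    simpa [hAdef] using this

end AuxOpt

/-- **Construction of an optimal sup-affine estimation functional
(Proposition ThmConstruction).** The optimal value of the displayed convex program
(with support-function constraints, encoded by the predicate `Feas`) equals the
intrinsic lower bound `eflat`, and any optimal solution yields, via
`δ(y) = max_i ((ê − ê″_i) + ∑_k ĉ^{(i)}_k y_k)`, an estimation functional whose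
worst-case error over `K` is at most `eflat`, i.e. an optimal one. -/
theorem stmt_5 {F : Type*} [AddCommGroup F] [Module ℝ F] {m : ℕ}
    (lam : Fin m → F →ₗ[ℝ] ℝ)
    (K : Set F) (hK : Convex ℝ K) (h0K : (0 : F) ∈ K)
    {I : Type*} [Fintype I] [Nonempty I] (γi : I → F →ₗ[ℝ] ℝ)
    (γ : F → ℝ) (hγ : ∀ f, γ f = ⨆ i, γi i f)
    (eflat : ℝ)
    (heflat : IsLUB {x : ℝ | ∃ f' ∈ K, ∃ f'' ∈ K,
        (∀ k, lam k f' = lam k f'') ∧ x = (γ f' - γ f'') / 2} eflat)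
    (Feas : ℝ → (I → ℝ) → (I → ℝ) → (I → Fin m → ℝ) → (I → I → ℝ) → Prop)
    (hFeas : ∀ e e' e'' c σ, Feas e e' e'' c σ ↔
      ((∀ istar, (∀ i, 0 ≤ σ istar i) ∧ ∑ i, σ istar i = 1) ∧
       (∀ istar, e' istar + e'' istar ≤ 2 * e) ∧
       (∀ istar, (⨆ f ∈ K, ((γi istar f - ∑ k, c istar k * lam k f : ℝ) : EReal)) ≤
          ((e' istar : ℝ) : EReal)) ∧
       (∀ istar,
          (⨆ f ∈ K, ((-(∑ i, σ istar i * γi i f) + ∑ k, c istar k * lam k f : ℝ) : EReal)) ≤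
          ((e'' istar : ℝ) : EReal)))) :
    IsGLB {e : ℝ | ∃ e' e'' c σ, Feas e e' e'' c σ} eflat ∧
    (∀ e' e'' c σ, Feas eflat e' e'' c σ →
      ∀ f ∈ K,
        |γ f - ⨆ i, ((eflat - e'' i) + ∑ k, c i k * lam k f)| ≤ eflat) := by
  classical
  have he0 : 0 ≤ eflat := by
    have h0 : (0:ℝ) ∈ {x : ℝ | ∃ f' ∈ K, ∃ f'' ∈ K,
        (∀ k, lam k f' = lam k f'') ∧ x = (γ f' - γ f'') / 2} :=
      ⟨0, h0K, 0, h0K, fun k => rfl, by ring⟩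
    exact heflat.1 h0
  have hub : ∀ f' ∈ K, ∀ f'' ∈ K, (∀ k, lam k f' = lam k f'') →
      (⨆ i, γi i f') - (⨆ i, γi i f'') ≤ 2 * eflat := by
    intro f' h1 f'' h2 hl
    have hmem : (γ f' - γ f'')/2 ∈ {x : ℝ | ∃ f' ∈ K, ∃ f'' ∈ K,
        (∀ k, lam k f' = lam k f'') ∧ x = (γ f' - γ f'') / 2} :=
      ⟨f', h1, f'', h2, hl, rfl⟩
    have := heflat.1 hmem
    rw [hγ f', hγ f''] at this
    linarith
  -- pointwise extraction from the EReal constraints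
  have hpt : ∀ (x : F → ℝ) (e : ℝ),
      ((⨆ f ∈ K, ((x f : ℝ) : EReal)) ≤ ((e : ℝ) : EReal)) → ∀ f ∈ K, x f ≤ e := by
    intro x e hsup f hf
    have h1 : ((x f : ℝ) : EReal) ≤ ⨆ f ∈ K, ((x f : ℝ) : EReal) :=
      le_iSup₂ (f := fun f _ => ((x f : ℝ) : EReal)) f hf
    exact EReal.coe_le_coe_iff.mp (h1.trans hsup)
  constructor
  · constructor
    · -- eflat is a lower bound of the feasible set (weak duality)
      rintro e ⟨e', e'', c, σ, hF⟩
      rw [hFeas] at hF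
      obtain ⟨hσ, hee, h3, h4⟩ := hF
      refine heflat.2 ?_
      rintro x ⟨f', hf', f'', hf'', hl, rfl⟩
      obtain ⟨j, hj⟩ := gam_exists_eq γi f'
      have h3' : γi j f' - ∑ k, c j k * lam k f' ≤ e' j :=
        hpt _ _ (h3 j) f' hf'
      have h4' : -(∑ i, σ j i * γi i f'') + ∑ k, c j k * lam k f'' ≤ e'' j :=
        hpt _ _ (h4 j) f'' hf''
      have hσg : ∑ i, σ j i * γi i f'' ≤ ⨆ i, γi i f'' := by
        have h1 : ∀ i ∈ Finset.univ, σ j i * γi i f'' ≤ σ j i * ⨆ i', γi i' f'' :=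
          fun i _ => mul_le_mul_of_nonneg_left (le_ciSup (gbdd γi f'') i) ((hσ j).1 i)
        calc ∑ i, σ j i * γi i f'' ≤ ∑ i, σ j i * ⨆ i', γi i' f'' :=
              Finset.sum_le_sum h1
          _ = (∑ i, σ j i) * ⨆ i', γi i' f'' := by rw [Finset.sum_mul]
          _ = ⨆ i', γi i' f'' := by rw [(hσ j).2, one_mul]
      have hll : ∑ k, c j k * lam k f' = ∑ k, c j k * lam k f'' :=
        Finset.sum_congr rfl fun k _ => by rw [hl k]
      have hee' := hee j
      rw [hγ f', hγ f'', hj]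
      linarith
    · -- eflat is the greatest lower bound
      intro b hb
      by_contra hc
      push_neg at hc
      set ε : ℝ := (b - eflat)/2 with hεdef
      have hε : 0 < ε := by simp only [hεdef]; linarith
      have hex := fun istar : I =>
        exists_good lam K hK h0K γi eflat he0 hub ε hε istar
      choose c σ e1 e2 hσ0 hσ1 hsum hA hB using hex
      have hfeas : Feas (eflat + ε) e1 e2 c σ := by
        rw [hFeas]
        refine ⟨fun i => ⟨hσ0 i, hσ1 i⟩, fun i => by linarith [hsum i], ?_, ?_⟩
        · intro i
          exact iSup₂_le fun f hf => EReal.coe_le_coe_iff.mpr (hA i f hf)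
        · intro i
          exact iSup₂_le fun f hf => EReal.coe_le_coe_iff.mpr (hB i f hf)
      have := hb ⟨e1, e2, c, σ, hfeas⟩
      simp only [hεdef] at this
      linarith
  · -- any optimal solution yields an optimal estimation functional
    intro e' e'' c σ hF f hf
    rw [hFeas] at hF
    obtain ⟨hσ, hee, h3, h4⟩ := hF
    have h3' : ∀ i, γi i f - ∑ k, c i k * lam k f ≤ e' i :=
      fun i => hpt _ _ (h3 i) f hf
    have h4' : ∀ i, -(∑ j, σ i j * γi j f) + ∑ k, c i k * lam k f ≤ e'' i :=
      fun i => hpt _ _ (h4 i) f hf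
    have hσg : ∀ i, ∑ j, σ i j * γi j f ≤ ⨆ j, γi j f := by
      intro i
      have h1 : ∀ j ∈ Finset.univ, σ i j * γi j f ≤ σ i j * ⨆ j', γi j' f :=
        fun j _ => mul_le_mul_of_nonneg_left (le_ciSup (gbdd γi f) j) ((hσ i).1 j)
      calc ∑ j, σ i j * γi j f ≤ ∑ j, σ i j * ⨆ j', γi j' f := Finset.sum_le_sum h1
        _ = (∑ j, σ i j) * ⨆ j', γi j' f := by rw [Finset.sum_mul]
        _ = ⨆ j', γi j' f := by rw [(hσ i).2, one_mul]
    have hbddδ : BddAbove (Set.range fun i => (eflat - e'' i) + ∑ k, c i k * lam k f) :=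
      (Set.finite_range _).bddAbove
    have hup : γ f ≤ (⨆ i, ((eflat - e'' i) + ∑ k, c i k * lam k f)) + eflat := by
      rw [hγ f]
      refine ciSup_le fun i => ?_
      have h5 : (eflat - e'' i) + ∑ k, c i k * lam k f ≤
          ⨆ i', ((eflat - e'' i') + ∑ k, c i' k * lam k f) := le_ciSup hbddδ i
      have := h3' i
      have := hee i
      linarith
    have hdown : (⨆ i, ((eflat - e'' i) + ∑ k, c i k * lam k f)) ≤ γ f + eflat := by
      rw [hγ f]
      refine ciSup_le fun i => ?_
      have := h4' i
      have := hσg i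
      linarith
    rw [abs_le]
    constructor <;> linarith
end

section
/- Let F be a real vector space, let λ₁,…,λ_m be linear functionals on F with observation map Λ(f) = (λ₁(f),…,λ_m(f)), and let K ⊆ F be a convex set containing 0. Let γ_i be linear functionals on F indexed over finite sets, and suppose γ : F → ℝ admits the representations γ(f) = max_{a∈A} min_{i∈I_a} γ_i(f) = min_{b∈B} max_{j∈J_b} γ_j(f) for all f ∈ F, with A, B finite and nonempty and each I_a, J_b finite and nonempty. Assume e_♭ := sup{ (γ(f′) − γ(f″))/2 : f′, f″ ∈ K, Λ(f′) = Λ(f″) } is finite. Consider the convex program: minimize e over e ∈ ℝ, e′, e″ ∈ ℝ^{A×B}, vectors c^{(a⋆,b⋆)} ∈ ℝ^m, σ^{(a⋆,b⋆)} ∈ S^{I_{a⋆}}, τ^{(a⋆,b⋆)} ∈ S^{J_{b⋆}} (a⋆ ∈ A, b⋆ ∈ B), subject to e′_{a⋆,b⋆} + e″_{a⋆,b⋆} ≤ 2e, ⟦Σ_{i∈I_{a⋆}} σ_i^{(a⋆,b⋆)} γ_i − Σ_{k=1}^m c_k^{(a⋆,b⋆)} λ_k⟧_K ≤ e′_{a⋆,b⋆},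 and ⟦− Σ_{j∈J_{b⋆}} τ_j^{(a⋆,b⋆)} γ_j + Σ_{k=1}^m c_k^{(a⋆,b⋆)} λ_k⟧_K ≤ e″_{a⋆,b⋆} for all a⋆ ∈ A, b⋆ ∈ B. Then the optimal value of this program equals e_♭, and for any optimal solution, the sup-inf-affine functional δ(y) := max_{a∈A} min_{b∈B} ( (ê − ê″_{a,b}) + Σ_{k=1}^m ĉ_k^{(a,b)} y_k ) satisfies sup_{f∈K} |γ(f) − δ(Λ(f))| ≤ e_♭, i.e. δ is an optimal estimation functional. -/
open Finset

section Aux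

private lemma sSup_shift {t : ℝ} {S1 S2 : Set ℝ} (h1 : S1.Nonempty) (h2 : BddAbove S2)
    (h : ∀ r ∈ S1, r + t ∈ S2) : sSup S1 + t ≤ sSup S2 := by
  have : sSup S1 ≤ sSup S2 - t :=
    csSup_le h1 (fun r hr => by have := le_csSup h2 (h r hr); linarith)
  linarith

private lemma exists_smul_mem_of_mem_span {E : Type*} [AddCommGroup E] [Module ℝ E]
    {C : Set E} (hC : Convex ℝ C) (h0 : (0:E) ∈ C) (hsymm : ∀ x ∈ C, -x ∈ C)
    {x : E} (hx : x ∈ Submodule.span ℝ C) : ∃ t : ℝ, 0 < t ∧ t • x ∈ C := by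
  obtain ⟨c, hc, rfl⟩ := Submodule.mem_span_set.mp hx
  classical
  set s := c.support with hs
  set L := ∑ u ∈ s, |c u| with hL
  have hL0 : 0 ≤ L := Finset.sum_nonneg fun u _ => abs_nonneg _
  rcases eq_or_lt_of_le hL0 with hLz | hLpos
  · -- all coefficients zero
    have hall : ∀ u ∈ s, c u = 0 := by
      intro u hu
      have := (Finset.sum_eq_zero_iff_of_nonneg (fun u _ => abs_nonneg (c u))).mp hLz.symm u hu
      exact abs_eq_zero.mp this
    have : (c.sum fun mi r => r • mi) = 0 := by
      rw [Finsupp.sum]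
      exact Finset.sum_eq_zero fun u hu => by rw [hall u hu, zero_smul]
    exact ⟨1, one_pos, by rw [this, smul_zero]; exact h0⟩
  · refine ⟨L⁻¹, inv_pos.mpr hLpos, ?_⟩
    have key : L⁻¹ • (c.sum fun mi r => r • mi)
        = ∑ u ∈ s, (|c u| / L) • (if 0 ≤ c u then u else -u) := by
      rw [Finsupp.sum, Finset.smul_sum]
      refine Finset.sum_congr rfl fun u _ => ?_
      by_cases hcu : 0 ≤ c u
      · rw [if_pos hcu, abs_of_nonneg hcu, smul_smul, div_eq_inv_mul]
      · rw [if_neg hcu, abs_of_neg (lt_of_not_ge hcu), smul_smul, smul_neg, neg_div,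
          neg_smul, neg_neg, div_eq_inv_mul]
    rw [key]
    refine hC.sum_mem (fun u _ => by positivity) ?_ (fun u hu => ?_)
    · rw [← Finset.sum_div, ← hL, div_self (ne_of_gt hLpos)]
    · have hu' : u ∈ C := hc hu
      by_cases hcu : 0 ≤ c u
      · rw [if_pos hcu]; exact hu'
      · rw [if_neg hcu]; exact hsymm u hu'

private lemma zero_mem_interior_of_span {n : Type*} [Fintype n] [DecidableEq n]
    {C : Set (n → ℝ)} (hC : Convex ℝ C) (h0 : (0:n→ℝ) ∈ C) (hsymm : ∀ x ∈ C, -x ∈ C)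
    (hspan : Submodule.span ℝ C = ⊤) : (0:n→ℝ) ∈ interior C := by
  classical
  have habs : ∀ k : n, ∃ t : ℝ, 0 < t ∧ t • (Pi.single k 1 : n → ℝ) ∈ C := fun k =>
    exists_smul_mem_of_mem_span hC h0 hsymm (by rw [hspan]; exact Submodule.mem_top)
  choose t ht htm using habs
  set g : (n → ℝ) → ℝ := fun x => ∑ k, |x k| * (t k)⁻¹ with hg
  have hgc : Continuous g := by
    refine continuous_finset_sum _ fun k _ => ?_
    exact ((continuous_apply k).abs.mul continuous_const)
  have hopen : IsOpen (g ⁻¹' Set.Iio 1) := hgc.isOpen_preimage _ isOpen_Iio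
  have h0U : (0:n→ℝ) ∈ g ⁻¹' Set.Iio 1 := by
    simp only [Set.mem_preimage, Set.mem_Iio, hg]
    simp
  refine mem_interior.mpr ⟨g ⁻¹' Set.Iio 1, ?_, hopen, h0U⟩
  intro x hx
  have hgx : g x < 1 := hx
  have hgx0 : 0 ≤ g x := by
    rw [hg]
    exact Finset.sum_nonneg fun k _ => mul_nonneg (abs_nonneg _) (inv_nonneg.mpr (ht k).le)
  have hsingle : ∀ (k : n) (r : ℝ), r • (Pi.single k 1 : n → ℝ) = (Pi.single k r : n → ℝ) := fun k r => by
    ext j; by_cases hj : j = k <;> simp [Pi.single_apply, hj]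
  -- convex combination over Option n
  set w : Option n → ℝ := fun o => o.elim (1 - g x) (fun k => |x k| * (t k)⁻¹) with hw
  set z : Option n → (n → ℝ) := fun o => o.elim 0
    (fun k => if 0 ≤ x k then (Pi.single k (t k) : n → ℝ)
      else (-(Pi.single k (t k)) : n → ℝ)) with hz
  have hxeq : x = ∑ o : Option n, w o • z o := by
    rw [Fintype.sum_option]
    have hnone : w none • z none = 0 := by simp [hw, hz]
    rw [hnone, zero_add]
    have : ∀ k : n, w (some k) • z (some k) = Pi.single k (x k) := by
      intro k
      have htk : t k ≠ 0 := ne_of_gt (ht k)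
      by_cases hxk : 0 ≤ x k
      · simp only [hw, hz, Option.elim, if_pos hxk]
        rw [abs_of_nonneg hxk, ← hsingle k (t k), smul_smul, mul_assoc,
          inv_mul_cancel₀ htk, mul_one, hsingle]
      · simp only [hw, hz, Option.elim, if_neg hxk]
        rw [abs_of_neg (lt_of_not_ge hxk), ← hsingle k (t k), smul_neg, smul_smul, mul_assoc,
          inv_mul_cancel₀ htk, mul_one, neg_smul, neg_neg, hsingle]
    rw [Finset.sum_congr rfl (fun k _ => this k)]
    exact (Finset.univ_sum_single x).symm
  rw [hxeq]
  refine hC.sum_mem (fun o _ => ?_) ?_ (fun o _ => ?_)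
  · cases o with
    | none => simp only [hw, Option.elim]; linarith
    | some k =>
      simp only [hw, Option.elim]
      exact mul_nonneg (abs_nonneg _) (inv_nonneg.mpr (ht k).le)
  · rw [Fintype.sum_option]
    simp only [hw, Option.elim]
    rw [hg]; ring
  · cases o with
    | none => exact h0
    | some k =>
      simp only [hz, Option.elim]
      by_cases hxk : 0 ≤ x k
      · rw [if_pos hxk, ← hsingle k (t k)]; exact htm k
      · rw [if_neg hxk, ← hsingle k (t k)]; exact hsymm _ (htm k)

end Aux
section Supergradient

open Filter Topology

private lemma exists_supergradient {E : Type*} [NormedAddCommGroup E] [NormedSpace ℝ E]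
    [FiniteDimensional ℝ E] {D : Set E} (h0 : (0:E) ∈ interior D)
    {V : E → ℝ} (hV : ConcaveOn ℝ D V) :
    ∃ φ : E →ₗ[ℝ] ℝ, ∀ x ∈ D, V x ≤ V 0 + φ x := by
  classical
  set hypo : Set (E × ℝ) := {p : E × ℝ | p.1 ∈ D ∧ p.2 ≤ V p.1} with hhypodef
  have hhypo : Convex ℝ hypo := hV.convex_hypograph
  have hVc : ContinuousOn V (interior D) := hV.continuousOn_interior
  have hcA : ContinuousAt V 0 := hVc.continuousAt (isOpen_interior.mem_nhds h0)
  have h1 : V ⁻¹' Set.Ioi (V 0 - 1) ∈ 𝓝 (0:E) :=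
    hcA (Ioi_mem_nhds (by linarith : V 0 - 1 < V 0))
  have h2 : interior D ∈ 𝓝 (0:E) := isOpen_interior.mem_nhds h0
  obtain ⟨ε, hε, hball⟩ := Metric.mem_nhds_iff.mp (Filter.inter_mem h1 h2)
  set U : Set (E × ℝ) := Metric.ball (0:E) ε ×ˢ Set.Iio (V 0 - 1) with hU
  have hUopen : IsOpen U := (Metric.isOpen_ball).prod isOpen_Iio
  have hUsub : U ⊆ hypo := by
    rintro ⟨x, r⟩ ⟨hx, hr⟩
    have hx' := hball hx
    exact ⟨interior_subset hx'.2, le_trans (le_of_lt hr) (by have := hx'.1; simp at this; linarith)⟩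
  have hUint : U ⊆ interior hypo := interior_maximal hUsub hUopen
  have hnm : ((0:E), V 0) ∉ interior hypo := by
    intro h
    obtain ⟨δ, hδ, hb⟩ := Metric.isOpen_iff.mp isOpen_interior _ h
    have hmem : ((0:E), V 0 + δ/2) ∈ Metric.ball ((0:E), V 0) δ := by
      rw [Metric.mem_ball, Prod.dist_eq]
      have e1 : dist (0:E) (0:E) = 0 := dist_self _
      have e2 : dist (V 0 + δ/2) (V 0) = δ/2 := by
        rw [Real.dist_eq, add_sub_cancel_left]
        exact abs_of_nonneg (by linarith)
      rw [e1, e2, max_eq_right (by linarith)]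
      linarith
    have := (hb hmem)
    have h3 : V 0 + δ/2 ≤ V 0 := (interior_subset this).2
    linarith
  obtain ⟨f, hf⟩ := geometric_hahn_banach_open_point hhypo.interior isOpen_interior hnm
  -- extend the strict inequality to all of hypo
  set z₀ : E × ℝ := ((0:E), V 0 - 2) with hz₀def
  have hz₀ : z₀ ∈ interior hypo := by
    refine hUint ⟨?_, ?_⟩
    · simp [Metric.mem_ball, hε, hz₀def]
    · simp only [Set.mem_Iio]; linarith
  have hext : ∀ p ∈ hypo, f p ≤ f ((0:E), V 0) := by
    intro p hp
    have key : ∀ a : ℝ, a ∈ Set.Ioc (0:ℝ) 1 → a * f z₀ + (1 - a) * f p < f ((0:E), V 0) := by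
      rintro a ⟨ha, ha1⟩
      have hmem := hhypo.combo_interior_closure_mem_interior (b := 1 - a) hz₀
        (subset_closure hp) ha (by linarith) (by ring)
      have := hf _ hmem
      rwa [map_add, map_smul, map_smul, smul_eq_mul, smul_eq_mul] at this
    have hlim : Tendsto (fun a : ℝ => a * f z₀ + (1 - a) * f p) (𝓝[>] 0) (𝓝 (f p)) := by
      have hc : Continuous (fun a : ℝ => a * f z₀ + (1 - a) * f p) := by continuity
      have := hc.tendsto 0
      simp only [zero_mul, sub_zero, one_mul, zero_add] at this
      exact this.mono_left nhdsWithin_le_nhds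
    refine le_of_tendsto hlim ?_
    filter_upwards [Ioc_mem_nhdsGT_of_mem (Set.mem_Ico.mpr ⟨le_refl (0:ℝ), zero_lt_one⟩)]
      with a ha using (key a ha).le
  set β : ℝ := f ((0:E), 1) with hβdef
  have hdecomp : ∀ (x : E) (r : ℝ), f (x, r) = f (x, 0) + r * β := by
    intro x r
    have : (x, r) = (x, (0:ℝ)) + r • ((0:E), (1:ℝ)) := by
      simp [Prod.ext_iff]
    rw [this, map_add, map_smul, smul_eq_mul]
  have hf00 : f ((0:E), (0:ℝ)) = 0 := by
    have : ((0:E), (0:ℝ)) = (0 : E × ℝ) := rfl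
    rw [this, map_zero]
  have h0D : (0:E) ∈ D := interior_subset h0
  have hβ0 : 0 ≤ β := by
    have hm : ((0:E), V 0 - 1) ∈ hypo := ⟨h0D, by show V 0 - 1 ≤ V 0; linarith⟩
    have h2 := hext _ hm
    rw [hdecomp 0 (V 0 - 1), hdecomp 0 (V 0), hf00] at h2
    ring_nf at h2
    nlinarith [h2]
  have hβpos : 0 < β := by
    rcases hβ0.lt_or_eq with h | h
    · exact h
    · exfalso
      have h2 := hf z₀ hz₀
      rw [hz₀def] at h2
      rw [hdecomp 0 (V 0 - 2), hdecomp 0 (V 0), hf00, ← h] at h2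
      simp at h2
  refine ⟨-(β⁻¹) • ((f : E × ℝ →ₗ[ℝ] ℝ).comp (LinearMap.inl ℝ E ℝ)), ?_⟩
  intro x hx
  have hxh : (x, V x) ∈ hypo := ⟨hx, le_rfl⟩
  have := hext _ hxh
  rw [hdecomp x (V x), hdecomp 0 (V 0), hf00, zero_add] at this
  have h' : V x ≤ V 0 - f (x, 0) * β⁻¹ := by
    have h2 := mul_le_mul_of_nonneg_right this (inv_nonneg.mpr hβ0)
    rw [add_mul, mul_assoc, mul_assoc, mul_inv_cancel₀ (ne_of_gt hβpos), mul_one, mul_one] at h2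
    linarith
  simp only [LinearMap.neg_apply, LinearMap.smul_apply, LinearMap.comp_apply,
    LinearMap.inl_apply, neg_smul, smul_eq_mul, ContinuousLinearMap.coe_coe]
  nlinarith [h']

end Supergradient
section Construct

private lemma inf'_add_const {α : Type*} (s : Finset α) (H : s.Nonempty) (g : α → ℝ) (t : ℝ) :
    s.inf' H (fun i => g i + t) = s.inf' H g + t := by
  obtain ⟨i₀, hi₀, h⟩ := Finset.exists_mem_eq_inf' H g
  apply le_antisymm
  · exact (Finset.inf'_le _ hi₀).trans (by rw [h])
  · apply Finset.le_inf'
    intro i hi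
    have := Finset.inf'_le g hi
    linarith

private lemma sup'_sub_const {α : Type*} (s : Finset α) (H : s.Nonempty) (g : α → ℝ) (t : ℝ) :
    s.sup' H (fun i => g i - t) = s.sup' H g - t := by
  obtain ⟨i₀, hi₀, h⟩ := Finset.exists_mem_eq_sup' H g
  apply le_antisymm
  · apply Finset.sup'_le
    intro i hi
    have := Finset.le_sup' g hi
    linarith
  · rw [h]
    have : g i₀ - t ≤ s.sup' H (fun i => g i - t) := Finset.le_sup' (fun i => g i - t) hi₀
    linarith

private lemma inf'_mono_fun {α : Type*} {s : Finset α} (H : s.Nonempty) {g g' : α → ℝ}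
    (h : ∀ i ∈ s, g i ≤ g' i) : s.inf' H g ≤ s.inf' H g' := by
  apply Finset.le_inf'
  intro i hi
  exact (Finset.inf'_le g hi).trans (h i hi)

private lemma sup'_mono_fun {α : Type*} {s : Finset α} (H : s.Nonempty) {g g' : α → ℝ}
    (h : ∀ i ∈ s, g i ≤ g' i) : s.sup' H g ≤ s.sup' H g' := by
  apply Finset.sup'_le
  intro i hi
  exact (h i hi).trans (Finset.le_sup' g' hi)

private lemma lin_pi_decomp {n : Type*} [Fintype n] [DecidableEq n]
    (ψ : (n → ℝ) →ₗ[ℝ] ℝ) (p : n → ℝ) : ψ p = ∑ k, p k * ψ (Pi.single k 1) := by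
  conv_lhs => rw [← Finset.univ_sum_single p]
  rw [map_sum]
  refine Finset.sum_congr rfl fun k _ => ?_
  have : (Pi.single k (p k) : n → ℝ) = p k • (Pi.single k 1 : n → ℝ) := by
    ext j; by_cases hj : j = k <;> simp [Pi.single_apply, hj]
  rw [this, map_smul, smul_eq_mul]

end Construct
section Main

private lemma construct_feasible {F : Type*} [AddCommGroup F] [Module ℝ F] {m : ℕ}
    (lam : Fin m → F →ₗ[ℝ] ℝ) (K : Set F) (hK : Convex ℝ K) (h0K : (0:F) ∈ K)
    {ι : Type*} (γi : ι → F →ₗ[ℝ] ℝ) (γ : F → ℝ)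
    (S : Finset ι) (hS : S.Nonempty) (T : Finset ι) (hT : T.Nonempty)
    (hSγ : ∀ f, S.inf' hS (fun i => γi i f) ≤ γ f)
    (hTγ : ∀ f, γ f ≤ T.sup' hT (fun j => γi j f))
    (eflat : ℝ)
    (heflat : ∀ f' ∈ K, ∀ f'' ∈ K, (∀ k, lam k f' = lam k f'') → γ f' - γ f'' ≤ 2 * eflat) :
    ∃ (σ τ : ι → ℝ) (c : Fin m → ℝ) (e' e'' : ℝ),
      (∀ i, 0 ≤ σ i) ∧ (∀ i ∉ S, σ i = 0) ∧ (∑ i ∈ S, σ i = 1) ∧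
      (∀ j, 0 ≤ τ j) ∧ (∀ j ∉ T, τ j = 0) ∧ (∑ j ∈ T, τ j = 1) ∧
      e' + e'' ≤ 2 * eflat ∧
      (∀ f ∈ K, (∑ i ∈ S, σ i * γi i f) - ∑ k, c k * lam k f ≤ e') ∧
      (∀ f ∈ K, -(∑ j ∈ T, τ j * γi j f) + ∑ k, c k * lam k f ≤ e'') := by
  classical
  -- the observation map and the difference body
  set Lm : F →ₗ[ℝ] (Fin m → ℝ) := LinearMap.pi lam with hLmdef
  set Y0 : Set (Fin m → ℝ) := {y | ∃ f' ∈ K, ∃ f'' ∈ K, y = Lm f' - Lm f''} with hY0def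
  have hY0conv : Convex ℝ Y0 := by
    rintro y1 ⟨f1, hf1, g1, hg1, rfl⟩ y2 ⟨f2, hf2, g2, hg2, rfl⟩ a b ha hb hab
    exact ⟨a • f1 + b • f2, hK hf1 hf2 ha hb hab, a • g1 + b • g2, hK hg1 hg2 ha hb hab, by
      simp only [map_add, map_smul]; module⟩
  have h0Y0 : (0 : Fin m → ℝ) ∈ Y0 := ⟨0, h0K, 0, h0K, by simp⟩
  have hY0symm : ∀ y ∈ Y0, -y ∈ Y0 := by
    rintro y ⟨f', hf', f'', hf'', rfl⟩
    exact ⟨f'', hf'', f', hf', by abel⟩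
  set W : Submodule ℝ (Fin m → ℝ) := Submodule.span ℝ Y0 with hWdef
  obtain ⟨W', hWc⟩ := Submodule.exists_isCompl W
  set P : (Fin m → ℝ) →ₗ[ℝ] (Fin m → ℝ) :=
    W.subtype ∘ₗ (Submodule.linearProjOfIsCompl W W' hWc) with hPdef
  have hPW : ∀ y ∈ W, P y = y := by
    intro y hy
    have : Submodule.linearProjOfIsCompl W W' hWc ((⟨y, hy⟩ : W) : Fin m → ℝ) = ⟨y, hy⟩ :=
      Submodule.linearProjOfIsCompl_apply_left hWc ⟨y, hy⟩
    simp only [hPdef, LinearMap.comp_apply]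
    rw [this]
    rfl
  have hPY0 : ∀ y ∈ Y0, P y = y := fun y hy => hPW y (Submodule.subset_span hy)
  have hPW' : ∀ y ∈ W', P y = 0 := by
    intro y hy
    simp only [hPdef, LinearMap.comp_apply]
    rw [show Submodule.linearProjOfIsCompl W W' hWc y = 0 from
      Submodule.linearProjOfIsCompl_apply_right' hWc hy]
    rfl
  set Dy : Set (Fin m → ℝ) := P ⁻¹' Y0 with hDydef
  have hDyconv : Convex ℝ Dy := hY0conv.linear_preimage P
  have h0Dy : (0 : Fin m → ℝ) ∈ Dy := by
    simp only [hDydef, Set.mem_preimage, map_zero]; exact h0Y0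
  have hDysymm : ∀ y ∈ Dy, -y ∈ Dy := by
    intro y hy
    simp only [hDydef, Set.mem_preimage, map_neg]
    exact hY0symm _ hy
  have hY0Dy : Y0 ⊆ Dy := fun y hy => by
    simp only [hDydef, Set.mem_preimage]; rw [hPY0 y hy]; exact hy
  have hDyspan : Submodule.span ℝ Dy = ⊤ := by
    rw [eq_top_iff]
    intro y _
    obtain ⟨w, hw, w', hw', rfl⟩ := Submodule.mem_sup.mp
      (by rw [hWc.sup_eq_top]; exact Submodule.mem_top : y ∈ W ⊔ W')
    refine Submodule.add_mem _ ?_ ?_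
    · exact Submodule.span_mono hY0Dy (by rw [← hWdef]; exact hw)
    · refine Submodule.subset_span ?_
      simp only [hDydef, Set.mem_preimage]
      rw [hPW' w' hw']
      exact h0Y0
  have h0intDy : (0 : Fin m → ℝ) ∈ interior Dy :=
    zero_mem_interior_of_span hDyconv h0Dy hDysymm hDyspan
  -- the perturbation function on X
  have hSat : S.attach.Nonempty := Finset.attach_nonempty_iff.mpr hS
  have hTat : T.attach.Nonempty := Finset.attach_nonempty_iff.mpr hT
  set E1 : F → ({ i // i ∈ S } → ℝ) → ℝ :=
    fun f p => S.attach.inf' hSat (fun i => γi i.1 f + p i) with hE1def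
  set E2 : F → ({ j // j ∈ T } → ℝ) → ℝ :=
    fun f q => T.attach.sup' hTat (fun j => γi j.1 f - q j) with hE2def
  set X := (({ i // i ∈ S } → ℝ) × ({ j // j ∈ T } → ℝ) × (Fin m → ℝ)) with hXdef
  set Els : X → Set ℝ := fun x =>
    {r | ∃ f' ∈ K, ∃ f'' ∈ K, Lm f' - Lm f'' = P x.2.2 ∧ r = E1 f' x.1 - E2 f'' x.2.1}
    with hElsdef
  set D : Set X := {x | x.2.2 ∈ Dy} with hDdef
  set V : X → ℝ := fun x => sSup (Els x) with hVdef
  have hDconv : Convex ℝ D := by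
    have := hDyconv.linear_preimage ((LinearMap.snd ℝ ({ j // j ∈ T } → ℝ) (Fin m → ℝ)).comp
      (LinearMap.snd ℝ ({ i // i ∈ S } → ℝ) _))
    exact this
  have h0D : (0 : X) ∈ D := h0Dy
  -- nonemptiness and boundedness of the value sets
  have hne : ∀ x ∈ D, (Els x).Nonempty := by
    intro x hx
    obtain ⟨f', hf', f'', hf'', hy⟩ := hx
    exact ⟨E1 f' x.1 - E2 f'' x.2.1, f', hf', f'', hf'', hy.symm, rfl⟩
  -- key estimates
  have hE1le : ∀ (f : F) (p : { i // i ∈ S } → ℝ),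
      E1 f p ≤ γ f + S.attach.sup' hSat p := by
    intro f p
    obtain ⟨i₁, hi₁, hmin⟩ := Finset.exists_mem_eq_inf' hS (fun i => γi i f)
    have h1 : E1 f p ≤ γi i₁ f + p ⟨i₁, hi₁⟩ :=
      Finset.inf'_le _ (Finset.mem_attach _ ⟨i₁, hi₁⟩)
    have h2 : p ⟨i₁, hi₁⟩ ≤ S.attach.sup' hSat p :=
      Finset.le_sup' p (Finset.mem_attach _ _)
    have h3 : γi i₁ f ≤ γ f := by
      have := hSγ f; rw [hmin] at this; linarith
    linarith
  have hE2le : ∀ (f : F) (q : { j // j ∈ T } → ℝ),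
      γ f - T.attach.sup' hTat q ≤ E2 f q := by
    intro f q
    obtain ⟨j₁, hj₁, hmax⟩ := Finset.exists_mem_eq_sup' hT (fun j => γi j f)
    have h1 : γi j₁ f - q ⟨j₁, hj₁⟩ ≤ E2 f q :=
      Finset.le_sup' (fun j : { j // j ∈ T } => γi j.1 f - q j)
        (Finset.mem_attach _ ⟨j₁, hj₁⟩)
    have h2 : q ⟨j₁, hj₁⟩ ≤ T.attach.sup' hTat q :=
      Finset.le_sup' q (Finset.mem_attach _ _)
    have h3 : γ f ≤ γi j₁ f := by
      have := hTγ f; rw [hmax] at this; linarith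
    linarith
  -- concavity inequalities for E1, E2
  have hconcE1 : ∀ (f1 f2 : F) (p1 p2 : { i // i ∈ S } → ℝ) (a b : ℝ), 0 ≤ a → 0 ≤ b →
      a * E1 f1 p1 + b * E1 f2 p2 ≤ E1 (a • f1 + b • f2) (a • p1 + b • p2) := by
    intro f1 f2 p1 p2 a b ha hb
    apply Finset.le_inf'
    intro i _
    have h1 : E1 f1 p1 ≤ γi i.1 f1 + p1 i := Finset.inf'_le _ (Finset.mem_attach _ i)
    have h2 : E1 f2 p2 ≤ γi i.1 f2 + p2 i := Finset.inf'_le _ (Finset.mem_attach _ i)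
    have e1 : γi i.1 (a • f1 + b • f2) + (a • p1 + b • p2) i
        = a * (γi i.1 f1 + p1 i) + b * (γi i.1 f2 + p2 i) := by
      simp only [map_add, map_smul, smul_eq_mul, Pi.add_apply, Pi.smul_apply]
      ring
    rw [e1]
    have := mul_le_mul_of_nonneg_left h1 ha
    have := mul_le_mul_of_nonneg_left h2 hb
    linarith
  have hconcE2 : ∀ (f1 f2 : F) (q1 q2 : { j // j ∈ T } → ℝ) (a b : ℝ), 0 ≤ a → 0 ≤ b →
      E2 (a • f1 + b • f2) (a • q1 + b • q2) ≤ a * E2 f1 q1 + b * E2 f2 q2 := by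
    intro f1 f2 q1 q2 a b ha hb
    apply Finset.sup'_le
    intro j _
    have h1 : γi j.1 f1 - q1 j ≤ E2 f1 q1 :=
      Finset.le_sup' (fun j : { j // j ∈ T } => γi j.1 f1 - q1 j) (Finset.mem_attach _ j)
    have h2 : γi j.1 f2 - q2 j ≤ E2 f2 q2 :=
      Finset.le_sup' (fun j : { j // j ∈ T } => γi j.1 f2 - q2 j) (Finset.mem_attach _ j)
    have e1 : γi j.1 (a • f1 + b • f2) - (a • q1 + b • q2) j
        = a * (γi j.1 f1 - q1 j) + b * (γi j.1 f2 - q2 j) := by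
      simp only [map_add, map_smul, smul_eq_mul, Pi.add_apply, Pi.smul_apply]
      ring
    rw [e1]
    have := mul_le_mul_of_nonneg_left h1 ha
    have := mul_le_mul_of_nonneg_left h2 hb
    linarith
  -- the slice estimate : elements over the zero fibre are bounded by 2 * eflat + shifts
  have hslice : ∀ (f' f'' : F), f' ∈ K → f'' ∈ K → Lm f' - Lm f'' = 0 →
      ∀ (p : { i // i ∈ S } → ℝ) (q : { j // j ∈ T } → ℝ),
      E1 f' p - E2 f'' q ≤ 2 * eflat + S.attach.sup' hSat p + T.attach.sup' hTat q := by
    intro f' f'' hf' hf'' hd p q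
    have hlam : ∀ k, lam k f' = lam k f'' := by
      intro k
      have := congr_fun hd k
      simp only [hLmdef, LinearMap.pi_apply, Pi.sub_apply, Pi.zero_apply] at this
      linarith
    have h0 := heflat f' hf' f'' hf'' hlam
    have h1 := hE1le f' p
    have h2 := hE2le f'' q
    linarith
  have hbdd : ∀ x ∈ D, BddAbove (Els x) := by
    intro x hx
    obtain ⟨g', hg', g'', hg'', hgy⟩ := hx
    refine ⟨2 * (2 * eflat + S.attach.sup' hSat x.1 + T.attach.sup' hTat x.2.1)
      - (E1 g'' x.1 - E2 g' x.2.1), ?_⟩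
    rintro r ⟨f', hf', f'', hf'', hdiff, rfl⟩
    set h1 : F := (1/2 : ℝ) • f' + (1/2 : ℝ) • g'' with hh1
    set h2 : F := (1/2 : ℝ) • f'' + (1/2 : ℝ) • g' with hh2
    have hh1K : h1 ∈ K := hK hf' hg'' (by norm_num) (by norm_num) (by norm_num)
    have hh2K : h2 ∈ K := hK hf'' hg' (by norm_num) (by norm_num) (by norm_num)
    have hdz : Lm h1 - Lm h2 = 0 := by
      simp only [hh1, hh2, map_add, map_smul]
      have e1 : Lm f' - Lm f'' = P x.2.2 := hdiff
      have e2 : Lm g' - Lm g'' = P x.2.2 := hgy.symm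
      have : Lm f' - Lm f'' = Lm g' - Lm g'' := by rw [e1, e2]
      ext k
      have := congr_fun this k
      simp only [Pi.sub_apply] at this
      simp only [Pi.sub_apply, Pi.add_apply, Pi.smul_apply, Pi.zero_apply, smul_eq_mul]
      linarith
    have hs := hslice h1 h2 hh1K hh2K hdz x.1 x.2.1
    have hc1 : (1/2 : ℝ) * E1 f' x.1 + (1/2 : ℝ) * E1 g'' x.1 ≤ E1 h1 x.1 := by
      have := hconcE1 f' g'' x.1 x.1 (1/2) (1/2) (by norm_num) (by norm_num)
      have e : ((1/2 : ℝ) • x.1 + (1/2 : ℝ) • x.1) = x.1 := by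
        rw [← add_smul]; norm_num
      rw [e] at this
      exact this
    have hc2 : E2 h2 x.2.1 ≤ (1/2 : ℝ) * E2 f'' x.2.1 + (1/2 : ℝ) * E2 g' x.2.1 := by
      have := hconcE2 f'' g' x.2.1 x.2.1 (1/2) (1/2) (by norm_num) (by norm_num)
      have e : ((1/2 : ℝ) • x.2.1 + (1/2 : ℝ) • x.2.1) = x.2.1 := by
        rw [← add_smul]; norm_num
      rw [e] at this
      exact this
    linarith
  -- concavity of V
  have hkey : ∀ (x y : X), x ∈ D → y ∈ D → ∀ (a b : ℝ), 0 ≤ a → 0 ≤ b → a + b = 1 →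
      ∀ r1 ∈ Els x, ∀ r2 ∈ Els y, a * r1 + b * r2 ≤ V (a • x + b • y) := by
    rintro x y hx hy a b ha hb hab r1 ⟨f1, hf1, g1, hg1, hd1, rfl⟩ r2 ⟨f2, hf2, g2, hg2, hd2, rfl⟩
    have hxyD : a • x + b • y ∈ D := hDconv hx hy ha hb hab
    have hcomp : (a • x + b • y).2.2 = a • x.2.2 + b • y.2.2 := rfl
    have hcomp1 : (a • x + b • y).1 = a • x.1 + b • y.1 := rfl
    have hcomp21 : (a • x + b • y).2.1 = a • x.2.1 + b • y.2.1 := rfl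
    have hmem : E1 (a • f1 + b • f2) (a • x.1 + b • y.1)
        - E2 (a • g1 + b • g2) (a • x.2.1 + b • y.2.1) ∈ Els (a • x + b • y) := by
      refine ⟨a • f1 + b • f2, hK hf1 hf2 ha hb hab, a • g1 + b • g2, hK hg1 hg2 ha hb hab,
        ?_, by rw [hcomp1, hcomp21]⟩
      rw [hcomp, map_add, map_smul, map_smul, map_add, map_smul, map_smul, map_add,
        map_smul, map_smul]
      rw [← hd1, ← hd2]
      module
    have h1 := hconcE1 f1 f2 x.1 y.1 a b ha hb
    have h2 := hconcE2 g1 g2 x.2.1 y.2.1 a b ha hb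
    have := le_csSup (hbdd _ hxyD) hmem
    linarith
  have hconcV : ConcaveOn ℝ D V := by
    refine ⟨hDconv, ?_⟩
    intro x hx y hy a b ha hb hab
    rcases eq_or_lt_of_le ha with haz | hap
    · have haz' : a = 0 := haz.symm
      subst haz'
      have hb1 : b = 1 := by linarith
      subst hb1
      simp
    rcases eq_or_lt_of_le hb with hbz | hbp
    · have hbz' : b = 0 := hbz.symm
      subst hbz'
      have ha1 : a = 1 := by linarith
      subst ha1
      simp
    have hxyD : a • x + b • y ∈ D := hDconv hx hy ha hb hab
    have hstep : ∀ r1 ∈ Els x, a * r1 + b * V y ≤ V (a • x + b • y) := by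
      intro r1 hr1
      have : V y ≤ (V (a • x + b • y) - a * r1) / b := by
        apply csSup_le (hne y hy)
        intro r2 hr2
        rw [le_div_iff₀ hbp]
        have := hkey x y hx hy a b ha hb hab r1 hr1 r2 hr2
        linarith
      rw [le_div_iff₀ hbp] at this
      linarith
    have : V x ≤ (V (a • x + b • y) - b * V y) / a := by
      apply csSup_le (hne x hx)
      intro r1 hr1
      rw [le_div_iff₀ hap]
      have := hstep r1 hr1
      linarith
    rw [le_div_iff₀ hap] at this
    simp only [smul_eq_mul]
    linarith
  -- V 0 bounds
  have hV0le : V 0 ≤ 2 * eflat := by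
    apply csSup_le (hne 0 h0D)
    rintro r ⟨f', hf', f'', hf'', hd, rfl⟩
    have hd0 : Lm f' - Lm f'' = 0 := by
      rw [hd]; show P (0 : X).2.2 = 0; rw [show ((0:X).2.2 : Fin m → ℝ) = 0 from rfl, map_zero]
    have := hslice f' f'' hf' hf'' hd0 (0 : X).1 (0 : X).2.1
    have e1 : S.attach.sup' hSat ((0:X).1) = 0 := Finset.sup'_const _ _
    have e2 : T.attach.sup' hTat ((0:X).2.1) = 0 := Finset.sup'_const _ _
    rw [e1, e2] at this
    linarith
  -- supergradient
  have h0intD : (0 : X) ∈ interior D := by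
    refine mem_interior.mpr ⟨(fun x : X => x.2.2) ⁻¹' (interior Dy), ?_, ?_, ?_⟩
    · intro x hx
      show x.2.2 ∈ Dy
      exact interior_subset hx
    · exact (continuous_snd.comp continuous_snd).isOpen_preimage _ isOpen_interior
    · show (0 : X).2.2 ∈ interior Dy
      exact h0intDy
  obtain ⟨φ, hφ⟩ := exists_supergradient h0intD hconcV
  -- shift identities for E1, E2
  have hE1eq : ∀ (f : F) (p p' : { i // i ∈ S } → ℝ) (t : ℝ), (∀ i, p' i = p i + t) →
      E1 f p' = E1 f p + t := by
    intro f p p' t hpt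
    simp only [hE1def]
    have e : (fun i : { i // i ∈ S } => γi i.1 f + p' i)
        = fun i : { i // i ∈ S } => (γi i.1 f + p i) + t := by
      funext i; rw [hpt i]; ring
    rw [e, inf'_add_const]
  have hE2eq : ∀ (f : F) (q q' : { j // j ∈ T } → ℝ) (t : ℝ), (∀ j, q' j = q j + t) →
      E2 f q' = E2 f q - t := by
    intro f q q' t hqt
    simp only [hE2def]
    have e : (fun j : { j // j ∈ T } => γi j.1 f - q' j)
        = fun j : { j // j ∈ T } => (γi j.1 f - q j) - t := by
      funext j; rw [hqt j]; ring
    rw [e, sup'_sub_const]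
  -- monotone comparison of V
  have hVmono : ∀ x1 x2 : X, x1 ∈ D → x2.2.2 = x1.2.2 → (∀ i, x1.1 i ≤ x2.1 i) →
      (∀ j, x1.2.1 j ≤ x2.2.1 j) → V x1 ≤ V x2 := by
    intro x1 x2 hx1 heq hp hq
    have hx2 : x2 ∈ D := by show x2.2.2 ∈ Dy; rw [heq]; exact hx1
    apply csSup_le (hne x1 hx1)
    rintro r ⟨f', hf', f'', hf'', hd, rfl⟩
    have hmem : E1 f' x2.1 - E2 f'' x2.2.1 ∈ Els x2 :=
      ⟨f', hf', f'', hf'', by rw [heq]; exact hd, rfl⟩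
    have h1 : E1 f' x1.1 ≤ E1 f' x2.1 := by
      simp only [hE1def]
      exact inf'_mono_fun hSat (fun i _ => by have := hp i; linarith)
    have h2 : E2 f'' x2.2.1 ≤ E2 f'' x1.2.1 := by
      simp only [hE2def]
      exact sup'_mono_fun hTat (fun j _ => by have := hq j; linarith)
    exact le_trans (by linarith) (le_csSup (hbdd x2 hx2) hmem)
  -- components of φ
  set σ' : { i // i ∈ S } → ℝ :=
    fun i => φ ((Pi.single i 1 : { i // i ∈ S } → ℝ), 0, 0) with hσ'def
  set τ' : { j // j ∈ T } → ℝ :=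
    fun j => φ (0, (Pi.single j 1 : { j // j ∈ T } → ℝ), 0) with hτ'def
  set c : Fin m → ℝ := fun k => φ (0, 0, (Pi.single k 1 : Fin m → ℝ)) with hcdef
  have hφdec : ∀ (p : { i // i ∈ S } → ℝ) (q : { j // j ∈ T } → ℝ) (y : Fin m → ℝ),
      φ (p, q, y) = (∑ i, p i * σ' i) + (∑ j, q j * τ' j) + (∑ k, y k * c k) := by
    intro p q y
    have hsplit : ((p, q, y) : X) = ((p, 0, 0) : X) + ((0, q, 0) : X) + ((0, 0, y) : X) := by
      simp [Prod.ext_iff]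
    rw [hsplit, map_add, map_add]
    have e1 : φ ((p, 0, 0) : X) = ∑ i, p i * σ' i := by
      have h := lin_pi_decomp (φ.comp (LinearMap.inl ℝ ({ i // i ∈ S } → ℝ)
        (({ j // j ∈ T } → ℝ) × (Fin m → ℝ)))) p
      simp only [LinearMap.comp_apply, LinearMap.inl_apply, smul_eq_mul] at h
      rw [hσ'def]
      exact h
    have e2 : φ ((0, q, 0) : X) = ∑ j, q j * τ' j := by
      have h := lin_pi_decomp (φ.comp ((LinearMap.inr ℝ ({ i // i ∈ S } → ℝ)
        (({ j // j ∈ T } → ℝ) × (Fin m → ℝ))).comp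
        (LinearMap.inl ℝ ({ j // j ∈ T } → ℝ) (Fin m → ℝ)))) q
      simp only [LinearMap.comp_apply, LinearMap.inl_apply, LinearMap.inr_apply,
        smul_eq_mul] at h
      rw [hτ'def]
      exact h
    have e3 : φ ((0, 0, y) : X) = ∑ k, y k * c k := by
      have h := lin_pi_decomp (φ.comp ((LinearMap.inr ℝ ({ i // i ∈ S } → ℝ)
        (({ j // j ∈ T } → ℝ) × (Fin m → ℝ))).comp
        (LinearMap.inr ℝ ({ j // j ∈ T } → ℝ) (Fin m → ℝ)))) y
      simp only [LinearMap.comp_apply, LinearMap.inl_apply, LinearMap.inr_apply,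
        smul_eq_mul] at h
      rw [hcdef]
      exact h
    rw [e1, e2, e3]
  -- nonnegativity of σ'
  have hσ'nn : ∀ i, 0 ≤ σ' i := by
    intro i
    set xt : X := ((Pi.single i 1 : { i // i ∈ S } → ℝ), 0, 0) with hxtdef
    have hxtD : xt ∈ D := by show (0 : Fin m → ℝ) ∈ Dy; exact h0Dy
    have h1 : V 0 ≤ V xt := by
      refine hVmono 0 xt h0D rfl (fun i' => ?_) (fun j => le_rfl)
      show (0:ℝ) ≤ (Pi.single i 1 : { i // i ∈ S } → ℝ) i'
      rw [Pi.single_apply]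
      split <;> norm_num
    have h2 : V xt ≤ V 0 + φ xt := hφ xt hxtD
    have h3 : φ xt = σ' i := by rw [hσ'def]
    linarith
  have hτ'nn : ∀ j, 0 ≤ τ' j := by
    intro j
    set xt : X := (0, (Pi.single j 1 : { j // j ∈ T } → ℝ), 0) with hxtdef
    have hxtD : xt ∈ D := by show (0 : Fin m → ℝ) ∈ Dy; exact h0Dy
    have h1 : V 0 ≤ V xt := by
      refine hVmono 0 xt h0D rfl (fun i => le_rfl) (fun j' => ?_)
      show (0:ℝ) ≤ (Pi.single j 1 : { j // j ∈ T } → ℝ) j'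
      rw [Pi.single_apply]
      split <;> norm_num
    have h2 : V xt ≤ V 0 + φ xt := hφ xt hxtD
    have h3 : φ xt = τ' j := by rw [hτ'def]
    linarith
  -- shift identity for V in the constant directions
  have hVshift1 : ∀ t : ℝ, V (((fun _ => t) : { i // i ∈ S } → ℝ), 0, 0) = V 0 + t := by
    intro t
    set xt : X := (((fun _ => t) : { i // i ∈ S } → ℝ), 0, 0) with hxtdef
    have hxtD : xt ∈ D := by show (0 : Fin m → ℝ) ∈ Dy; exact h0Dy
    apply le_antisymm
    · have h := sSup_shift (t := -t) (hne xt hxtD) (hbdd 0 h0D) ?_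
      · show V xt ≤ V 0 + t
        have : V xt + -t ≤ V 0 := h
        linarith
      · rintro r ⟨f', hf', f'', hf'', hd, rfl⟩
        refine ⟨f', hf', f'', hf'', hd, ?_⟩
        have e := hE1eq f' (0 : { i // i ∈ S } → ℝ) (fun _ => t) t (fun i => by simp)
        simp only [hxtdef, Prod.fst_zero, Prod.snd_zero]
        rw [e]
        ring
    · have h := sSup_shift (t := t) (hne 0 h0D) (hbdd xt hxtD) ?_
      · show V 0 + t ≤ V xt
        exact h
      · rintro r ⟨f', hf', f'', hf'', hd, rfl⟩
        refine ⟨f', hf', f'', hf'', hd, ?_⟩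
        have e := hE1eq f' (0 : { i // i ∈ S } → ℝ) (fun _ => t) t (fun i => by simp)
        simp only [hxtdef, Prod.fst_zero, Prod.snd_zero]
        rw [e]
        ring
  have hVshift2 : ∀ t : ℝ, V (0, ((fun _ => t) : { j // j ∈ T } → ℝ), 0) = V 0 + t := by
    intro t
    set xt : X := (0, ((fun _ => t) : { j // j ∈ T } → ℝ), 0) with hxtdef
    have hxtD : xt ∈ D := by show (0 : Fin m → ℝ) ∈ Dy; exact h0Dy
    apply le_antisymm
    · have h := sSup_shift (t := -t) (hne xt hxtD) (hbdd 0 h0D) ?_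
      · show V xt ≤ V 0 + t
        have : V xt + -t ≤ V 0 := h
        linarith
      · rintro r ⟨f', hf', f'', hf'', hd, rfl⟩
        refine ⟨f', hf', f'', hf'', hd, ?_⟩
        have e := hE2eq f'' (0 : { j // j ∈ T } → ℝ) (fun _ => t) t (fun j => by simp)
        simp only [hxtdef, Prod.fst_zero, Prod.snd_zero]
        rw [e]
        ring
    · have h := sSup_shift (t := t) (hne 0 h0D) (hbdd xt hxtD) ?_
      · show V 0 + t ≤ V xt
        exact h
      · rintro r ⟨f', hf', f'', hf'', hd, rfl⟩
        refine ⟨f', hf', f'', hf'', hd, ?_⟩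
        have e := hE2eq f'' (0 : { j // j ∈ T } → ℝ) (fun _ => t) t (fun j => by simp)
        simp only [hxtdef, Prod.fst_zero, Prod.snd_zero]
        rw [e]
        ring
  -- sums of σ', τ' equal 1
  have hσ'sum : ∑ i, σ' i = 1 := by
    have hφc : ∀ t : ℝ, φ (((fun _ => t) : { i // i ∈ S } → ℝ), 0, 0) = t * ∑ i, σ' i := by
      intro t
      rw [hφdec]
      simp [Finset.mul_sum]
    have hp : ∀ t : ℝ, (((fun _ => t) : { i // i ∈ S } → ℝ), (0 : { j // j ∈ T } → ℝ),
        (0 : Fin m → ℝ)) ∈ D := fun t => by show (0 : Fin m → ℝ) ∈ Dy; exact h0Dy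
    have h1 := hφ _ (hp 1)
    have h2 := hφ _ (hp (-1))
    rw [hVshift1 1, hφc 1] at h1
    rw [hVshift1 (-1), hφc (-1)] at h2
    have : (1:ℝ) ≤ ∑ i, σ' i := by linarith
    have : ∑ i, σ' i ≤ 1 := by linarith
    linarith
  have hτ'sum : ∑ j, τ' j = 1 := by
    have hφc : ∀ t : ℝ, φ (0, ((fun _ => t) : { j // j ∈ T } → ℝ), 0) = t * ∑ j, τ' j := by
      intro t
      rw [hφdec]
      simp [Finset.mul_sum]
    have hp : ∀ t : ℝ, ((0 : { i // i ∈ S } → ℝ), ((fun _ => t) : { j // j ∈ T } → ℝ),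
        (0 : Fin m → ℝ)) ∈ D := fun t => by show (0 : Fin m → ℝ) ∈ Dy; exact h0Dy
    have h1 := hφ _ (hp 1)
    have h2 := hφ _ (hp (-1))
    rw [hVshift2 1, hφc 1] at h1
    rw [hVshift2 (-1), hφc (-1)] at h2
    have : (1:ℝ) ≤ ∑ j, τ' j := by linarith
    have : ∑ j, τ' j ≤ 1 := by linarith
    linarith
  -- the master inequality
  have hmaster : ∀ f' ∈ K, ∀ f'' ∈ K,
      ((∑ i, σ' i * γi i.1 f') - (∑ k, c k * lam k f'))
        + ((∑ k, c k * lam k f'') - (∑ j, τ' j * γi j.1 f'')) ≤ V 0 := by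
    intro f' hf' f'' hf''
    set p : { i // i ∈ S } → ℝ := fun i => -(γi i.1 f') with hpdef
    set q : { j // j ∈ T } → ℝ := fun j => γi j.1 f'' with hqdef
    set y : Fin m → ℝ := Lm f' - Lm f'' with hydef
    have hyY0 : y ∈ Y0 := ⟨f', hf', f'', hf'', rfl⟩
    have hyD : ((p, q, y) : X) ∈ D := by show y ∈ Dy; exact hY0Dy hyY0
    have hPy : P y = y := hPY0 y hyY0
    have h0el : (0:ℝ) ∈ Els ((p, q, y) : X) := by
      refine ⟨f', hf', f'', hf'', ?_, ?_⟩
      · show Lm f' - Lm f'' = P y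
        rw [hPy]
      · show (0:ℝ) = E1 f' p - E2 f'' q
        have e1 : E1 f' p = 0 := by
          simp only [hE1def]
          have e : (fun i : { i // i ∈ S } => γi i.1 f' + p i) = fun _ => (0:ℝ) := by
            funext i; rw [hpdef]; ring
          rw [e]
          exact Finset.inf'_const _ _
        have e2 : E2 f'' q = 0 := by
          simp only [hE2def]
          have e : (fun j : { j // j ∈ T } => γi j.1 f'' - q j) = fun _ => (0:ℝ) := by
            funext j; rw [hqdef]; ring
          rw [e]
          exact Finset.sup'_const _ _
        rw [e1, e2]
        ring
    have h1 : (0:ℝ) ≤ V ((p, q, y) : X) := le_csSup (hbdd _ hyD) h0el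
    have h2 := hφ _ hyD
    have h3 := hφdec p q y
    have ep : ∑ i, p i * σ' i = -(∑ i, σ' i * γi i.1 f') := by
      rw [← Finset.sum_neg_distrib]
      refine Finset.sum_congr rfl fun i _ => ?_
      rw [hpdef]; ring
    have eq' : ∑ j, q j * τ' j = ∑ j, τ' j * γi j.1 f'' := by
      refine Finset.sum_congr rfl fun j _ => ?_
      rw [hqdef]; ring
    have ey : ∑ k, y k * c k = (∑ k, c k * lam k f') - (∑ k, c k * lam k f'') := by
      rw [← Finset.sum_sub_distrib]
      refine Finset.sum_congr rfl fun k _ => ?_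
      have : y k = lam k f' - lam k f'' := by
        rw [hydef]
        simp [hLmdef, LinearMap.pi_apply]
      rw [this]; ring
    rw [h3, ep, eq', ey] at h2
    linarith
  -- final assembly
  set σf : ι → ℝ := fun i => if h : i ∈ S then σ' ⟨i, h⟩ else 0 with hσfdef
  set τf : ι → ℝ := fun j => if h : j ∈ T then τ' ⟨j, h⟩ else 0 with hτfdef
  have hsumσ : ∀ g : ι → ℝ, ∑ i ∈ S, σf i * g i = ∑ i : { i // i ∈ S }, σ' i * g i.1 := by
    intro g
    rw [← Finset.sum_attach S (fun i => σf i * g i), Finset.univ_eq_attach]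
    refine Finset.sum_congr rfl fun i _ => ?_
    rw [hσfdef]
    simp only
    rw [dif_pos i.2]
  have hsumτ : ∀ g : ι → ℝ, ∑ j ∈ T, τf j * g j = ∑ j : { j // j ∈ T }, τ' j * g j.1 := by
    intro g
    rw [← Finset.sum_attach T (fun j => τf j * g j), Finset.univ_eq_attach]
    refine Finset.sum_congr rfl fun j _ => ?_
    rw [hτfdef]
    simp only
    rw [dif_pos j.2]
  set A : F → ℝ := fun f => (∑ i ∈ S, σf i * γi i f) - ∑ k, c k * lam k f with hAdef
  set B : F → ℝ := fun f => -(∑ j ∈ T, τf j * γi j f) + ∑ k, c k * lam k f with hBdef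
  have hAB : ∀ f' ∈ K, ∀ f'' ∈ K, A f' + B f'' ≤ V 0 := by
    intro f' hf' f'' hf''
    have h := hmaster f' hf' f'' hf''
    have e1 : A f' = (∑ i, σ' i * γi i.1 f') - ∑ k, c k * lam k f' := by
      rw [hAdef]
      simp only
      rw [hsumσ (fun i => γi i f')]
    have e2 : B f'' = -(∑ j, τ' j * γi j.1 f'') + ∑ k, c k * lam k f'' := by
      rw [hBdef]
      simp only
      rw [hsumτ (fun j => γi j f'')]
    rw [e1, e2]
    linarith
  have hB0 : B 0 = 0 := by
    rw [hBdef]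
    simp
  have hA0 : A 0 = 0 := by
    rw [hAdef]
    simp
  have bddA : BddAbove (A '' K) := by
    refine ⟨V 0, ?_⟩
    rintro r ⟨f, hf, rfl⟩
    have := hAB f hf 0 h0K
    rw [hB0] at this
    linarith
  have bddB : BddAbove (B '' K) := by
    refine ⟨V 0, ?_⟩
    rintro r ⟨f, hf, rfl⟩
    have := hAB 0 h0K f hf
    rw [hA0] at this
    linarith
  have neA : (A '' K).Nonempty := ⟨A 0, 0, h0K, rfl⟩
  have neB : (B '' K).Nonempty := ⟨B 0, 0, h0K, rfl⟩
  have hee : sSup (A '' K) + sSup (B '' K) ≤ 2 * eflat := by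
    have h1 : ∀ f'' ∈ K, sSup (A '' K) + B f'' ≤ V 0 := by
      intro f'' hf''
      have : sSup (A '' K) ≤ V 0 - B f'' := by
        apply csSup_le neA
        rintro r ⟨f', hf', rfl⟩
        have := hAB f' hf' f'' hf''
        linarith
      linarith
    have h2 : sSup (B '' K) ≤ V 0 - sSup (A '' K) := by
      apply csSup_le neB
      rintro r ⟨f'', hf'', rfl⟩
      have := h1 f'' hf''
      linarith
    linarith
  refine ⟨σf, τf, c, sSup (A '' K), sSup (B '' K), ?_, ?_, ?_, ?_, ?_, ?_, hee, ?_, ?_⟩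
  · intro i
    rw [hσfdef]
    simp only
    by_cases h : i ∈ S
    · rw [dif_pos h]; exact hσ'nn _
    · rw [dif_neg h]
  · intro i hi
    rw [hσfdef]
    simp only
    rw [dif_neg hi]
  · have := hsumσ (fun _ => 1)
    simp only [mul_one] at this
    rw [this, hσ'sum]
  · intro j
    rw [hτfdef]
    simp only
    by_cases h : j ∈ T
    · rw [dif_pos h]; exact hτ'nn _
    · rw [dif_neg h]
  · intro j hj
    rw [hτfdef]
    simp only
    rw [dif_neg hj]
  · have := hsumτ (fun _ => 1)
    simp only [mul_one] at this
    rw [this, hτ'sum]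
  · intro f hf
    exact le_csSup bddA ⟨f, hf, rfl⟩
  · intro f hf
    exact le_csSup bddB ⟨f, hf, rfl⟩

end Main
/-- **Construction of an optimal sup-inf-affine estimation functional
(Proposition ThmConstruction2).** For `γ` with finite max-min and min-max
representations by linear functionals, the optimal value of the displayed convex
program (encoded by `Feas`) equals the intrinsic lower bound `eflat`, and any optimal
solution yields, via `δ(y) = max_a min_b ((ê − ê″_{a,b}) + ∑_k ĉ^{(a,b)}_k y_k)`, an
estimation functional with worst-case error at most `eflat` over `K`. -/
theorem stmt_6 {F : Type*} [AddCommGroup F] [Module ℝ F] {m : ℕ}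
    (lam : Fin m → F →ₗ[ℝ] ℝ)
    (K : Set F) (hK : Convex ℝ K) (h0K : (0 : F) ∈ K)
    {ι A B : Type*} [Fintype A] [Nonempty A] [Fintype B] [Nonempty B]
    (γi : ι → F →ₗ[ℝ] ℝ)
    (IA : A → Finset ι) (hIA : ∀ a, (IA a).Nonempty)
    (JB : B → Finset ι) (hJB : ∀ b, (JB b).Nonempty)
    (γ : F → ℝ)
    (hγ1 : ∀ f, γ f =
      Finset.univ.sup' Finset.univ_nonempty fun a => (IA a).inf' (hIA a) fun i => γi i f)
    (hγ2 : ∀ f, γ f =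
      Finset.univ.inf' Finset.univ_nonempty fun b => (JB b).sup' (hJB b) fun j => γi j f)
    (eflat : ℝ)
    (heflat : IsLUB {x : ℝ | ∃ f' ∈ K, ∃ f'' ∈ K,
        (∀ k, lam k f' = lam k f'') ∧ x = (γ f' - γ f'') / 2} eflat)
    (Feas : ℝ → (A → B → ℝ) → (A → B → ℝ) → (A → B → Fin m → ℝ) →
      (A → B → ι → ℝ) → (A → B → ι → ℝ) → Prop)
    (hFeas : ∀ e e' e'' c σ τ, Feas e e' e'' c σ τ ↔
      ((∀ a b, (∀ i, 0 ≤ σ a b i) ∧ (∀ i ∉ IA a, σ a b i = 0) ∧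
          ∑ i ∈ IA a, σ a b i = 1) ∧
       (∀ a b, (∀ j, 0 ≤ τ a b j) ∧ (∀ j ∉ JB b, τ a b j = 0) ∧
          ∑ j ∈ JB b, τ a b j = 1) ∧
       (∀ a b, e' a b + e'' a b ≤ 2 * e) ∧
       (∀ a b, (⨆ f ∈ K,
            (((∑ i ∈ IA a, σ a b i * γi i f) - ∑ k, c a b k * lam k f : ℝ) : EReal)) ≤
          ((e' a b : ℝ) : EReal)) ∧
       (∀ a b, (⨆ f ∈ K,
            ((-(∑ j ∈ JB b, τ a b j * γi j f) + ∑ k, c a b k * lam k f : ℝ) : EReal)) ≤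
          ((e'' a b : ℝ) : EReal)))) :
    IsGLB {e : ℝ | ∃ e' e'' c σ τ, Feas e e' e'' c σ τ} eflat ∧
    (∀ e' e'' c σ τ, Feas eflat e' e'' c σ τ →
      ∀ f ∈ K,
        |γ f - ⨆ a, ⨅ b, ((eflat - e'' a b) + ∑ k, c a b k * lam k f)| ≤ eflat) := by
  classical
  have hub := heflat.1
  have hscale : ∀ f' ∈ K, ∀ f'' ∈ K, (∀ k, lam k f' = lam k f'') →
      γ f' - γ f'' ≤ 2 * eflat := by
    intro f' hf' f'' hf'' hk
    have := hub ⟨f', hf', f'', hf'', hk, rfl⟩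
    linarith
  have hSγ : ∀ (a : A) (f : F), (IA a).inf' (hIA a) (fun i => γi i f) ≤ γ f := by
    intro a f
    rw [hγ1 f]
    exact Finset.le_sup' (fun a => (IA a).inf' (hIA a) fun i => γi i f) (Finset.mem_univ a)
  have hTγ : ∀ (b : B) (f : F), γ f ≤ (JB b).sup' (hJB b) (fun j => γi j f) := by
    intro b f
    rw [hγ2 f]
    exact Finset.inf'_le (fun b => (JB b).sup' (hJB b) fun j => γi j f) (Finset.mem_univ b)
  have hcons := fun (a : A) (b : B) =>
    construct_feasible lam K hK h0K γi γ (IA a) (hIA a) (JB b) (hJB b) (hSγ a) (hTγ b)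
      eflat hscale
  choose σs τs cs e's e''s hp1 hp2 hp3 hp4 hp5 hp6 hp7 hp8 hp9 using hcons
  have hfeas : Feas eflat e's e''s cs σs τs := by
    rw [hFeas]
    refine ⟨fun a b => ⟨hp1 a b, hp2 a b, hp3 a b⟩, fun a b => ⟨hp4 a b, hp5 a b, hp6 a b⟩,
        fun a b => by have := hp7 a b; linarith, ?_, ?_⟩
    · intro a b
      refine iSup₂_le fun f hf => ?_
      exact EReal.coe_le_coe_iff.mpr (hp8 a b f hf)
    · intro a b
      refine iSup₂_le fun f hf => ?_
      exact EReal.coe_le_coe_iff.mpr (hp9 a b f hf)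
  -- pointwise extraction from the EReal constraints
  have hpt : ∀ (e'' : ℝ) (g : F → ℝ),
      (⨆ f ∈ K, ((g f : ℝ) : EReal)) ≤ ((e'' : ℝ) : EReal) → ∀ f ∈ K, g f ≤ e'' := by
    intro e'' g h f hf
    have h1 : ((g f : ℝ) : EReal) ≤ ⨆ f ∈ K, ((g f : ℝ) : EReal) :=
      le_iSup₂ (f := fun f (_ : f ∈ K) => ((g f : ℝ) : EReal)) f hf
    exact EReal.coe_le_coe_iff.mp (h1.trans h)
  constructor
  · constructor
    · rintro e ⟨e', e'', c, σ, τ, hf⟩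
      rw [hFeas] at hf
      obtain ⟨hσ, hτ, hsum, hc1, hc2⟩ := hf
      apply heflat.2
      rintro x ⟨f', hf', f'', hf'', hk, rfl⟩
      obtain ⟨a1, _, ha⟩ := Finset.exists_mem_eq_sup' (Finset.univ_nonempty (α := A))
        (fun a => (IA a).inf' (hIA a) fun i => γi i f')
      obtain ⟨b1, _, hb⟩ := Finset.exists_mem_eq_inf' (Finset.univ_nonempty (α := B))
        (fun b => (JB b).sup' (hJB b) fun j => γi j f'')
      have hga : γ f' = (IA a1).inf' (hIA a1) fun i => γi i f' := by rw [hγ1 f']; exact ha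
      have hgb : γ f'' = (JB b1).sup' (hJB b1) fun j => γi j f'' := by rw [hγ2 f'']; exact hb
      have hc1' := hpt _ _ (hc1 a1 b1) f' hf'
      have hc2' := hpt _ _ (hc2 a1 b1) f'' hf''
      have hγσ : γ f' ≤ ∑ i ∈ IA a1, σ a1 b1 i * γi i f' := by
        calc γ f' = ∑ i ∈ IA a1, σ a1 b1 i * γ f' := by
              rw [← Finset.sum_mul, (hσ a1 b1).2.2, one_mul]
          _ ≤ _ := by
              refine Finset.sum_le_sum fun i hi => ?_
              refine mul_le_mul_of_nonneg_left ?_ ((hσ a1 b1).1 i)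
              rw [hga]
              exact Finset.inf'_le (fun i => γi i f') hi
      have hγτ : ∑ j ∈ JB b1, τ a1 b1 j * γi j f'' ≤ γ f'' := by
        calc ∑ j ∈ JB b1, τ a1 b1 j * γi j f''
            ≤ ∑ j ∈ JB b1, τ a1 b1 j * γ f'' := by
              refine Finset.sum_le_sum fun j hj => ?_
              refine mul_le_mul_of_nonneg_left ?_ ((hτ a1 b1).1 j)
              rw [hgb]
              exact Finset.le_sup' (fun j => γi j f'') hj
          _ = γ f'' := by rw [← Finset.sum_mul, (hτ a1 b1).2.2, one_mul]
      have hlam : ∑ k, c a1 b1 k * lam k f' = ∑ k, c a1 b1 k * lam k f'' :=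
        Finset.sum_congr rfl fun k _ => by rw [hk k]
      have := hsum a1 b1
      linarith
    · intro x hx
      exact hx ⟨_, _, _, _, _, hfeas⟩
  · intro e' e'' c σ τ hf f hfK
    rw [hFeas] at hf
    obtain ⟨hσ, hτ, hsum, hc1, hc2⟩ := hf
    have hc1' : ∀ a b, (∑ i ∈ IA a, σ a b i * γi i f) - ∑ k, c a b k * lam k f ≤ e' a b :=
      fun a b => hpt _ _ (hc1 a b) f hfK
    have hc2' : ∀ a b, -(∑ j ∈ JB b, τ a b j * γi j f) + ∑ k, c a b k * lam k f ≤ e'' a b :=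
      fun a b => hpt _ _ (hc2 a b) f hfK
    rw [abs_le]
    constructor
    · -- δ ≤ γ f + eflat
      obtain ⟨b1, _, hb⟩ := Finset.exists_mem_eq_inf' (Finset.univ_nonempty (α := B))
        (fun b => (JB b).sup' (hJB b) fun j => γi j f)
      have hgb : γ f = (JB b1).sup' (hJB b1) fun j => γi j f := by rw [hγ2 f]; exact hb
      have hstep : ∀ a, (⨅ b, ((eflat - e'' a b) + ∑ k, c a b k * lam k f)) ≤ γ f + eflat := by
        intro a
        have hτγ : ∑ j ∈ JB b1, τ a b1 j * γi j f ≤ γ f := by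
          calc ∑ j ∈ JB b1, τ a b1 j * γi j f
              ≤ ∑ j ∈ JB b1, τ a b1 j * γ f := by
                refine Finset.sum_le_sum fun j hj => ?_
                refine mul_le_mul_of_nonneg_left ?_ ((hτ a b1).1 j)
                rw [hgb]
                exact Finset.le_sup' (fun j => γi j f) hj
            _ = γ f := by rw [← Finset.sum_mul, (hτ a b1).2.2, one_mul]
        have h1 := hc2' a b1
        refine ciInf_le_of_le (Set.Finite.bddBelow (Set.finite_range _)) b1 ?_
        linarith
      have hfinal : (⨆ a, ⨅ b, ((eflat - e'' a b) + ∑ k, c a b k * lam k f)) ≤ γ f + eflat :=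
        ciSup_le hstep
      linarith [hfinal]
    · -- γ f - eflat ≤ δ
      obtain ⟨a1, _, ha⟩ := Finset.exists_mem_eq_sup' (Finset.univ_nonempty (α := A))
        (fun a => (IA a).inf' (hIA a) fun i => γi i f)
      have hga : γ f = (IA a1).inf' (hIA a1) fun i => γi i f := by rw [hγ1 f]; exact ha
      have hstep : ∀ b, γ f - eflat ≤ (eflat - e'' a1 b) + ∑ k, c a1 b k * lam k f := by
        intro b
        have hσγ : γ f ≤ ∑ i ∈ IA a1, σ a1 b i * γi i f := by
          calc γ f = ∑ i ∈ IA a1, σ a1 b i * γ f := by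
                rw [← Finset.sum_mul, (hσ a1 b).2.2, one_mul]
            _ ≤ _ := by
                refine Finset.sum_le_sum fun i hi => ?_
                refine mul_le_mul_of_nonneg_left ?_ ((hσ a1 b).1 i)
                rw [hga]
                exact Finset.inf'_le (fun i => γi i f) hi
        have h1 := hc1' a1 b
        have h2 := hsum a1 b
        linarith
      have hginf : γ f - eflat ≤ ⨅ b, ((eflat - e'' a1 b) + ∑ k, c a1 b k * lam k f) :=
        le_ciInf hstep
      have h5 : (⨅ b, ((eflat - e'' a1 b) + ∑ k, c a1 b k * lam k f))
          ≤ ⨆ a, ⨅ b, ((eflat - e'' a b) + ∑ k, c a b k * lam k f) :=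
        le_ciSup (f := fun a => ⨅ b, ((eflat - e'' a b) + ∑ k, c a b k * lam k f))
          (Set.Finite.bddAbove (Set.finite_range _)) a1
      have hfinal := hginf.trans h5
      linarith [hfinal]
end

section
/- Let H be a real Hilbert space, let V be a finite-dimensional linear subspace of H with orthogonal projector P_{V⊥} onto its orthogonal complement, let ε > 0, and let g ∈ H with dist(g, V) < ε. Set K := { f ∈ H : ‖P_{V⊥}(f − g)‖ ≤ ε }. Then for every continuous linear functional η on H: if η vanishes on V, then sup_{f∈K} η(f) = η(g) + ε‖η‖ (operator norm of η); and if η does not vanish identically on V, then sup_{f∈K} η(f) = +∞. -/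
/-- **Support function of an approximability model set in a Hilbert space.** For
`K = {f : ‖P_{V⊥}(f − g)‖ ≤ ε}` with `V` finite-dimensional, `ε > 0` and
`dist(g, V) < ε`: if the continuous linear functional `η` vanishes on `V` then the
support function of `K` at `η` equals `η g + ε ‖η‖`; otherwise it equals `+∞`. -/
theorem stmt_12 {H : Type*} [NormedAddCommGroup H] [InnerProductSpace ℝ H]
    [CompleteSpace H]
    (V : Submodule ℝ H) [FiniteDimensional ℝ V]
    (ε : ℝ) (hε : 0 < ε) (g : H)
    (hg : ‖(Submodule.orthogonalProjectionOnto Vᗮ g : H)‖ < ε)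
    (K : Set H) (hKdef : K = {f : H | ‖(Submodule.orthogonalProjectionOnto Vᗮ (f - g) : H)‖ ≤ ε})
    (η : H →L[ℝ] ℝ) :
    ((∀ v ∈ V, η v = 0) →
      (⨆ f ∈ K, ((η f : ℝ) : EReal)) = ((η g + ε * ‖η‖ : ℝ) : EReal)) ∧
    ((∃ v ∈ V, η v ≠ 0) → (⨆ f ∈ K, ((η f : ℝ) : EReal)) = ⊤) := by
  have hVV : Vᗮᗮ = V := Submodule.orthogonal_orthogonal V
  constructor
  · intro hvan
    -- η x = η (P x) for all x
    have key : ∀ x : H, η x = η (Submodule.orthogonalProjectionOnto Vᗮ x : H) := by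
      intro x
      have hmem : x - (Submodule.orthogonalProjectionOnto Vᗮ x : H) ∈ V := by
        have h := Submodule.sub_starProjection_mem_orthogonal (K := Vᗮ) x
        rw [hVV] at h; exact h
      have := hvan _ hmem
      rw [map_sub] at this
      linarith
    apply le_antisymm
    · apply iSup₂_le
      intro f hf
      rw [hKdef] at hf
      have h1 : η f = η g + η (Submodule.orthogonalProjectionOnto Vᗮ (f - g) : H) := by
        have := key (f - g)
        rw [map_sub] at this
        linarith
      have h2 : η (Submodule.orthogonalProjectionOnto Vᗮ (f - g) : H) ≤ ‖η‖ * ε := by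
        calc η (Submodule.orthogonalProjectionOnto Vᗮ (f - g) : H)
            ≤ ‖η (Submodule.orthogonalProjectionOnto Vᗮ (f - g) : H)‖ := le_abs_self _
          _ ≤ ‖η‖ * ‖(Submodule.orthogonalProjectionOnto Vᗮ (f - g) : H)‖ := η.le_opNorm _
          _ ≤ ‖η‖ * ε := by
              exact mul_le_mul_of_nonneg_left hf (norm_nonneg _)
      rw [EReal.coe_le_coe_iff]
      linarith
    · -- lower bound
      refine le_of_forall_lt fun c hc => ?_
      obtain ⟨b, hcb, hb⟩ := EReal.exists_between_coe_real hc
      rw [EReal.coe_lt_coe_iff] at hb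
      -- find f ∈ K with b < η f
      have hcd : (b - η g) / ε < ‖η‖ := by
        rw [div_lt_iff₀ hε]; linarith [mul_comm ε ‖η‖]
      obtain ⟨x, hx1, hx2⟩ := η.exists_lt_apply_of_lt_opNorm hcd
      have hx2' : (b - η g) / ε < η x ∨ (b - η g) / ε < η (-x) := by
        rcases abs_cases (η x) with ⟨h, _⟩ | ⟨h, _⟩
        · left; rw [← h]; exact hx2
        · right; rw [map_neg]; rw [Real.norm_eq_abs, h] at hx2; linarith
      obtain ⟨u, hu1, hu2⟩ : ∃ u : H, ‖u‖ < 1 ∧ (b - η g) / ε < η u := by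
        rcases hx2' with h | h
        · exact ⟨x, hx1, h⟩
        · exact ⟨-x, by simpa using hx1, h⟩
      set w : H := (Submodule.orthogonalProjectionOnto Vᗮ u : H) with hw
      have hwmem : w ∈ Vᗮ := (Submodule.orthogonalProjectionOnto Vᗮ u).2
      have hηw : η w = η u := (key u).symm
      have hwn : ‖w‖ ≤ ‖u‖ := by
        have h1 := (Submodule.orthogonalProjectionOnto Vᗮ).le_opNorm u
        have h2 := Submodule.orthogonalProjectionOnto_norm_le Vᗮ
        have h3 : ‖w‖ = ‖Submodule.orthogonalProjectionOnto Vᗮ u‖ := rfl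
        rw [h3]
        nlinarith [norm_nonneg u]
      have hf : g + ε • w ∈ K := by
        rw [hKdef]
        have : (g + ε • w) - g = ε • w := by abel
        rw [Set.mem_setOf_eq, this]
        have hproj : (Submodule.orthogonalProjectionOnto Vᗮ (ε • w) : H) = ε • w :=
          Submodule.starProjection_eq_self_iff.mpr (Submodule.smul_mem _ _ hwmem)
        rw [hproj, norm_smul, Real.norm_eq_abs, abs_of_pos hε]
        nlinarith [norm_nonneg w, hwn, hx1]
      have hval : b < η (g + ε • w) := by
        rw [map_add, map_smul]
        simp only [smul_eq_mul]
        rw [hηw]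
        have := (div_lt_iff₀ hε).mp hu2
        linarith [mul_comm ((b - η g)/ε) ε]
      calc c < (b : EReal) := hcb
        _ < ((η (g + ε • w) : ℝ) : EReal) := by exact_mod_cast hval
        _ ≤ _ := le_iSup₂ (f := fun f (_ : f ∈ K) => ((η f : ℝ) : EReal)) _ hf
  · rintro ⟨v, hv, hηv⟩
    rw [EReal.eq_top_iff_forall_lt]
    intro a
    set t : ℝ := (a + 1 - η g) / (η v) with ht
    have hf : g + t • v ∈ K := by
      rw [hKdef, Set.mem_setOf_eq]
      have : (g + t • v) - g = t • v := by abel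
      rw [this, map_smul]
      have : Submodule.orthogonalProjectionOnto Vᗮ v = 0 :=
        Submodule.orthogonalProjectionOnto_apply_of_mem_orthogonal (hVV.symm ▸ hv)
      rw [this]
      simpa using le_of_lt hε
    have hval : a < η (g + t • v) := by
      rw [map_add, map_smul, smul_eq_mul, ht, div_mul_cancel₀ _ hηv]
      linarith
    calc ((a : ℝ) : EReal) < ((η (g + t • v) : ℝ) : EReal) := by exact_mod_cast hval
      _ ≤ _ := le_iSup₂ (f := fun f (_ : f ∈ K) => ((η f : ℝ) : EReal)) _ hf
end

section
/- Let F be a real vector space, let λ₁,…,λ_m be linear functionals on F with observation map Λ(f) = (λ₁(f),…,λ_m(f)), and let K ⊆ F be a convex set containing 0. Let I be a nonempty index set and let γ_i (i ∈ I) be linear functionals on F such that γ(f) := sup_{i∈I} γ_i(f) is finite for every f ∈ F. Assume e_♭ := sup{ (γ(f′) − γ(f″))/2 : f′, f″ ∈ K, Λ(f′) = Λ(f″) } is finite. Then for every i⋆ ∈ I there exists a vector c ∈ ℝ^m such that for all f′, f″ ∈ K: ( γ_{i⋆}(f′) − Σ_{k=1}^m c_k λ_k(f′) ) − ( γ(f″)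 − Σ_{k=1}^m c_k λ_k(f″) ) ≤ 2 e_♭. -/
open Pointwise

section Aux

variable {F : Type*} [AddCommGroup F] [Module ℝ F] {m : ℕ}

/-- Observation difference map. -/
def sPhi (lam : Fin m → F →ₗ[ℝ] ℝ) (u v : F) : Fin m → ℝ := fun k => lam k u - lam k v

lemma sPhi_swap (lam : Fin m → F →ₗ[ℝ] ℝ) (u v : F) :
    sPhi lam v u = - sPhi lam u v := by
  funext k; simp [sPhi]

lemma sPhi_mix (lam : Fin m → F →ₗ[ℝ] ℝ) {a b : ℝ} (hs : 0 < a + b) (u1 v1 u2 v2 : F) :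
    a • sPhi lam u1 v1 + b • sPhi lam u2 v2
      = (a + b) • sPhi lam ((a/(a+b)) • u1 + (b/(a+b)) • u2)
          ((a/(a+b)) • v1 + (b/(a+b)) • v2) := by
  funext k
  have hs' : a + b ≠ 0 := ne_of_gt hs
  simp only [Pi.add_apply, Pi.smul_apply, sPhi, smul_eq_mul, map_add, map_smul]
  field_simp
  ring

variable {I : Type*} (γi : I → F →ₗ[ℝ] ℝ) (γ : F → ℝ)

/-- Concavity of the score `(u, v) ↦ γi istar u - γ v` under convex combinations. -/
lemma score_conc (hγ : ∀ f, IsLUB (Set.range fun i => γi i f) (γ f)) (istar : I)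
    {α β : ℝ} (hα : 0 ≤ α) (hβ : 0 ≤ β) (u1 v1 u2 v2 : F) :
    α * (γi istar u1 - γ v1) + β * (γi istar u2 - γ v2)
      ≤ γi istar (α • u1 + β • u2) - γ (α • v1 + β • v2) := by
  have hup : ∀ (j : I) (f : F), γi j f ≤ γ f := fun j f => (hγ f).1 ⟨j, rfl⟩
  have h1 : γ (α • v1 + β • v2) ≤ α * γ v1 + β * γ v2 := by
    apply (hγ (α • v1 + β • v2)).2
    rintro x ⟨j, rfl⟩
    simp only [map_add, map_smul, smul_eq_mul]
    exact add_le_add (mul_le_mul_of_nonneg_left (hup j v1) hα)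
      (mul_le_mul_of_nonneg_left (hup j v2) hβ)
  have h2 : γi istar (α • u1 + β • u2) = α * γi istar u1 + β * γi istar u2 := by
    simp [map_add, map_smul]
  linarith

/-- Key two-point inequality (L2). -/
lemma key_ineq (lam : Fin m → F →ₗ[ℝ] ℝ) {K : Set F} (hK : Convex ℝ K)
    (hγ : ∀ f, IsLUB (Set.range fun i => γi i f) (γ f)) (istar : I) (eflat : ℝ)
    (hub : ∀ u ∈ K, ∀ v ∈ K, (∀ k, lam k u = lam k v) → γ u - γ v ≤ 2 * eflat)
    {a b : ℝ} (ha : 0 ≤ a) (hb : 0 ≤ b)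
    {u1 v1 u2 v2 : F} (hu1 : u1 ∈ K) (hv1 : v1 ∈ K) (hu2 : u2 ∈ K) (hv2 : v2 ∈ K)
    (hsum : a • sPhi lam u1 v1 + b • sPhi lam u2 v2 = 0) :
    a * (γi istar u1 - γ v1) + b * (γi istar u2 - γ v2) ≤ 2 * eflat * (a + b) := by
  rcases eq_or_lt_of_le (by positivity : (0:ℝ) ≤ a + b) with hs | hs
  · have ha0 : a = 0 := by linarith
    have hb0 : b = 0 := by linarith
    simp [ha0, hb0]
  · have hs' : (a + b) ≠ 0 := ne_of_gt hs
    set α := a / (a + b) with hαdef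
    set β := b / (a + b) with hβdef
    have hα : 0 ≤ α := div_nonneg ha hs.le
    have hβ : 0 ≤ β := div_nonneg hb hs.le
    have hαβ : α + β = 1 := by rw [hαdef, hβdef, ← add_div, div_self hs']
    have hmemu : α • u1 + β • u2 ∈ K := hK hu1 hu2 hα hβ hαβ
    have hmemv : α • v1 + β • v2 ∈ K := hK hv1 hv2 hα hβ hαβ
    have hlameq : ∀ k, lam k (α • u1 + β • u2) = lam k (α • v1 + β • v2) := by
      intro k
      have h0 := congrFun (hsum.symm.trans (sPhi_mix lam hs u1 v1 u2 v2)).symm k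
      -- h0 : ((a+b) • sPhi lam (mix u) (mix v)) k = 0
      have h0' : (a + b) * (lam k (α • u1 + β • u2) - lam k (α • v1 + β • v2)) = 0 := by
        simpa [sPhi, smul_eq_mul, hαdef, hβdef] using h0
      have := mul_eq_zero.1 h0'
      rcases this with h | h
      · exact absurd h hs'
      · linarith
    have hγub : γ (α • u1 + β • u2) - γ (α • v1 + β • v2) ≤ 2 * eflat :=
      hub _ hmemu _ hmemv hlameq
    have hconc := score_conc γi γ hγ istar hα hβ u1 v1 u2 v2
    have hup : γi istar (α • u1 + β • u2) ≤ γ (α • u1 + β • u2) :=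
      (hγ _).1 ⟨istar, rfl⟩
    have hcore : α * (γi istar u1 - γ v1) + β * (γi istar u2 - γ v2) ≤ 2 * eflat := by
      linarith
    have h' := mul_le_mul_of_nonneg_left hcore hs.le
    have hexp : (a + b) * (α * (γi istar u1 - γ v1) + β * (γi istar u2 - γ v2))
        = a * (γi istar u1 - γ v1) + b * (γi istar u2 - γ v2) := by
      have e1 : (a + b) * (a / (a + b)) = a := by rw [mul_comm]; exact div_mul_cancel₀ a hs'
      have e2 : (a + b) * (b / (a + b)) = b := by rw [mul_comm]; exact div_mul_cancel₀ b hs'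
      rw [hαdef, hβdef]
      linear_combination (γi istar u1 - γ v1) * e1 + (γi istar u2 - γ v2) * e2
    linarith [hexp ▸ h']

end Aux

/-- **Hahn–Banach step in the construction of an optimal sup-affine estimation
functional.** Under the hypotheses of the main theorem (sup-linear `γ`, convex `K`
containing `0`, finite intrinsic lower bound `eflat`), for every index `istar` there
is a correction `c ∈ ℝ^m` by the observation functionals making the two-point
inequality hold on `K × K` with slack `2 eflat`. -/
theorem stmt_14 {F : Type*} [AddCommGroup F] [Module ℝ F] {m : ℕ}
    (lam : Fin m → F →ₗ[ℝ] ℝ)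
    (K : Set F) (hK : Convex ℝ K) (h0K : (0 : F) ∈ K)
    {I : Type*} [Nonempty I] (γi : I → F →ₗ[ℝ] ℝ)
    (γ : F → ℝ) (hγ : ∀ f, IsLUB (Set.range fun i => γi i f) (γ f))
    (eflat : ℝ)
    (heflat : IsLUB {x : ℝ | ∃ f' ∈ K, ∃ f'' ∈ K,
        (∀ k, lam k f' = lam k f'') ∧ x = (γ f' - γ f'') / 2} eflat) :
    ∀ istar : I, ∃ c : Fin m → ℝ, ∀ f' ∈ K, ∀ f'' ∈ K,
      (γi istar f' - ∑ k, c k * lam k f') - (γ f'' - ∑ k, c k * lam k f'') ≤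
        2 * eflat := by
  intro istar
  classical
  have hub : ∀ u ∈ K, ∀ v ∈ K, (∀ k, lam k u = lam k v) → γ u - γ v ≤ 2 * eflat := by
    intro u hu v hv hk
    have : (γ u - γ v) / 2 ≤ eflat := heflat.1 ⟨u, hu, v, hv, hk, rfl⟩
    linarith
  -- The cone generated by observation differences of pairs from K.
  set Cset : Set (Fin m → ℝ) :=
    {z | ∃ a : ℝ, 0 ≤ a ∧ ∃ u ∈ K, ∃ v ∈ K, z = a • sPhi lam u v} with hCdef
  have hC0 : (0 : Fin m → ℝ) ∈ Cset := ⟨0, le_rfl, 0, h0K, 0, h0K, by simp⟩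
  have hCadd : ∀ {z1 z2 : Fin m → ℝ}, z1 ∈ Cset → z2 ∈ Cset → z1 + z2 ∈ Cset := by
    rintro z1 z2 ⟨a, ha, u1, hu1, v1, hv1, rfl⟩ ⟨b, hb, u2, hu2, v2, hv2, rfl⟩
    rcases eq_or_lt_of_le (by positivity : (0:ℝ) ≤ a + b) with hs | hs
    · have ha0 : a = 0 := by linarith
      have hb0 : b = 0 := by linarith
      simpa [ha0, hb0] using hC0
    · have hα : 0 ≤ a / (a + b) := div_nonneg ha hs.le
      have hβ : 0 ≤ b / (a + b) := div_nonneg hb hs.le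
      have hαβ : a / (a + b) + b / (a + b) = 1 := by field_simp
      exact ⟨a + b, hs.le, _, hK hu1 hu2 hα hβ hαβ, _, hK hv1 hv2 hα hβ hαβ,
        sPhi_mix lam hs u1 v1 u2 v2⟩
  have hCsmul : ∀ (r : ℝ) {z : Fin m → ℝ}, z ∈ Cset → r • z ∈ Cset := by
    rintro r z ⟨a, ha, u, hu, v, hv, rfl⟩
    rcases le_or_gt 0 r with hr | hr
    · exact ⟨r * a, mul_nonneg hr ha, u, hu, v, hv, by rw [smul_smul]⟩
    · refine ⟨(-r) * a, mul_nonneg (by linarith) ha, v, hv, u, hu, ?_⟩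
      rw [sPhi_swap lam, smul_smul]
      module
  let Csub : Submodule ℝ (Fin m → ℝ) :=
    { carrier := Cset
      add_mem' := hCadd
      zero_mem' := hC0
      smul_mem' := fun r {z} hz => hCsmul r hz }
  -- representation sets and the sublinear functional p
  set Rep : (Fin m → ℝ) → Set ℝ := fun z =>
    {l | ∃ a : ℝ, 0 ≤ a ∧ ∃ u ∈ K, ∃ v ∈ K,
        z = a • sPhi lam u v ∧ l = a * (2 * eflat - (γi istar v - γ u))} with hRepdef
  have hNe : ∀ z ∈ Cset, (Rep z).Nonempty := by
    rintro z ⟨a, ha, u, hu, v, hv, rfl⟩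
    exact ⟨a * (2 * eflat - (γi istar v - γ u)), a, ha, u, hu, v, hv, rfl, rfl⟩
  have hBdd : ∀ z ∈ Cset, BddBelow (Rep z) := by
    rintro z ⟨b, hb, g, hg, h, hh, rfl⟩
    refine ⟨b * (γi istar g - γ h) - 2 * eflat * b, ?_⟩
    rintro l ⟨a, ha, u, hu, v, hv, hz, rfl⟩
    have hzero : a • sPhi lam v u + b • sPhi lam g h = 0 := by
      rw [sPhi_swap lam, smul_neg, ← hz]
      abel
    have := key_ineq γi γ lam hK hγ istar eflat hub ha hb hv hu hg hh hzero
    nlinarith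
  have hp0lb : ∀ l ∈ Rep 0, (0:ℝ) ≤ l := by
    rintro l ⟨a, ha, u, hu, v, hv, hz, rfl⟩
    have hzero : a • sPhi lam v u + (0:ℝ) • sPhi lam (0:F) (0:F) = 0 := by
      rw [sPhi_swap lam, smul_neg, ← hz]
      simp
    have := key_ineq γi γ lam hK hγ istar eflat hub ha le_rfl hv hu h0K h0K hzero
    nlinarith [this]
  -- the sublinear functional on the submodule
  set N : Csub → ℝ := fun z => sInf (Rep (z : Fin m → ℝ)) with hNdef
  have hN_hom : ∀ c : ℝ, 0 < c → ∀ x : Csub, N (c • x) = c * N x := by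
    intro c hc x
    have hset : Rep ((c • x : Csub) : Fin m → ℝ) = c • Rep (x : Fin m → ℝ) := by
      ext l
      constructor
      · rintro ⟨a, ha, u, hu, v, hv, hz, rfl⟩
        refine ⟨(a / c) * (2 * eflat - (γi istar v - γ u)),
          ⟨a / c, div_nonneg ha hc.le, u, hu, v, hv, ?_, rfl⟩, ?_⟩
        · have : (x : Fin m → ℝ) = c⁻¹ • (a • sPhi lam u v) := by
            rw [← hz]
            simp [Submodule.coe_smul]
            rw [smul_smul, inv_mul_cancel₀ (ne_of_gt hc), one_smul]
          rw [this, smul_smul]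
          congr 1
          field_simp
        · simp only [smul_eq_mul]
          field_simp
      · rintro ⟨l', ⟨a, ha, u, hu, v, hv, hz, rfl⟩, rfl⟩
        refine ⟨c * a, mul_nonneg hc.le ha, u, hu, v, hv, ?_, by simp [smul_eq_mul]; ring⟩
        simp only [Submodule.coe_smul]
        rw [hz, smul_smul]
    rw [hNdef]
    simp only
    rw [hset, Real.sInf_smul_of_nonneg hc.le, smul_eq_mul]
  have hN_add : ∀ x y : Csub, N (x + y) ≤ N x + N y := by
    intro x y
    have hxy : ((x + y : Csub) : Fin m → ℝ) = (x : Fin m → ℝ) + (y : Fin m → ℝ) := rfl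
    have H : ∀ l1 ∈ Rep (x : Fin m → ℝ), ∀ l2 ∈ Rep (y : Fin m → ℝ),
        N (x + y) ≤ l1 + l2 := by
      rintro l1 ⟨a, ha, u1, hu1, v1, hv1, hz1, rfl⟩ l2 ⟨b, hb, u2, hu2, v2, hv2, hz2, rfl⟩
      rcases eq_or_lt_of_le (by positivity : (0:ℝ) ≤ a + b) with hs | hs
      · have ha0 : a = 0 := by linarith
        have hb0 : b = 0 := by linarith
        have hz : ((x + y : Csub) : Fin m → ℝ) = 0 := by
          rw [hxy, hz1, hz2, ha0, hb0]; simp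
        have h0mem : (0:ℝ) ∈ Rep ((x + y : Csub) : Fin m → ℝ) := by
          rw [hz]
          exact ⟨0, le_rfl, 0, h0K, 0, h0K, by simp, by ring⟩
        have := csInf_le (by rw [hz]; exact hBdd 0 hC0) h0mem
        simp only [hNdef]
        rw [ha0, hb0]
        simpa using this
      · have hα : 0 ≤ a / (a + b) := div_nonneg ha hs.le
        have hβ : 0 ≤ b / (a + b) := div_nonneg hb hs.le
        have hαβ : a / (a + b) + b / (a + b) = 1 := by field_simp
        have hmix : ((x + y : Csub) : Fin m → ℝ)
            = (a + b) • sPhi lam ((a/(a+b)) • u1 + (b/(a+b)) • u2)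
                ((a/(a+b)) • v1 + (b/(a+b)) • v2) := by
          rw [hxy, hz1, hz2]; exact sPhi_mix lam hs u1 v1 u2 v2
        have hmem : (a + b) * (2 * eflat -
            (γi istar ((a/(a+b)) • v1 + (b/(a+b)) • v2)
              - γ ((a/(a+b)) • u1 + (b/(a+b)) • u2)))
            ∈ Rep ((x + y : Csub) : Fin m → ℝ) :=
          ⟨a + b, hs.le, _, hK hu1 hu2 hα hβ hαβ, _, hK hv1 hv2 hα hβ hαβ, hmix, rfl⟩
        have hle := csInf_le (by
          rw [hmix]
          exact hBdd _ ⟨a + b, hs.le, _, hK hu1 hu2 hα hβ hαβ, _, hK hv1 hv2 hα hβ hαβ, rfl⟩)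
          hmem
        have hconc := score_conc γi γ hγ istar hα hβ v1 u1 v2 u2
        have h' := mul_le_mul_of_nonneg_left hconc hs.le
        have hexp : (a + b) * ((a/(a+b)) * (γi istar v1 - γ u1)
            + (b/(a+b)) * (γi istar v2 - γ u2))
            = a * (γi istar v1 - γ u1) + b * (γi istar v2 - γ u2) := by
          field_simp
        simp only [hNdef] at hle ⊢
        nlinarith [hle, h', hexp]
    have hxne : (Rep (x : Fin m → ℝ)).Nonempty := hNe _ x.2
    have hyne : (Rep (y : Fin m → ℝ)).Nonempty := hNe _ y.2
    have H1 : ∀ l2 ∈ Rep (y : Fin m → ℝ), N (x + y) - l2 ≤ N x := by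
      intro l2 hl2
      exact le_csInf hxne fun l1 hl1 => by linarith [H l1 hl1 l2 hl2]
    have H2 : N (x + y) - N x ≤ N y :=
      le_csInf hyne fun l2 hl2 => by linarith [H1 l2 hl2]
    linarith
  -- Hahn–Banach
  have hf : ∀ x : ((⊥ : Submodule ℝ Csub) : Type _),
      (LinearPMap.mk (⊥ : Submodule ℝ Csub) 0 : Csub →ₗ.[ℝ] ℝ) x ≤ N x := by
    intro x
    have hx0 : (x : Csub) = 0 := (Submodule.mem_bot ℝ).1 x.2
    have : N (x : Csub) = sInf (Rep 0) := by rw [hx0]; rfl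
    rw [this]
    have := le_csInf (hNe 0 hC0) hp0lb
    simpa using this
  obtain ⟨g, -, hg⟩ := exists_extension_of_le_sublinear
    (LinearPMap.mk (⊥ : Submodule ℝ Csub) 0) N hN_hom hN_add hf
  obtain ⟨ct, hct⟩ := LinearMap.exists_extend g
  -- the coefficient vector
  refine ⟨fun k => ct (fun j => if k = j then 1 else 0), ?_⟩
  intro f' hf' f'' hf''
  set c : Fin m → ℝ := fun k => ct (fun j => if k = j then 1 else 0) with hcdef
  have hct_apply : ∀ x : Fin m → ℝ, ct x = ∑ k, x k * c k := by
    intro x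
    conv_lhs => rw [pi_eq_sum_univ x]
    rw [map_sum]
    exact Finset.sum_congr rfl fun k _ => by rw [map_smul, smul_eq_mul]
  -- membership of the swapped difference
  have hwmem : sPhi lam f'' f' ∈ Cset := ⟨1, zero_le_one, f'', hf'', f', hf', (one_smul _ _).symm⟩
  set zel : Csub := ⟨sPhi lam f'' f', hwmem⟩ with hzel
  have hrep : (1:ℝ) * (2 * eflat - (γi istar f' - γ f'')) ∈ Rep (sPhi lam f'' f') :=
    ⟨1, zero_le_one, f'', hf'', f', hf', (one_smul _ _).symm, rfl⟩
  have hNle : N zel ≤ 2 * eflat - (γi istar f' - γ f'') := by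
    have := csInf_le (hBdd _ hwmem) hrep
    simpa using this
  have hgz : g zel ≤ N zel := hg zel
  have hctz : ct (sPhi lam f'' f') = g zel := by
    have := LinearMap.congr_fun hct zel
    simpa using this
  have hfinal : ct (sPhi lam f'' f') ≤ 2 * eflat - (γi istar f' - γ f'') := by
    rw [hctz]; exact le_trans hgz hNle
  rw [hct_apply] at hfinal
  have hsum : ∑ k, sPhi lam f'' f' k * c k
      = (∑ k, c k * lam k f'') - ∑ k, c k * lam k f' := by
    rw [← Finset.sum_sub_distrib]
    exact Finset.sum_congr rfl fun k _ => by simp [sPhi]; ring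
  rw [hsum] at hfinal
  linarith
end
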